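/- arXiv:1605.05454 — 6 statements merged into one kernel-verified Lean document; each statement's English description precedes it below -/
import Mathlib

section
/- E[(f∘X)(f∘X')] = σ_Y² + μ². That is, for a pair X, X' that are conditionally independent given σ(Y) with the same conditional distribution given σ(Y), the expectation of the product f(X)·f(X') equals the variance of the conditional expectation E[f∘X | σ(Y)] plus the square of the mean of f∘X (the pick-freeze identity). -/
open MeasureTheory ProbabilityTheory Filter Topology ENNReal NNReal
open MeasureTheory

lemma condexp_ae_eq_condexpL2' {α : Type*} {m m0 : MeasurableSpace α} (hm : m ≤ m0)
    (μ : Measure α) [IsProbabilityMeasure μ] {f : α → ℝ} (hf : MemLp f 2 μ) :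
    μ[f|m] =ᵐ[μ] condExpL2 ℝ ℝ hm (hf.toLp f) := by
  haveI : SigmaFinite (μ.trim hm) := by
    exact (isFiniteMeasure_trim hm).toSigmaFinite
  refine (ae_eq_condExp_of_forall_setIntegral_eq hm (hf.integrable one_le_two)
    (fun s hs hμs => integrableOn_condExpL2_of_measure_ne_top hm hμs.ne _)
    (fun s hs hμs => ?_) (aestronglyMeasurable_condExpL2 hm _)).symm
  rw [integral_condExpL2_eq hm _ hs hμs.ne]
  exact setIntegral_congr_ae (hm s hs) ((hf.coeFn_toLp).mono fun x hx _ => hx)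

lemma memLp2_condexp {α : Type*} {m m0 : MeasurableSpace α} (hm : m ≤ m0)
    (μ : Measure α) [IsProbabilityMeasure μ] {f : α → ℝ} (hf : MemLp f 2 μ) :
    MemLp (μ[f|m]) 2 μ :=
  (Lp.memLp _).ae_eq (condexp_ae_eq_condexpL2' hm μ hf).symm

lemma eLpNorm_condexp_le2 {α : Type*} {m m0 : MeasurableSpace α} (hm : m ≤ m0)
    (μ : Measure α) [IsProbabilityMeasure μ] {f : α → ℝ} (hf : MemLp f 2 μ) :
    eLpNorm (μ[f|m]) 2 μ ≤ eLpNorm f 2 μ := by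
  rw [eLpNorm_congr_ae (condexp_ae_eq_condexpL2' hm μ hf),
    ← eLpNorm_congr_ae hf.coeFn_toLp]
  exact eLpNorm_condExpL2_le hm _
open MeasureTheory Filter Topology ENNReal NNReal

noncomputable def trunc' (n : ℕ) (y : ℝ) : ℝ := max (min y n) (-(n : ℝ))

lemma trunc'_abs_le (n : ℕ) (y : ℝ) : |trunc' n y| ≤ n := by
  rw [abs_le]
  constructor
  · exact le_max_right _ _
  · exact max_le (min_le_right _ _) (by simp)

lemma trunc'_abs_le_abs (n : ℕ) (y : ℝ) : |trunc' n y| ≤ |y| := by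
  unfold trunc'
  rcases le_or_gt 0 y with hy | hy
  · rw [abs_of_nonneg hy, abs_of_nonneg (le_max_of_le_left (le_min hy (Nat.cast_nonneg n)))]
    exact max_le (min_le_left _ _) (le_trans (neg_nonpos.2 (Nat.cast_nonneg n)) hy)
  · have h1 : min y (n : ℝ) = y := min_eq_left (hy.le.trans (Nat.cast_nonneg n))
    rw [h1, abs_of_neg hy]
    rcases le_or_gt (-(n:ℝ)) y with h | h
    · rw [max_eq_left h, abs_of_neg hy]
    · rw [max_eq_right h.le, abs_of_nonpos (neg_nonpos.2 (Nat.cast_nonneg n))]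
      linarith

lemma trunc'_tendsto (y : ℝ) : Tendsto (fun n : ℕ => trunc' n y) atTop (𝓝 y) := by
  have : ∀ᶠ n : ℕ in atTop, trunc' n y = y := by
    filter_upwards [eventually_ge_atTop (Nat.ceil |y|)] with n hn
    have hn' : |y| ≤ (n : ℝ) := le_trans (Nat.le_ceil _) (by exact_mod_cast hn)
    rw [abs_le] at hn'
    unfold trunc'
    rw [min_eq_left hn'.2, max_eq_left hn'.1]
  exact Tendsto.congr' (this.mono fun n hn => hn.symm) tendsto_const_nhds

lemma trunc'_measurable (n : ℕ) : Measurable (trunc' n) :=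
  (measurable_id.min measurable_const).max measurable_const

lemma tendsto_eLpNorm_trunc' {α : Type*} {m0 : MeasurableSpace α}
    (μ : Measure α) [IsProbabilityMeasure μ] {h : α → ℝ}
    (hmeas : AEStronglyMeasurable h μ) (hh : MemLp h 2 μ) :
    Tendsto (fun n : ℕ => eLpNorm ((fun ω => trunc' n (h ω)) - h) 2 μ) atTop (𝓝 0) := by
  have h2 : (2 : ℝ≥0∞) ≠ 0 := two_ne_zero
  have h2' : (2 : ℝ≥0∞) ≠ ∞ := ENNReal.ofNat_ne_top
  have htop : (2 : ℝ≥0∞).toReal = 2 := by simp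
  have hlim : Tendsto (fun n : ℕ => ∫⁻ ω, (‖trunc' n (h ω) - h ω‖₊ : ℝ≥0∞) ^ (2:ℝ) ∂μ)
      atTop (𝓝 0) := by
    have h0 : (0 : ℝ≥0∞) = ∫⁻ (_ : α), 0 ∂μ := by simp
    rw [h0]
    refine tendsto_lintegral_of_dominated_convergence'
      (fun ω => ((2 * ‖h ω‖₊ : ℝ≥0) : ℝ≥0∞) ^ (2:ℝ)) ?_ ?_ ?_ ?_
    · intro n
      exact ((((trunc'_measurable n).comp_aemeasurable hmeas.aemeasurable).sub
        hmeas.aemeasurable).enorm).pow_const _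
    · intro n
      filter_upwards with ω
      have hb : ‖trunc' n (h ω) - h ω‖₊ ≤ 2 * ‖h ω‖₊ := by
        refine (nnnorm_sub_le _ _).trans ?_
        rw [two_mul]
        gcongr
        rw [← NNReal.coe_le_coe]
        simpa [Real.norm_eq_abs] using trunc'_abs_le_abs n (h ω)
      exact ENNReal.rpow_le_rpow (ENNReal.coe_le_coe.2 hb) (by norm_num)
    · have hfin := lintegral_rpow_enorm_lt_top_of_eLpNorm_lt_top h2 h2' hh.2
      rw [htop] at hfin
      refine LT.lt.ne ?_
      calc ∫⁻ ω, ((2 * ‖h ω‖₊ : ℝ≥0) : ℝ≥0∞) ^ (2:ℝ) ∂μ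
          = ∫⁻ ω, 4 * (‖h ω‖₊ : ℝ≥0∞) ^ (2:ℝ) ∂μ := by
            congr 1; ext ω
            push_cast
            rw [ENNReal.mul_rpow_of_nonneg _ _ (by norm_num : (0:ℝ) ≤ 2)]
            rw [ENNReal.rpow_two]
            ring_nf
        _ = 4 * ∫⁻ ω, (‖h ω‖₊ : ℝ≥0∞) ^ (2:ℝ) ∂μ := lintegral_const_mul' _ _ (by norm_num)
        _ < ∞ := ENNReal.mul_lt_top (by norm_num) hfin
    · filter_upwards with ω
      have : Tendsto (fun n : ℕ => trunc' n (h ω) - h ω) atTop (𝓝 0) := by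
        simpa using (trunc'_tendsto (h ω)).sub
          (tendsto_const_nhds : Tendsto (fun _ : ℕ => h ω) atTop (𝓝 (h ω)))
      have hnorm : Tendsto (fun n : ℕ => (‖trunc' n (h ω) - h ω‖₊ : ℝ≥0∞)) atTop (𝓝 0) := by
        rw [← ENNReal.coe_zero]
        exact ENNReal.tendsto_coe.2 (by simpa [← NNReal.tendsto_coe] using this.norm)
      have := hnorm.ennrpow_const (2:ℝ)
      simpa using this
  have : Tendsto (fun n : ℕ => (∫⁻ ω, (‖trunc' n (h ω) - h ω‖₊ : ℝ≥0∞) ^ (2:ℝ) ∂μ) ^ (1/(2:ℝ)))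
      atTop (𝓝 (0 ^ (1/(2:ℝ)))) :=
    (ENNReal.continuous_rpow_const.tendsto 0).comp hlim
  rw [ENNReal.zero_rpow_of_pos (by norm_num)] at this
  refine Tendsto.congr (fun n => ?_) this
  rw [eLpNorm_eq_lintegral_rpow_enorm_toReal h2 h2', htop]
  rfl


/-- Pick-freeze identity: `E[(f∘X)(f∘X')] = Var(E[f∘X | σ(Y)]) + (E[f∘X])²` for `X, X'`
conditionally independent and identically distributed given `σ(Y)`. -/
theorem pick_freeze_identity
    {Ω E F : Type*} (𝓖 : MeasurableSpace Ω)
    [MeasurableSpace Ω] [MeasurableSpace E] [MeasurableSpace F]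
    (P : Measure Ω) [IsProbabilityMeasure P]
    (Y : Ω → E) (X X' : Ω → F) (f : F → ℝ)
    (hY : Measurable Y) (hX : Measurable X) (hX' : Measurable X') (hf : Measurable f)
    (hL2 : MemLp (fun ω => f (X ω)) 2 P) (hL2' : MemLp (fun ω => f (X' ω)) 2 P)
    (h𝓖 : 𝓖 = MeasurableSpace.comap Y inferInstance)
    -- conditional independence of `X` and `X'` given `𝓖`
    (hCondIndep : ∀ g h : F → ℝ, Measurable g → Measurable h →
      (∃ C, ∀ x, |g x| ≤ C) → (∃ C, ∀ x, |h x| ≤ C) →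
      P[(fun ω => g (X ω) * h (X' ω))|𝓖]
        =ᵐ[P] fun ω => ((P[(fun ω' => g (X ω'))|𝓖]) ω) * ((P[(fun ω' => h (X' ω'))|𝓖]) ω))
    -- `X` and `X'` have the same conditional distribution given `𝓖`
    (hSameCondDist : ∀ g : F → ℝ, Measurable g → (∃ C, ∀ x, |g x| ≤ C) →
      P[(fun ω => g (X ω))|𝓖] =ᵐ[P] P[(fun ω => g (X' ω))|𝓖])
    (μ σY2 : ℝ) (hμ : μ = ∫ ω, f (X ω) ∂P)
    (hσY2 : σY2 = variance (P[(fun ω => f (X ω))|𝓖]) P) :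
    ∫ ω, f (X ω) * f (X' ω) ∂P = σY2 + μ ^ 2 := by
  have hm : 𝓖 ≤ ‹MeasurableSpace Ω› := by
    rw [h𝓖]; exact hY.comap_le
  haveI hsf : SigmaFinite (P.trim hm) := (isFiniteMeasure_trim hm).toSigmaFinite
  set g : Ω → ℝ := P[(fun ω => f (X ω))|𝓖] with hgdef
  have hgmem : MemLp g 2 P := memLp2_condexp hm P hL2
  have hint : Integrable (fun ω => f (X ω)) P := hL2.integrable one_le_two
  have hgint : ∫ ω, g ω ∂P = μ := by
    rw [hμ, hgdef]; exact integral_condExp hm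
  have hvar : σY2 = (∫ ω, g ω ^ 2 ∂P) - μ ^ 2 := by
    rw [hσY2, variance_eq_sub hgmem]
    congr 1
    rw [hgint]
  rw [hvar, sub_add_cancel]
  -- truncations
  set fn : ℕ → F → ℝ := fun n x => trunc' n (f x) with hfndef
  have hfnmeas : ∀ n, Measurable (fn n) := fun n => (trunc'_measurable n).comp hf
  have hbd : ∀ n, ∀ x, |fn n x| ≤ (n : ℝ) := fun n x => trunc'_abs_le n (f x)
  have hfnX2 : ∀ n, MemLp (fun ω => fn n (X ω)) 2 P := fun n =>
    (memLp_top_of_bound ((hfnmeas n).comp hX).aestronglyMeasurable (n : ℝ)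
      (Filter.Eventually.of_forall fun ω => by
        simpa [Real.norm_eq_abs] using hbd n (X ω))).mono_exponent le_top
  have hfnX'2 : ∀ n, MemLp (fun ω => fn n (X' ω)) 2 P := fun n =>
    (memLp_top_of_bound ((hfnmeas n).comp hX').aestronglyMeasurable (n : ℝ)
      (Filter.Eventually.of_forall fun ω => by
        simpa [Real.norm_eq_abs] using hbd n (X' ω))).mono_exponent le_top
  -- key identity for truncations
  have key : ∀ n : ℕ, ∫ ω, fn n (X ω) * fn n (X' ω) ∂P
      = ∫ ω, ((P[(fun ω' => fn n (X ω'))|𝓖]) ω) ^ 2 ∂P := by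
    intro n
    have h1 := hCondIndep (fn n) (fn n) (hfnmeas n) (hfnmeas n) ⟨n, hbd n⟩ ⟨n, hbd n⟩
    have h2 := hSameCondDist (fn n) (hfnmeas n) ⟨n, hbd n⟩
    calc ∫ ω, fn n (X ω) * fn n (X' ω) ∂P
        = ∫ ω, (P[(fun ω => fn n (X ω) * fn n (X' ω))|𝓖]) ω ∂P := (integral_condExp hm).symm
      _ = ∫ ω, ((P[(fun ω' => fn n (X ω'))|𝓖]) ω) * ((P[(fun ω' => fn n (X' ω'))|𝓖]) ω) ∂P :=
          integral_congr_ae h1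
      _ = ∫ ω, ((P[(fun ω' => fn n (X ω'))|𝓖]) ω) ^ 2 ∂P := by
          refine integral_congr_ae ?_
          filter_upwards [h2] with ω hω
          rw [sq, ← hω]
  -- LHS limit
  have hDint : Integrable (fun ω => |f (X ω)| * |f (X' ω)|) P := by
    have h1 : MemLp (fun ω => |f (X ω)|) 2 P := hL2.abs
    have h2 : MemLp (fun ω => |f (X' ω)|) 2 P := hL2'.abs
    have h3 := L2.integrable_inner (𝕜 := ℝ) (h1.toLp _) (h2.toLp _)
    refine h3.congr ?_
    filter_upwards [h1.coeFn_toLp, h2.coeFn_toLp] with ω e1 e2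
    simp [e1, e2, RCLike.inner_apply, mul_comm]
  have hLHS : Tendsto (fun n => ∫ ω, fn n (X ω) * fn n (X' ω) ∂P) atTop
      (𝓝 (∫ ω, f (X ω) * f (X' ω) ∂P)) := by
    refine tendsto_integral_of_dominated_convergence _ ?_ hDint ?_ ?_
    · intro n
      exact (((hfnmeas n).comp hX).mul ((hfnmeas n).comp hX')).aestronglyMeasurable
    · intro n
      filter_upwards with ω
      rw [Real.norm_eq_abs, abs_mul]
      exact mul_le_mul (trunc'_abs_le_abs n (f (X ω))) (trunc'_abs_le_abs n (f (X' ω)))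
        (abs_nonneg _) (abs_nonneg _)
    · filter_upwards with ω
      exact (trunc'_tendsto (f (X ω))).mul (trunc'_tendsto (f (X' ω)))
  have hfnint : ∀ n, Integrable (fun ω => fn n (X ω)) P := fun n =>
    (hfnX2 n).integrable one_le_two
  have hcontr : ∀ n, eLpNorm ((P[(fun ω' => fn n (X ω'))|𝓖]) - g) 2 P
      ≤ eLpNorm ((fun ω => fn n (X ω)) - fun ω => f (X ω)) 2 P := by
    intro n
    have hsub : P[((fun ω => fn n (X ω)) - fun ω => f (X ω))|𝓖]
        =ᵐ[P] (P[(fun ω' => fn n (X ω'))|𝓖]) - g := condExp_sub (hfnint n) hint 𝓖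
    rw [← eLpNorm_congr_ae hsub]
    exact eLpNorm_condexp_le2 hm P ((hfnX2 n).sub hL2)
  have hL2conv : Tendsto (fun n => eLpNorm ((P[(fun ω' => fn n (X ω'))|𝓖]) - g) 2 P)
      atTop (𝓝 0) := by
    have h0 := tendsto_eLpNorm_trunc' P (hf.comp hX).aestronglyMeasurable hL2
    exact tendsto_of_tendsto_of_tendsto_of_le_of_le tendsto_const_nhds h0
      (fun n => zero_le) hcontr
  haveI : Fact ((1:ℝ≥0∞) ≤ 2) := fact_one_le_two_ennreal
  have htendLp : Tendsto (fun n => (memLp2_condexp hm P (hfnX2 n)).toLp _) atTop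
      (𝓝 (hgmem.toLp g)) := by
    rw [Lp.tendsto_Lp_iff_tendsto_eLpNorm']
    refine Tendsto.congr (fun n => eLpNorm_congr_ae ?_) hL2conv
    exact (((memLp2_condexp hm P (hfnX2 n)).coeFn_toLp).symm).sub hgmem.coeFn_toLp.symm
  have hinner : ∀ (w : Ω → ℝ) (hw : MemLp w 2 P),
      (inner ℝ (hw.toLp w) (hw.toLp w) : ℝ) = ∫ ω, w ω ^ 2 ∂P := by
    intro w hw
    rw [L2.inner_def]
    refine integral_congr_ae ?_
    filter_upwards [hw.coeFn_toLp] with ω e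
    simp [e, RCLike.inner_apply, sq]
  have hRHS : Tendsto (fun n => ∫ ω, ((P[(fun ω' => fn n (X ω'))|𝓖]) ω) ^ 2 ∂P) atTop
      (𝓝 (∫ ω, g ω ^ 2 ∂P)) := by
    have h := Filter.Tendsto.inner (𝕜 := ℝ) htendLp htendLp
    rw [hinner g hgmem] at h
    exact Tendsto.congr (fun n => hinner _ (memLp2_condexp hm P (hfnX2 n))) h
  exact tendsto_nhds_unique (Tendsto.congr key hLHS) hRHS
end

section
/- For all real numbers w₁, w₂, w₃ with w₁ + w₂ + w₃ = 1, one has E[w₁ μ̂² + w₂ μ̂'² + w₃ μ̂ μ̂'] = μ² + ((w₁ + w₂) σ² + w₃ σ_Y²)/N. -/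
open MeasureTheory ProbabilityTheory Filter
open scoped RealInnerProductSpace Topology ENNReal

section Aux

variable {α : Type*} {m : MeasurableSpace α} [m0 : MeasurableSpace α] {μ : Measure α}

lemma inner_toLp_eq_integral_mul {u v : α → ℝ} (hu : MemLp u 2 μ) (hv : MemLp v 2 μ) :
    ⟪hu.toLp u, hv.toLp v⟫ = ∫ ω, u ω * v ω ∂μ := by
  rw [L2.inner_def]
  refine integral_congr_ae ?_
  filter_upwards [hu.coeFn_toLp, hv.coeFn_toLp] with ω h1 h2
  simp [RCLike.inner_apply, starRingEnd_apply, h1, h2, mul_comm]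

lemma integrable_mul_of_memL2 {u v : α → ℝ} (hu : MemLp u 2 μ) (hv : MemLp v 2 μ) :
    Integrable (fun ω => u ω * v ω) μ := by
  have h := L2.integrable_inner (𝕜 := ℝ) (hu.toLp u) (hv.toLp v)
  refine h.congr ?_
  filter_upwards [hu.coeFn_toLp, hv.coeFn_toLp] with ω h1 h2
  simp [RCLike.inner_apply, starRingEnd_apply, h1, h2, mul_comm]

lemma condExpL2_toLp_ae_eq_condexp (hm : m ≤ m0) [IsFiniteMeasure μ]
    {u : α → ℝ} (hu : MemLp u 2 μ) :
    (condExpL2 ℝ ℝ hm (hu.toLp u) : α → ℝ) =ᵐ[μ] μ[u|m] := by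
  refine ae_eq_condExp_of_forall_setIntegral_eq hm (hu.integrable one_le_two)
    (fun s hs hμs => integrableOn_condExpL2_of_measure_ne_top hm hμs.ne _)
    (fun s hs hμs => ?_) (aestronglyMeasurable_condExpL2 hm _)
  rw [integral_condExpL2_eq hm (hu.toLp u) hs hμs.ne]
  exact setIntegral_congr_ae (hm s hs) (hu.coeFn_toLp.mono fun ω h _ => h)

lemma sum_mul_sum_integral {N : ℕ} {u v : Fin N → α → ℝ}
    (hint : ∀ n m, Integrable (fun ω => u n ω * v m ω) μ)
    (c d : ℝ) (h : ∀ n m, ∫ ω, u n ω * v m ω ∂μ = d + if n = m then c else 0) :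
    ∫ ω, (∑ n, u n ω) * (∑ m, v m ω) ∂μ = (N : ℝ) ^ 2 * d + N * c := by
  have e1 : ∀ ω, (∑ n, u n ω) * (∑ m, v m ω) = ∑ n, ∑ m, u n ω * v m ω := fun ω =>
    Finset.sum_mul_sum _ _ _ _
  rw [integral_congr_ae (Filter.Eventually.of_forall e1),
    integral_finset_sum _ (fun n _ => integrable_finset_sum _ (fun m _ => hint n m))]
  have e2 : ∀ n : Fin N, ∫ ω, ∑ m, u n ω * v m ω ∂μ = ∑ m, ∫ ω, u n ω * v m ω ∂μ := fun n =>
    integral_finset_sum _ (fun m _ => hint n m)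
  simp only [e2, h, Finset.sum_add_distrib, Finset.sum_ite_eq, Finset.mem_univ, if_true,
    Finset.sum_const, Finset.card_univ, Fintype.card_fin, nsmul_eq_mul]
  ring

end Aux

/-- `E[w₁ μ̂² + w₂ μ̂'² + w₃ μ̂ μ̂'] = μ² + ((w₁ + w₂) σ² + w₃ σ_Y²)/N`. -/
theorem expectation_weighted_squares
    {Ω E F : Type*} (𝓖 : MeasurableSpace Ω)
    [MeasurableSpace Ω] [MeasurableSpace E] [MeasurableSpace F]
    (P : Measure Ω) [IsProbabilityMeasure P]
    (Y : Ω → E) (X X' : Ω → F) (f : F → ℝ)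
    (hY : Measurable Y) (hX : Measurable X) (hX' : Measurable X') (hf : Measurable f)
    (hL2 : MemLp (fun ω => f (X ω)) 2 P) (hL2' : MemLp (fun ω => f (X' ω)) 2 P)
    (h𝓖 : 𝓖 = MeasurableSpace.comap Y inferInstance)
    -- conditional independence of `X` and `X'` given `𝓖 = σ(Y)`
    (hCondIndep : ∀ g h : F → ℝ, Measurable g → Measurable h →
      (∃ C, ∀ x, |g x| ≤ C) → (∃ C, ∀ x, |h x| ≤ C) →
      P[(fun ω => g (X ω) * h (X' ω))|𝓖]
        =ᵐ[P] fun ω => ((P[(fun ω' => g (X ω'))|𝓖]) ω) * ((P[(fun ω' => h (X' ω'))|𝓖]) ω))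
    -- `X` and `X'` have the same conditional distribution given `𝓖`
    (hSameCondDist : ∀ g : F → ℝ, Measurable g → (∃ C, ∀ x, |g x| ≤ C) →
      P[(fun ω => g (X ω))|𝓖] =ᵐ[P] P[(fun ω => g (X' ω))|𝓖])
    (μ σ2 σY2 : ℝ) (hμ : μ = ∫ ω, f (X ω) ∂P)
    (hσ2 : σ2 = variance (fun ω => f (X ω)) P)
    (hσY2 : σY2 = variance (P[(fun ω => f (X ω))|𝓖]) P)
    (N : ℕ) (hN : 0 < N)
    -- i.i.d. sample triples `(Yₙ, Xₙ, X'ₙ)` with the same joint distribution as `(Y, X, X')`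
    (Ys : Fin N → Ω → E) (Xs Xs' : Fin N → Ω → F)
    (hYs : ∀ n, Measurable (Ys n)) (hXs : ∀ n, Measurable (Xs n)) (hXs' : ∀ n, Measurable (Xs' n))
    (hIndep : iIndepFun (fun n ω => (Ys n ω, Xs n ω, Xs' n ω)) P)
    (hIdent : ∀ n, Measure.map (fun ω => (Ys n ω, Xs n ω, Xs' n ω)) P
        = Measure.map (fun ω => (Y ω, X ω, X' ω)) P)
    (muHat muHat' : Ω → ℝ)
    (hmuHat : ∀ ω, muHat ω = (N : ℝ)⁻¹ * ∑ n, f (Xs n ω))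
    (hmuHat' : ∀ ω, muHat' ω = (N : ℝ)⁻¹ * ∑ n, f (Xs' n ω))
    :
    ∀ w₁ w₂ w₃ : ℝ, w₁ + w₂ + w₃ = 1 →
      ∫ ω, (w₁ * muHat ω ^ 2 + w₂ * muHat' ω ^ 2 + w₃ * (muHat ω * muHat' ω)) ∂P
        = μ ^ 2 + ((w₁ + w₂) * σ2 + w₃ * σY2) / (N : ℝ) := by
  intro w₁ w₂ w₃ hw
  have hm : 𝓖 ≤ ‹MeasurableSpace Ω› := by rw [h𝓖]; exact hY.comap_le
  -- X' has the same law as X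
  have hmapX' : Measure.map X' P = Measure.map X P := by
    have key : ∀ s : Set F, MeasurableSet s → P (X' ⁻¹' s) = P (X ⁻¹' s) := by
      intro s hs
      set gi : F → ℝ := s.indicator (fun _ => 1) with hgi_def
      have hgi : Measurable gi := measurable_const.indicator hs
      have hbd : ∃ C, ∀ x, |gi x| ≤ C :=
        ⟨1, fun x => by by_cases h : x ∈ s <;> simp [hgi_def, Set.indicator_apply, h]⟩
      have h2 : ∫ ω, (P[(fun ω' => gi (X ω'))|𝓖]) ω ∂P
          = ∫ ω, (P[(fun ω' => gi (X' ω'))|𝓖]) ω ∂P :=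
        integral_congr_ae (hSameCondDist gi hgi hbd)
      rw [integral_condExp hm, integral_condExp hm] at h2
      have e1 : ∀ Z : Ω → F, Measurable Z → ∫ ω, gi (Z ω) ∂P = (P (Z ⁻¹' s)).toReal := by
        intro Z hZ
        have : (fun ω => gi (Z ω)) = (Z ⁻¹' s).indicator (fun _ => (1 : ℝ)) := by
          ext ω; by_cases h : Z ω ∈ s <;>
            simp [hgi_def, Set.indicator_apply, h, Set.mem_preimage]
        rw [this, integral_indicator_const _ (hZ hs)]
        simp [Measure.real]
      rw [e1 X hX, e1 X' hX'] at h2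
      exact (ENNReal.toReal_eq_toReal_iff' (measure_ne_top _ _) (measure_ne_top _ _)).1 h2.symm
    ext s hs
    rw [Measure.map_apply hX' hs, Measure.map_apply hX hs, key s hs]
  -- laws of the samples
  have htriple : ∀ n, Measurable (fun ω => (Ys n ω, Xs n ω, Xs' n ω)) := fun n =>
    (hYs n).prod ((hXs n).prod (hXs' n))
  have htripleXY : Measurable (fun ω => (Y ω, X ω, X' ω)) := hY.prod (hX.prod hX')
  have hlawX : ∀ n, Measure.map (Xs n) P = Measure.map X P := by
    intro n
    have h := Measure.map_map (μ := P) (g := fun p : E × F × F => p.2.1)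
      (f := fun ω => (Ys n ω, Xs n ω, Xs' n ω))
      (by exact measurable_fst.comp measurable_snd) (htriple n)
    have h' := Measure.map_map (μ := P) (g := fun p : E × F × F => p.2.1)
      (f := fun ω => (Y ω, X ω, X' ω))
      (by exact measurable_fst.comp measurable_snd) htripleXY
    calc Measure.map (Xs n) P
        = Measure.map (fun p : E × F × F => p.2.1)
          (Measure.map (fun ω => (Ys n ω, Xs n ω, Xs' n ω)) P) := h.symm
      _ = Measure.map (fun p : E × F × F => p.2.1)
          (Measure.map (fun ω => (Y ω, X ω, X' ω)) P) := by rw [hIdent n]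
      _ = Measure.map X P := h'
  have hlawX' : ∀ n, Measure.map (Xs' n) P = Measure.map X P := by
    intro n
    have h := Measure.map_map (μ := P) (g := fun p : E × F × F => p.2.2)
      (f := fun ω => (Ys n ω, Xs n ω, Xs' n ω))
      (by exact measurable_snd.comp measurable_snd) (htriple n)
    have h' := Measure.map_map (μ := P) (g := fun p : E × F × F => p.2.2)
      (f := fun ω => (Y ω, X ω, X' ω))
      (by exact measurable_snd.comp measurable_snd) htripleXY
    calc Measure.map (Xs' n) P
        = Measure.map (fun p : E × F × F => p.2.2)
          (Measure.map (fun ω => (Ys n ω, Xs n ω, Xs' n ω)) P) := h.symm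
      _ = Measure.map (fun p : E × F × F => p.2.2)
          (Measure.map (fun ω => (Y ω, X ω, X' ω)) P) := by rw [hIdent n]
      _ = Measure.map X' P := h'
      _ = Measure.map X P := hmapX'
  have hlawPair : ∀ n, Measure.map (fun ω => (Xs n ω, Xs' n ω)) P
      = Measure.map (fun ω => (X ω, X' ω)) P := by
    intro n
    have h := Measure.map_map (μ := P) (g := fun p : E × F × F => p.2)
      (f := fun ω => (Ys n ω, Xs n ω, Xs' n ω)) (by exact measurable_snd) (htriple n)
    have h' := Measure.map_map (μ := P) (g := fun p : E × F × F => p.2)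
      (f := fun ω => (Y ω, X ω, X' ω)) (by exact measurable_snd) htripleXY
    calc Measure.map (fun ω => (Xs n ω, Xs' n ω)) P
        = Measure.map (fun p : E × F × F => p.2)
          (Measure.map (fun ω => (Ys n ω, Xs n ω, Xs' n ω)) P) := h.symm
      _ = Measure.map (fun p : E × F × F => p.2)
          (Measure.map (fun ω => (Y ω, X ω, X' ω)) P) := by rw [hIdent n]
      _ = Measure.map (fun ω => (X ω, X' ω)) P := h'
  -- MemLp of samples
  have hfmap : MemLp f 2 (Measure.map X P) :=
    (memLp_map_measure_iff hf.aestronglyMeasurable hX.aemeasurable).2 hL2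
  have hLn : ∀ n, MemLp (fun ω => f (Xs n ω)) 2 P := by
    intro n
    have := (memLp_map_measure_iff hf.aestronglyMeasurable (hXs n).aemeasurable).1
      (by rw [hlawX n]; exact hfmap)
    exact this
  have hLn' : ∀ n, MemLp (fun ω => f (Xs' n ω)) 2 P := by
    intro n
    have := (memLp_map_measure_iff hf.aestronglyMeasurable (hXs' n).aemeasurable).1
      (by rw [hlawX' n]; exact hfmap)
    exact this
  -- first moments
  have hμn : ∀ n, ∫ ω, f (Xs n ω) ∂P = μ := by
    intro n
    rw [hμ, ← integral_map (hXs n).aemeasurable hf.aestronglyMeasurable, hlawX n,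
      integral_map hX.aemeasurable hf.aestronglyMeasurable]
  have hμn' : ∀ n, ∫ ω, f (Xs' n ω) ∂P = μ := by
    intro n
    rw [hμ, ← integral_map (hXs' n).aemeasurable hf.aestronglyMeasurable, hlawX' n,
      integral_map hX.aemeasurable hf.aestronglyMeasurable]
  -- second moments
  set A : ℝ := ∫ ω, f (X ω) * f (X ω) ∂P with hA_def
  set B : ℝ := ∫ ω, f (X ω) * f (X' ω) ∂P with hB_def
  have hmulm : Measurable (fun x : F => f x * f x) := hf.mul hf
  have hAn : ∀ n, ∫ ω, f (Xs n ω) * f (Xs n ω) ∂P = A := by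
    intro n
    rw [hA_def, ← integral_map (hXs n).aemeasurable hmulm.aestronglyMeasurable, hlawX n,
      integral_map hX.aemeasurable hmulm.aestronglyMeasurable]
  have hAn' : ∀ n, ∫ ω, f (Xs' n ω) * f (Xs' n ω) ∂P = A := by
    intro n
    rw [hA_def, ← integral_map (hXs' n).aemeasurable hmulm.aestronglyMeasurable, hlawX' n,
      integral_map hX.aemeasurable hmulm.aestronglyMeasurable]
  have hpairm : Measurable (fun p : F × F => f p.1 * f p.2) :=
    (hf.comp measurable_fst).mul (hf.comp measurable_snd)
  have hBn : ∀ n, ∫ ω, f (Xs n ω) * f (Xs' n ω) ∂P = B := by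
    intro n
    have h1 : ∫ ω, f (Xs n ω) * f (Xs' n ω) ∂P
        = ∫ p, f p.1 * f p.2 ∂(Measure.map (fun ω => (Xs n ω, Xs' n ω)) P) :=
      (integral_map (φ := fun ω => (Xs n ω, Xs' n ω)) ((hXs n).prod (hXs' n)).aemeasurable
        hpairm.aestronglyMeasurable).symm
    rw [h1, hlawPair n, integral_map (hX.prod hX').aemeasurable hpairm.aestronglyMeasurable]
  -- independence of distinct samples
  have hproj1 : Measurable (fun p : E × F × F => f p.2.1) :=
    hf.comp (measurable_fst.comp measurable_snd)
  have hproj2 : Measurable (fun p : E × F × F => f p.2.2) :=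
    hf.comp (measurable_snd.comp measurable_snd)
  have hindXX : ∀ n m : Fin N, n ≠ m →
      IndepFun (fun ω => f (Xs n ω)) (fun ω => f (Xs m ω)) P := fun n m hnm =>
    (hIndep.indepFun hnm).comp hproj1 hproj1
  have hindXX' : ∀ n m : Fin N, n ≠ m →
      IndepFun (fun ω => f (Xs n ω)) (fun ω => f (Xs' m ω)) P := fun n m hnm =>
    (hIndep.indepFun hnm).comp hproj1 hproj2
  have hindX'X' : ∀ n m : Fin N, n ≠ m →
      IndepFun (fun ω => f (Xs' n ω)) (fun ω => f (Xs' m ω)) P := fun n m hnm =>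
    (hIndep.indepFun hnm).comp hproj2 hproj2
  -- pairwise product expectations
  have hXXe : ∀ n m : Fin N, ∫ ω, f (Xs n ω) * f (Xs m ω) ∂P
      = μ ^ 2 + if n = m then A - μ ^ 2 else 0 := by
    intro n m
    by_cases hnm : n = m
    · subst hnm; rw [hAn n]; simp
    · rw [(hindXX n m hnm).integral_fun_mul_eq_mul_integral ((hf.comp (hXs n)).aestronglyMeasurable)
        ((hf.comp (hXs m)).aestronglyMeasurable), hμn n, hμn m]
      simp [hnm]; ring
  have hXX'e : ∀ n m : Fin N, ∫ ω, f (Xs n ω) * f (Xs' m ω) ∂P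
      = μ ^ 2 + if n = m then B - μ ^ 2 else 0 := by
    intro n m
    by_cases hnm : n = m
    · subst hnm; rw [hBn n]; simp
    · rw [(hindXX' n m hnm).integral_fun_mul_eq_mul_integral ((hf.comp (hXs n)).aestronglyMeasurable)
        ((hf.comp (hXs' m)).aestronglyMeasurable), hμn n, hμn' m]
      simp [hnm]; ring
  have hX'X'e : ∀ n m : Fin N, ∫ ω, f (Xs' n ω) * f (Xs' m ω) ∂P
      = μ ^ 2 + if n = m then A - μ ^ 2 else 0 := by
    intro n m
    by_cases hnm : n = m
    · subst hnm; rw [hAn' n]; simp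
    · rw [(hindX'X' n m hnm).integral_fun_mul_eq_mul_integral ((hf.comp (hXs' n)).aestronglyMeasurable)
        ((hf.comp (hXs' m)).aestronglyMeasurable), hμn' n, hμn' m]
      simp [hnm]; ring
  -- integrals of sum products
  have hSS : ∫ ω, (∑ n, f (Xs n ω)) * (∑ m, f (Xs m ω)) ∂P
      = (N : ℝ) ^ 2 * μ ^ 2 + N * (A - μ ^ 2) :=
    sum_mul_sum_integral (fun n m => integrable_mul_of_memL2 (hLn n) (hLn m)) _ _ hXXe
  have hSS' : ∫ ω, (∑ n, f (Xs n ω)) * (∑ m, f (Xs' m ω)) ∂P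
      = (N : ℝ) ^ 2 * μ ^ 2 + N * (B - μ ^ 2) :=
    sum_mul_sum_integral (fun n m => integrable_mul_of_memL2 (hLn n) (hLn' m)) _ _ hXX'e
  have hS'S' : ∫ ω, (∑ n, f (Xs' n ω)) * (∑ m, f (Xs' m ω)) ∂P
      = (N : ℝ) ^ 2 * μ ^ 2 + N * (A - μ ^ 2) :=
    sum_mul_sum_integral (fun n m => integrable_mul_of_memL2 (hLn' n) (hLn' m)) _ _ hX'X'e
  -- A in terms of σ2
  have hA : A = σ2 + μ ^ 2 := by
    have hv := variance_eq_sub (μ := P) hL2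
    rw [← hσ2, ← hμ] at hv
    have : (∫ ω, ((fun ω => f (X ω)) ^ 2) ω ∂P) = A := by
      rw [hA_def]; exact integral_congr_ae (Filter.Eventually.of_forall fun ω => by
        simp [pow_two])
    rw [this] at hv
    linarith
  -- B in terms of σY2 : the conditional-independence argument with truncations
  have hB : B = σY2 + μ ^ 2 := by
    haveI : Fact ((1 : ℝ≥0∞) ≤ 2) := ⟨one_le_two⟩
    -- truncations
    set Fk : ℕ → F → ℝ := fun k x => max (-(k : ℝ)) (min (k : ℝ) (f x)) with hFk_def
    have hFkm : ∀ k, Measurable (Fk k) := fun k => measurable_const.max (measurable_const.min hf)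
    have hFk_bd : ∀ k x, |Fk k x| ≤ (k : ℝ) := by
      intro k x
      rw [abs_le]
      constructor
      · exact le_trans (neg_le_neg (le_refl _)) (le_max_left _ _)
      · exact max_le (le_trans (neg_nonpos.2 (Nat.cast_nonneg k)) (Nat.cast_nonneg k))
          (min_le_left _ _)
    have hFk_le : ∀ k x, |Fk k x| ≤ |f x| := by
      intro k x
      rw [abs_le]
      constructor
      · exact le_trans (le_min (le_trans (neg_nonpos.2 (abs_nonneg _)) (Nat.cast_nonneg k))
          (neg_abs_le _)) (le_max_right _ _)
      · exact max_le (le_trans (neg_nonpos.2 (Nat.cast_nonneg k)) (abs_nonneg _))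
          (le_trans (min_le_right _ _) (le_abs_self _))
    have hFk_tendsto : ∀ x, Tendsto (fun k => Fk k x) atTop (𝓝 (f x)) := by
      intro x
      refine tendsto_const_nhds.congr' ?_
      filter_upwards [eventually_ge_atTop ⌈|f x|⌉₊] with k hk
      have hk' : |f x| ≤ (k : ℝ) := le_trans (Nat.le_ceil _) (Nat.cast_le.2 hk)
      rw [abs_le] at hk'
      rw [hFk_def]
      simp only []
      rw [min_eq_right hk'.2, max_eq_right hk'.1]
    -- L² membership of truncations
    have hFkX : ∀ k, MemLp (fun ω => Fk k (X ω)) 2 P := fun k =>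
      MemLp.of_bound ((hFkm k).comp hX).aestronglyMeasurable (k : ℝ)
        (Filter.Eventually.of_forall fun ω => by
          simpa [Real.norm_eq_abs] using hFk_bd k (X ω))
    have hFkX' : ∀ k, MemLp (fun ω => Fk k (X' ω)) 2 P := fun k =>
      MemLp.of_bound ((hFkm k).comp hX').aestronglyMeasurable (k : ℝ)
        (Filter.Eventually.of_forall fun ω => by
          simpa [Real.norm_eq_abs] using hFk_bd k (X' ω))
    set G : Lp ℝ 2 P := hL2.toLp _ with hG_def
    set G' : Lp ℝ 2 P := hL2'.toLp _ with hG'_def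
    set Gk : ℕ → Lp ℝ 2 P := fun k => (hFkX k).toLp _ with hGk_def
    set Gk' : ℕ → Lp ℝ 2 P := fun k => (hFkX' k).toLp _ with hGk'_def
    set T : Lp ℝ 2 P → Lp ℝ 2 P := fun u => (condExpL2 ℝ ℝ hm u : Lp ℝ 2 P) with hT_def
    have hTcont : Continuous T :=
      continuous_subtype_val.comp (condExpL2 ℝ ℝ (μ := P) hm).continuous
    -- convergence Gk → G in L²
    have hconv : ∀ (Z : Ω → F), Measurable Z → ∀ (hZ2 : MemLp (fun ω => f (Z ω)) 2 P)
        (hZk : ∀ k, MemLp (fun ω => Fk k (Z ω)) 2 P),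
        Tendsto (fun k => ((hZk k).toLp _ : Lp ℝ 2 P)) atTop (𝓝 (hZ2.toLp _)) := by
      intro Z hZ hZ2 hZk
      rw [tendsto_iff_norm_sub_tendsto_zero]
      have hsq : Tendsto (fun k => ‖((hZk k).toLp _ : Lp ℝ 2 P) - hZ2.toLp _‖ ^ 2)
          atTop (𝓝 0) := by
        have heq : ∀ k, ‖((hZk k).toLp _ : Lp ℝ 2 P) - hZ2.toLp _‖ ^ 2
            = ∫ ω, (Fk k (Z ω) - f (Z ω)) ^ 2 ∂P := by
          intro k
          rw [← real_inner_self_eq_norm_sq, L2.inner_def]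
          refine integral_congr_ae ?_
          filter_upwards [Lp.coeFn_sub ((hZk k).toLp _) (hZ2.toLp _), (hZk k).coeFn_toLp,
            hZ2.coeFn_toLp] with ω h1 h2 h3
          rw [RCLike.inner_apply]
          simp only [starRingEnd_apply, star_trivial, h1, Pi.sub_apply, h2, h3]
          ring
        simp only [heq]
        have h0 : (0 : ℝ) = ∫ _ω, (0 : ℝ) ∂P := by simp
        rw [h0]
        refine tendsto_integral_of_dominated_convergence (fun ω => 4 * f (Z ω) ^ 2)
          (fun k => ?_) ?_ (fun k => ?_) ?_
        · exact ((((hFkm k).comp hZ).sub (hf.comp hZ)).pow_const 2).aestronglyMeasurable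
        · exact (hZ2.integrable_sq).const_mul 4
        · refine Filter.Eventually.of_forall fun ω => ?_
          have h1 : |Fk k (Z ω) - f (Z ω)| ≤ 2 * |f (Z ω)| := by
            calc |Fk k (Z ω) - f (Z ω)| ≤ |Fk k (Z ω)| + |f (Z ω)| := abs_sub _ _
            _ ≤ |f (Z ω)| + |f (Z ω)| := by linarith [hFk_le k (Z ω)]
            _ = 2 * |f (Z ω)| := by ring
          have h2 : (Fk k (Z ω) - f (Z ω)) ^ 2 ≤ (2 * |f (Z ω)|) ^ 2 := by
            rw [← sq_abs]
            exact pow_le_pow_left₀ (abs_nonneg _) h1 2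
          rw [Real.norm_eq_abs, abs_of_nonneg (sq_nonneg _)]
          calc (Fk k (Z ω) - f (Z ω)) ^ 2 ≤ (2 * |f (Z ω)|) ^ 2 := h2
          _ = 4 * f (Z ω) ^ 2 := by rw [mul_pow, sq_abs]; ring
        · refine Filter.Eventually.of_forall fun ω => ?_
          have hd : Tendsto (fun k : ℕ => Fk k (Z ω) - f (Z ω)) atTop (𝓝 0) := by
            have := (hFk_tendsto (Z ω)).sub (tendsto_const_nhds (x := f (Z ω)))
            simpa using this
          have h2 : Tendsto (fun k : ℕ => (Fk k (Z ω) - f (Z ω)) ^ 2) atTop (𝓝 0) := by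
            have := hd.pow 2
            simpa using this
          exact h2
      have : Tendsto (fun k => Real.sqrt (‖((hZk k).toLp _ : Lp ℝ 2 P) - hZ2.toLp _‖ ^ 2))
          atTop (𝓝 (Real.sqrt 0)) := (Real.continuous_sqrt.tendsto 0).comp hsq
      rw [Real.sqrt_zero] at this
      refine this.congr fun k => ?_
      rw [Real.sqrt_sq (norm_nonneg _)]
    have hGkG : Tendsto Gk atTop (𝓝 G) := hconv X hX hL2 hFkX
    have hGk'G' : Tendsto Gk' atTop (𝓝 G') := hconv X' hX' hL2' hFkX'
    -- key identity at level k
    have hstep : ∀ k, ⟪Gk k, Gk' k⟫ = ⟪T (Gk k), T (Gk k)⟫ := by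
      intro k
      rw [hGk_def, hGk'_def]
      rw [inner_toLp_eq_integral_mul (hFkX k) (hFkX' k)]
      have h1 : ∫ ω, Fk k (X ω) * Fk k (X' ω) ∂P
          = ∫ ω, (P[(fun ω' => Fk k (X ω') * Fk k (X' ω'))|𝓖]) ω ∂P :=
        (integral_condExp hm).symm
      have h2 := hCondIndep (Fk k) (Fk k) (hFkm k) (hFkm k) ⟨k, hFk_bd k⟩ ⟨k, hFk_bd k⟩
      have h3 := (hSameCondDist (Fk k) (hFkm k) ⟨k, hFk_bd k⟩).symm
      have h4 := condExpL2_toLp_ae_eq_condexp hm (hFkX k)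
      rw [h1, L2.inner_def]
      refine integral_congr_ae ?_
      filter_upwards [h2, h3, h4] with ω e2 e3 e4
      rw [e2, RCLike.inner_apply]
      simp only [starRingEnd_apply, star_trivial]
      rw [e3]
      have e4' : (P[(fun ω' => Fk k (X ω'))|𝓖]) ω = (T (Gk k) : Ω → ℝ) ω := e4.symm
      rw [e4']
    -- pass to the limit
    have hlim1 : Tendsto (fun k => ⟪Gk k, Gk' k⟫) atTop (𝓝 ⟪G, G'⟫) := hGkG.inner hGk'G'
    have hTlim : Tendsto (fun k => T (Gk k)) atTop (𝓝 (T G)) :=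
      (hTcont.tendsto G).comp hGkG
    have hlim2 : Tendsto (fun k => ⟪T (Gk k), T (Gk k)⟫) atTop (𝓝 ⟪T G, T G⟫) :=
      hTlim.inner hTlim
    have hBB : ⟪G, G'⟫ = ⟪T G, T G⟫ := by
      refine tendsto_nhds_unique ?_ hlim2
      simpa only [hstep] using hlim1
    -- identify both sides
    have hceq : (T G : Ω → ℝ) =ᵐ[P] P[(fun ω => f (X ω))|𝓖] :=
      condExpL2_toLp_ae_eq_condexp hm hL2
    have hCE2 : MemLp (P[(fun ω => f (X ω))|𝓖]) 2 P := (Lp.memLp (T G)).ae_eq hceq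
    have hinner : ⟪T G, T G⟫ = ∫ ω, (P[(fun ω => f (X ω))|𝓖]) ω
        * (P[(fun ω => f (X ω))|𝓖]) ω ∂P := by
      rw [L2.inner_def]
      refine integral_congr_ae ?_
      filter_upwards [hceq] with ω e
      rw [RCLike.inner_apply]
      simp only [starRingEnd_apply, star_trivial, e]
    have hBval : B = ∫ ω, (P[(fun ω => f (X ω))|𝓖]) ω * (P[(fun ω => f (X ω))|𝓖]) ω ∂P := by
      rw [hB_def, ← inner_toLp_eq_integral_mul hL2 hL2', ← hG_def, ← hG'_def, hBB, hinner]
    -- variance of the conditional expectation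
    have hEh : ∫ ω, (P[(fun ω => f (X ω))|𝓖]) ω ∂P = μ := by
      rw [integral_condExp hm, ← hμ]
    have hv := variance_eq_sub (μ := P) hCE2
    rw [← hσY2] at hv
    have h5 : (∫ ω, ((P[(fun ω => f (X ω))|𝓖]) ^ 2) ω ∂P)
        = ∫ ω, (P[(fun ω => f (X ω))|𝓖]) ω * (P[(fun ω => f (X ω))|𝓖]) ω ∂P :=
      integral_congr_ae (Filter.Eventually.of_forall fun ω => by simp [pow_two])
    rw [h5, hEh] at hv
    rw [hBval]
    linarith
  -- put everything together
  have hNne : (N : ℝ) ≠ 0 := Nat.cast_ne_zero.2 hN.ne'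
  have hSXL2 : MemLp (fun ω => ∑ n, f (Xs n ω)) 2 P :=
    memLp_finset_sum Finset.univ (fun n _ => hLn n)
  have hSX'L2 : MemLp (fun ω => ∑ n, f (Xs' n ω)) 2 P :=
    memLp_finset_sum Finset.univ (fun n _ => hLn' n)
  have hint1 : Integrable (fun ω => (∑ n, f (Xs n ω)) * (∑ m, f (Xs m ω))) P :=
    integrable_mul_of_memL2 hSXL2 hSXL2
  have hint2 : Integrable (fun ω => (∑ n, f (Xs' n ω)) * (∑ m, f (Xs' m ω))) P :=
    integrable_mul_of_memL2 hSX'L2 hSX'L2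
  have hint3 : Integrable (fun ω => (∑ n, f (Xs n ω)) * (∑ m, f (Xs' m ω))) P :=
    integrable_mul_of_memL2 hSXL2 hSX'L2
  have hpt : ∀ ω, w₁ * muHat ω ^ 2 + w₂ * muHat' ω ^ 2 + w₃ * (muHat ω * muHat' ω)
      = ((N : ℝ) ^ 2)⁻¹ * (w₁ * ((∑ n, f (Xs n ω)) * (∑ m, f (Xs m ω)))
        + w₂ * ((∑ n, f (Xs' n ω)) * (∑ m, f (Xs' m ω)))
        + w₃ * ((∑ n, f (Xs n ω)) * (∑ m, f (Xs' m ω)))) := by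
    intro ω
    rw [hmuHat, hmuHat']
    field_simp
  have i1 : Integrable (fun ω => w₁ * ((∑ n, f (Xs n ω)) * (∑ m, f (Xs m ω)))) P :=
    hint1.const_mul w₁
  have i2 : Integrable (fun ω => w₂ * ((∑ n, f (Xs' n ω)) * (∑ m, f (Xs' m ω)))) P :=
    hint2.const_mul w₂
  have i3 : Integrable (fun ω => w₃ * ((∑ n, f (Xs n ω)) * (∑ m, f (Xs' m ω)))) P :=
    hint3.const_mul w₃
  have i12 : Integrable (fun ω => w₁ * ((∑ n, f (Xs n ω)) * (∑ m, f (Xs m ω)))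
      + w₂ * ((∑ n, f (Xs' n ω)) * (∑ m, f (Xs' m ω)))) P := i1.add i2
  rw [integral_congr_ae (Filter.Eventually.of_forall hpt), integral_const_mul,
    integral_add i12 i3, integral_add i1 i2,
    integral_const_mul, integral_const_mul, integral_const_mul, hSS, hSS', hS'S']
  have hw3 : w₃ = 1 - w₁ - w₂ := by linarith
  rw [hA, hB, hw3]
  field_simp
  ring
end

section
/- The estimator V₂ = N⁻¹ ∑_{n=1}^N f(Xₙ) f(X'ₙ) − ((μ̂ + μ̂')/2)² satisfies E[V₂] = σ_Y² − (σ² + σ_Y²)/(2N). -/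
open MeasureTheory ProbabilityTheory

open Filter Topology
open scoped ENNReal

open scoped ENNReal

namespace EstimatorAux

set_option linter.unusedSectionVars false

variable {Ω : Type*} {m mΩ : MeasurableSpace Ω} {P : Measure Ω} [IsProbabilityMeasure P]

lemma integral_sq_Lp (u : Lp ℝ 2 P) : ∫ ω, (u ω) ^ 2 ∂P = ‖u‖ ^ 2 := by
  rw [← real_inner_self_eq_norm_sq, L2.inner_def]
  refine integral_congr_ae (Eventually.of_forall fun ω => ?_)
  simp [RCLike.inner_apply, starRingEnd_apply, sq]

lemma integrable_mul2 {u v : Ω → ℝ} (hu : MemLp u 2 P) (hv : MemLp v 2 P) :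
    Integrable (fun ω => u ω * v ω) P := by
  have h : MemLp (v • u) 1 P := hu.smul hv
  refine (h.integrable le_rfl).congr (Eventually.of_forall fun ω => ?_)
  simp [mul_comm]

lemma condexp_ae_eq_condExpL2 (hm : m ≤ mΩ) {g : Ω → ℝ} (hg : MemLp g 2 P) :
    P[g|m] =ᵐ[P] ((condExpL2 ℝ ℝ hm (hg.toLp g) : Lp ℝ 2 P) : Ω → ℝ) := by
  haveI : SigmaFinite (P.trim hm) := inferInstance
  refine (ae_eq_condExp_of_forall_setIntegral_eq hm (hg.integrable one_le_two) ?_ ?_ ?_).symm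
  · intro s _ _
    exact ((Lp.memLp _).integrable one_le_two).integrableOn
  · intro s hs hμs
    rw [integral_condExpL2_eq_of_fin_meas_real (hm := hm) (hg.toLp g) hs hμs.ne]
    exact setIntegral_congr_ae (hm s hs) ((hg.coeFn_toLp).mono fun ω h _ => h)
  · exact lpMeas.aestronglyMeasurable _

lemma memℒp_two_condexp (hm : m ≤ mΩ) {g : Ω → ℝ} (hg : MemLp g 2 P) :
    MemLp (P[g|m]) 2 P :=
  (Lp.memLp _).ae_eq (condexp_ae_eq_condExpL2 hm hg).symm

lemma integral_sq_condexp_le (hm : m ≤ mΩ) {g : Ω → ℝ} (hg : MemLp g 2 P) :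
    ∫ ω, (P[g|m]) ω ^ 2 ∂P ≤ ∫ ω, g ω ^ 2 ∂P := by
  have h := condexp_ae_eq_condExpL2 hm hg
  calc ∫ ω, (P[g|m]) ω ^ 2 ∂P
      = ∫ ω, ((condExpL2 ℝ ℝ hm (hg.toLp g) : Lp ℝ 2 P) : Ω → ℝ) ω ^ 2 ∂P :=
        integral_congr_ae (h.mono fun ω hω => by dsimp only; rw [hω])
    _ = ‖((condExpL2 ℝ ℝ hm (hg.toLp g) : Lp ℝ 2 P))‖ ^ 2 := integral_sq_Lp _
    _ ≤ ‖hg.toLp g‖ ^ 2 := by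
        have := norm_condExpL2_coe_le (𝕜 := ℝ) hm (hg.toLp g)
        exact pow_le_pow_left₀ (norm_nonneg _) this 2
    _ = ∫ ω, (hg.toLp g : Ω → ℝ) ω ^ 2 ∂P := (integral_sq_Lp _).symm
    _ = ∫ ω, g ω ^ 2 ∂P :=
        integral_congr_ae ((hg.coeFn_toLp).mono fun ω hω => by dsimp only; rw [hω])

lemma abs_integral_mul_le {u v : Ω → ℝ} (hu : MemLp u 2 P) (hv : MemLp v 2 P) :
    |∫ ω, u ω * v ω ∂P| ≤
      Real.sqrt (∫ ω, u ω ^ 2 ∂P) * Real.sqrt (∫ ω, v ω ^ 2 ∂P) := by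
  have hpq : (2 : ℝ).HolderConjugate 2 := Real.HolderConjugate.two_two
  have hu2 : MemLp u (ENNReal.ofReal 2) P := by simpa [ENNReal.ofReal_ofNat] using hu
  have hv2 : MemLp v (ENNReal.ofReal 2) P := by simpa [ENNReal.ofReal_ofNat] using hv
  have h2 := integral_mul_norm_le_Lp_mul_Lq (μ := P) hpq hu2 hv2
  have h1 : |∫ ω, u ω * v ω ∂P| ≤ ∫ ω, ‖u ω‖ * ‖v ω‖ ∂P := by
    rw [← Real.norm_eq_abs]
    refine (norm_integral_le_integral_norm _).trans_eq
      (integral_congr_ae (Eventually.of_forall fun ω => ?_))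
    simp [norm_mul]
  refine h1.trans (h2.trans_eq ?_)
  have hru : ∫ (a : Ω), ‖u a‖ ^ (2:ℝ) ∂P = ∫ ω, u ω ^ 2 ∂P := by
    refine integral_congr_ae (Eventually.of_forall fun ω => ?_)
    dsimp only
    rw [Real.rpow_two, Real.norm_eq_abs, sq_abs]
  have hrv : ∫ (a : Ω), ‖v a‖ ^ (2:ℝ) ∂P = ∫ ω, v ω ^ 2 ∂P := by
    refine integral_congr_ae (Eventually.of_forall fun ω => ?_)
    dsimp only
    rw [Real.rpow_two, Real.norm_eq_abs, sq_abs]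
  rw [hru, hrv, ← Real.sqrt_eq_rpow, ← Real.sqrt_eq_rpow]

noncomputable def trunc (k : ℕ) (x : ℝ) : ℝ := max (-(k : ℝ)) (min (k : ℝ) x)

lemma trunc_measurable (k : ℕ) : Measurable (trunc k) :=
  measurable_const.max (measurable_const.min measurable_id)

lemma abs_trunc_le_nat (k : ℕ) (x : ℝ) : |trunc k x| ≤ (k : ℝ) := by
  rw [abs_le, trunc]
  constructor
  · exact le_max_left _ _
  · exact max_le ((neg_nonpos.mpr (Nat.cast_nonneg k)).trans (Nat.cast_nonneg k))
      ((min_le_left _ _))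

lemma abs_trunc_le_abs (k : ℕ) (x : ℝ) : |trunc k x| ≤ |x| := by
  rw [abs_le, trunc]
  constructor
  · exact le_max_of_le_right
      (le_min ((neg_nonpos.mpr (abs_nonneg x)).trans (Nat.cast_nonneg k)) (neg_abs_le x))
  · exact max_le ((neg_nonpos.mpr (Nat.cast_nonneg k)).trans (abs_nonneg x))
      ((min_le_right _ _).trans (le_abs_self x))

lemma tendsto_trunc (x : ℝ) : Tendsto (fun k => trunc k x) atTop (𝓝 x) := by
  have h : ∀ᶠ k in atTop, trunc k x = x := by
    filter_upwards [eventually_ge_atTop ⌈|x|⌉₊] with k hk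
    have hk' : |x| ≤ (k : ℝ) := (Nat.le_ceil _).trans (by exact_mod_cast hk)
    rw [trunc, min_eq_right ((le_abs_self x).trans hk'),
      max_eq_right (by linarith [neg_abs_le x, abs_nonneg x])]
  exact Tendsto.congr' (by filter_upwards [h] with k hk; exact hk.symm) tendsto_const_nhds

lemma key_identities {Ω F : Type*} (𝓖 : MeasurableSpace Ω)
    [mΩ : MeasurableSpace Ω] [MeasurableSpace F] (hm : 𝓖 ≤ mΩ)
    (P : Measure Ω) [IsProbabilityMeasure P]
    (X X' : Ω → F) (f : F → ℝ) (hX : Measurable X) (hX' : Measurable X') (hf : Measurable f)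
    (hL2 : MemLp (fun ω => f (X ω)) 2 P) (hL2' : MemLp (fun ω => f (X' ω)) 2 P)
    (hCondIndep : ∀ g h : F → ℝ, Measurable g → Measurable h →
      (∃ C, ∀ x, |g x| ≤ C) → (∃ C, ∀ x, |h x| ≤ C) →
      P[(fun ω => g (X ω) * h (X' ω))|𝓖]
        =ᵐ[P] fun ω => ((P[(fun ω' => g (X ω'))|𝓖]) ω) * ((P[(fun ω' => h (X' ω'))|𝓖]) ω))
    (hSameCondDist : ∀ g : F → ℝ, Measurable g → (∃ C, ∀ x, |g x| ≤ C) →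
      P[(fun ω => g (X ω))|𝓖] =ᵐ[P] P[(fun ω => g (X' ω))|𝓖]) :
    (∫ ω, f (X ω) * f (X' ω) ∂P = ∫ ω, (P[(fun ω' => f (X ω'))|𝓖]) ω ^ 2 ∂P) ∧
    (∫ ω, f (X' ω) ∂P = ∫ ω, f (X ω) ∂P) ∧
    (∫ ω, f (X' ω) ^ 2 ∂P = ∫ ω, f (X ω) ^ 2 ∂P) := by
  haveI : SigmaFinite (P.trim hm) := inferInstance
  have hak_meas : ∀ k : ℕ, Measurable fun ω => trunc k (f (X ω)) :=
    fun k => (trunc_measurable k).comp (hf.comp hX)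
  have hbk_meas : ∀ k : ℕ, Measurable fun ω => trunc k (f (X' ω)) :=
    fun k => (trunc_measurable k).comp (hf.comp hX')
  have hak2 : ∀ k : ℕ, MemLp (fun ω => trunc k (f (X ω))) 2 P := fun k =>
    MemLp.of_bound (hak_meas k).aestronglyMeasurable k
      (Eventually.of_forall fun ω => by
        simpa [Real.norm_eq_abs] using abs_trunc_le_nat k (f (X ω)))
  have hbk2 : ∀ k : ℕ, MemLp (fun ω => trunc k (f (X' ω))) 2 P := fun k =>
    MemLp.of_bound (hbk_meas k).aestronglyMeasurable k
      (Eventually.of_forall fun ω => by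
        simpa [Real.norm_eq_abs] using abs_trunc_le_nat k (f (X' ω)))
  have htrunc_meas : ∀ k : ℕ, Measurable fun x => trunc k (f x) :=
    fun k => (trunc_measurable k).comp hf
  have htrunc_bd : ∀ k : ℕ, ∃ C, ∀ x, |trunc k (f x)| ≤ C :=
    fun k => ⟨k, fun x => abs_trunc_le_nat k (f x)⟩
  -- k-level identities
  have hA1 : ∀ k : ℕ, ∫ ω, trunc k (f (X ω)) * trunc k (f (X' ω)) ∂P
      = ∫ ω, (P[(fun ω' => trunc k (f (X ω')))|𝓖]) ω ^ 2 ∂P := by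
    intro k
    have hci : P[(fun ω => trunc k (f (X ω)) * trunc k (f (X' ω)))|𝓖]
        =ᵐ[P] fun ω => ((P[(fun ω' => trunc k (f (X ω')))|𝓖]) ω)
          * ((P[(fun ω' => trunc k (f (X' ω')))|𝓖]) ω) :=
      hCondIndep _ _ (htrunc_meas k) (htrunc_meas k) (htrunc_bd k) (htrunc_bd k)
    have hsc : P[(fun ω => trunc k (f (X ω)))|𝓖] =ᵐ[P] P[(fun ω => trunc k (f (X' ω)))|𝓖] :=
      hSameCondDist _ (htrunc_meas k) (htrunc_bd k)
    rw [← integral_condExp (f := fun ω => trunc k (f (X ω)) * trunc k (f (X' ω))) hm]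
    refine integral_congr_ae ?_
    filter_upwards [hci, hsc] with ω h1 h2
    rw [h1, ← h2, sq]
  have hA2 : ∀ k : ℕ, ∫ ω, trunc k (f (X' ω)) ∂P = ∫ ω, trunc k (f (X ω)) ∂P := by
    intro k
    have hsc : P[(fun ω => trunc k (f (X ω)))|𝓖] =ᵐ[P] P[(fun ω => trunc k (f (X' ω)))|𝓖] :=
      hSameCondDist _ (htrunc_meas k) (htrunc_bd k)
    rw [← integral_condExp (f := fun ω => trunc k (f (X ω))) hm,
      ← integral_condExp (f := fun ω => trunc k (f (X' ω))) hm]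
    exact (integral_congr_ae hsc).symm
  have hA3 : ∀ k : ℕ, ∫ ω, trunc k (f (X' ω)) ^ 2 ∂P = ∫ ω, trunc k (f (X ω)) ^ 2 ∂P := by
    intro k
    have hsc : P[(fun ω => trunc k (f (X ω)) ^ 2)|𝓖] =ᵐ[P] P[(fun ω => trunc k (f (X' ω)) ^ 2)|𝓖] :=
      hSameCondDist (fun x => trunc k (f x) ^ 2) ((htrunc_meas k).pow_const 2)
        ⟨(k : ℝ) ^ 2, fun x => by
          calc |trunc k (f x) ^ 2| = |trunc k (f x)| ^ 2 := by rw [abs_pow]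
            _ ≤ (k : ℝ) ^ 2 := pow_le_pow_left₀ (abs_nonneg _) (abs_trunc_le_nat k _) 2⟩
    rw [← integral_condExp (f := fun ω => trunc k (f (X ω)) ^ 2) hm,
      ← integral_condExp (f := fun ω => trunc k (f (X' ω)) ^ 2) hm]
    exact (integral_congr_ae hsc).symm
  -- limits
  have habs2 : MemLp (fun ω => |f (X ω)|) 2 P := by
    simpa [Real.norm_eq_abs] using hL2.norm
  have habs2' : MemLp (fun ω => |f (X' ω)|) 2 P := by
    simpa [Real.norm_eq_abs] using hL2'.norm
  have hB1 : Tendsto (fun k : ℕ => ∫ ω, trunc k (f (X ω)) * trunc k (f (X' ω)) ∂P) atTop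
      (𝓝 (∫ ω, f (X ω) * f (X' ω) ∂P)) := by
    refine tendsto_integral_of_dominated_convergence
      (fun ω => |f (X ω)| * |f (X' ω)|)
      (fun k => ((hak_meas k).mul (hbk_meas k)).aestronglyMeasurable)
      (integrable_mul2 habs2 habs2') (fun k => Eventually.of_forall fun ω => ?_)
      (Eventually.of_forall fun ω => (tendsto_trunc (f (X ω))).mul (tendsto_trunc (f (X' ω))))
    rw [Real.norm_eq_abs, abs_mul]
    exact mul_le_mul (abs_trunc_le_abs _ _) (abs_trunc_le_abs _ _) (abs_nonneg _) (abs_nonneg _)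
  have hB2a : Tendsto (fun k : ℕ => ∫ ω, trunc k (f (X ω)) ∂P) atTop
      (𝓝 (∫ ω, f (X ω) ∂P)) := by
    refine tendsto_integral_of_dominated_convergence (fun ω => |f (X ω)|)
      (fun k => (hak_meas k).aestronglyMeasurable)
      ((hL2.integrable one_le_two).abs) (fun k => Eventually.of_forall fun ω => ?_)
      (Eventually.of_forall fun ω => tendsto_trunc (f (X ω)))
    rw [Real.norm_eq_abs]
    exact abs_trunc_le_abs _ _
  have hB2b : Tendsto (fun k : ℕ => ∫ ω, trunc k (f (X' ω)) ∂P) atTop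
      (𝓝 (∫ ω, f (X' ω) ∂P)) := by
    refine tendsto_integral_of_dominated_convergence (fun ω => |f (X' ω)|)
      (fun k => (hbk_meas k).aestronglyMeasurable)
      ((hL2'.integrable one_le_two).abs) (fun k => Eventually.of_forall fun ω => ?_)
      (Eventually.of_forall fun ω => tendsto_trunc (f (X' ω)))
    rw [Real.norm_eq_abs]
    exact abs_trunc_le_abs _ _
  have hsqbound : ∀ (k : ℕ) (y : ℝ), ‖trunc k y ^ 2‖ ≤ y ^ 2 := by
    intro k y
    rw [Real.norm_eq_abs, abs_of_nonneg (sq_nonneg _)]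
    calc trunc k y ^ 2 = |trunc k y| ^ 2 := (sq_abs _).symm
      _ ≤ |y| ^ 2 := pow_le_pow_left₀ (abs_nonneg _) (abs_trunc_le_abs _ _) 2
      _ = y ^ 2 := sq_abs _
  have hB3a : Tendsto (fun k : ℕ => ∫ ω, trunc k (f (X ω)) ^ 2 ∂P) atTop
      (𝓝 (∫ ω, f (X ω) ^ 2 ∂P)) := by
    refine tendsto_integral_of_dominated_convergence (fun ω => f (X ω) ^ 2)
      (fun k => ((hak_meas k).pow_const 2).aestronglyMeasurable)
      (hL2.integrable_sq) (fun k => Eventually.of_forall fun ω => hsqbound k _)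
      (Eventually.of_forall fun ω => (tendsto_trunc (f (X ω))).pow 2)
  have hB3b : Tendsto (fun k : ℕ => ∫ ω, trunc k (f (X' ω)) ^ 2 ∂P) atTop
      (𝓝 (∫ ω, f (X' ω) ^ 2 ∂P)) := by
    refine tendsto_integral_of_dominated_convergence (fun ω => f (X' ω) ^ 2)
      (fun k => ((hbk_meas k).pow_const 2).aestronglyMeasurable)
      (hL2'.integrable_sq) (fun k => Eventually.of_forall fun ω => hsqbound k _)
      (Eventually.of_forall fun ω => (tendsto_trunc (f (X' ω))).pow 2)
  -- convergence of the squared conditional expectations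
  have hc2 : MemLp (P[(fun ω => f (X ω))|𝓖]) 2 P := memℒp_two_condexp hm hL2
  have hck2 : ∀ k : ℕ, MemLp (P[(fun ω => trunc k (f (X ω)))|𝓖]) 2 P :=
    fun k => memℒp_two_condexp hm (hak2 k)
  have hsub : ∀ k : ℕ,
      ∫ ω, ((P[(fun ω' => trunc k (f (X ω')))|𝓖]) ω - (P[(fun ω' => f (X ω'))|𝓖]) ω) ^ 2 ∂P
        ≤ ∫ ω, (trunc k (f (X ω)) - f (X ω)) ^ 2 ∂P := by
    intro k
    have hce : P[(fun ω => trunc k (f (X ω)) - f (X ω))|𝓖]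
        =ᵐ[P] fun ω => (P[(fun ω' => trunc k (f (X ω')))|𝓖]) ω - (P[(fun ω' => f (X ω'))|𝓖]) ω :=
      condExp_sub ((hak2 k).integrable one_le_two) (hL2.integrable one_le_two) 𝓖
    calc ∫ ω, ((P[(fun ω' => trunc k (f (X ω')))|𝓖]) ω - (P[(fun ω' => f (X ω'))|𝓖]) ω) ^ 2 ∂P
        = ∫ ω, (P[(fun ω => trunc k (f (X ω)) - f (X ω))|𝓖]) ω ^ 2 ∂P := by
          refine integral_congr_ae (hce.mono fun ω hω => ?_)
          dsimp only
          rw [hω]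
      _ ≤ ∫ ω, (trunc k (f (X ω)) - f (X ω)) ^ 2 ∂P :=
          integral_sq_condexp_le hm ((hak2 k).sub hL2)
  have hadd : ∀ k : ℕ,
      ∫ ω, ((P[(fun ω' => trunc k (f (X ω')))|𝓖]) ω + (P[(fun ω' => f (X ω'))|𝓖]) ω) ^ 2 ∂P
        ≤ ∫ ω, (trunc k (f (X ω)) + f (X ω)) ^ 2 ∂P := by
    intro k
    have hce : P[(fun ω => trunc k (f (X ω)) + f (X ω))|𝓖]
        =ᵐ[P] fun ω => (P[(fun ω' => trunc k (f (X ω')))|𝓖]) ω + (P[(fun ω' => f (X ω'))|𝓖]) ω :=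
      condExp_add ((hak2 k).integrable one_le_two) (hL2.integrable one_le_two) 𝓖
    calc ∫ ω, ((P[(fun ω' => trunc k (f (X ω')))|𝓖]) ω + (P[(fun ω' => f (X ω'))|𝓖]) ω) ^ 2 ∂P
        = ∫ ω, (P[(fun ω => trunc k (f (X ω)) + f (X ω))|𝓖]) ω ^ 2 ∂P := by
          refine integral_congr_ae (hce.mono fun ω hω => ?_)
          dsimp only
          rw [hω]
      _ ≤ ∫ ω, (trunc k (f (X ω)) + f (X ω)) ^ 2 ∂P :=
          integral_sq_condexp_le hm ((hak2 k).add hL2)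
  have hadd4 : ∀ k : ℕ, ∫ ω, (trunc k (f (X ω)) + f (X ω)) ^ 2 ∂P
      ≤ 4 * ∫ ω, f (X ω) ^ 2 ∂P := by
    intro k
    rw [← integral_const_mul]
    refine integral_mono (((hak2 k).add hL2).integrable_sq) (hL2.integrable_sq.const_mul 4)
      fun ω => ?_
    have h1 : |trunc k (f (X ω)) + f (X ω)| ≤ 2 * |f (X ω)| := by
      have := abs_trunc_le_abs k (f (X ω))
      calc |trunc k (f (X ω)) + f (X ω)| ≤ |trunc k (f (X ω))| + |f (X ω)| := abs_add_le _ _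
        _ ≤ 2 * |f (X ω)| := by linarith
    calc (trunc k (f (X ω)) + f (X ω)) ^ 2 = |trunc k (f (X ω)) + f (X ω)| ^ 2 := (sq_abs _).symm
      _ ≤ (2 * |f (X ω)|) ^ 2 := pow_le_pow_left₀ (abs_nonneg _) h1 2
      _ = 4 * f (X ω) ^ 2 := by rw [mul_pow, sq_abs]; norm_num
  have hzero : Tendsto (fun k : ℕ => ∫ ω, (trunc k (f (X ω)) - f (X ω)) ^ 2 ∂P) atTop
      (𝓝 0) := by
    have h0 : (0 : ℝ) = ∫ (_ : Ω), (0 : ℝ) ∂P := by simp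
    rw [h0]
    refine tendsto_integral_of_dominated_convergence (fun ω => 4 * f (X ω) ^ 2)
      (fun k => ((hak_meas k).sub (hf.comp hX)).pow_const 2 |>.aestronglyMeasurable)
      (hL2.integrable_sq.const_mul 4) (fun k => Eventually.of_forall fun ω => ?_)
      (Eventually.of_forall fun ω => ?_)
    · rw [Real.norm_eq_abs, abs_of_nonneg (sq_nonneg _)]
      have h1 : |trunc k (f (X ω)) - f (X ω)| ≤ 2 * |f (X ω)| := by
        have := abs_trunc_le_abs k (f (X ω))
        calc |trunc k (f (X ω)) - f (X ω)| ≤ |trunc k (f (X ω))| + |f (X ω)| := abs_sub _ _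
          _ ≤ 2 * |f (X ω)| := by linarith
      calc (trunc k (f (X ω)) - f (X ω)) ^ 2 = |trunc k (f (X ω)) - f (X ω)| ^ 2 := (sq_abs _).symm
        _ ≤ (2 * |f (X ω)|) ^ 2 := pow_le_pow_left₀ (abs_nonneg _) h1 2
        _ = 4 * f (X ω) ^ 2 := by rw [mul_pow, sq_abs]; norm_num
    · have := ((tendsto_trunc (f (X ω))).sub (tendsto_const_nhds (x := f (X ω)))).pow 2
      simpa using this
  have hbnd : ∀ k : ℕ,
      |(∫ ω, (P[(fun ω' => trunc k (f (X ω')))|𝓖]) ω ^ 2 ∂P)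
        - ∫ ω, (P[(fun ω' => f (X ω'))|𝓖]) ω ^ 2 ∂P|
      ≤ Real.sqrt (∫ ω, (trunc k (f (X ω)) - f (X ω)) ^ 2 ∂P)
          * Real.sqrt (4 * ∫ ω, f (X ω) ^ 2 ∂P) := by
    intro k
    rw [← integral_sub ((hck2 k).integrable_sq) (hc2.integrable_sq)]
    have heq : ∫ ω, ((P[(fun ω' => trunc k (f (X ω')))|𝓖]) ω ^ 2
        - (P[(fun ω' => f (X ω'))|𝓖]) ω ^ 2) ∂P
        = ∫ ω, ((P[(fun ω' => trunc k (f (X ω')))|𝓖]) ω - (P[(fun ω' => f (X ω'))|𝓖]) ω)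
            * ((P[(fun ω' => trunc k (f (X ω')))|𝓖]) ω + (P[(fun ω' => f (X ω'))|𝓖]) ω) ∂P :=
      integral_congr_ae (Eventually.of_forall fun ω => by ring)
    rw [heq]
    refine (abs_integral_mul_le ((hck2 k).sub hc2) ((hck2 k).add hc2)).trans ?_
    exact mul_le_mul (Real.sqrt_le_sqrt (hsub k))
      (Real.sqrt_le_sqrt ((hadd k).trans (hadd4 k))) (Real.sqrt_nonneg _) (Real.sqrt_nonneg _)
  have htb : Tendsto (fun k : ℕ => Real.sqrt (∫ ω, (trunc k (f (X ω)) - f (X ω)) ^ 2 ∂P)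
      * Real.sqrt (4 * ∫ ω, f (X ω) ^ 2 ∂P)) atTop (𝓝 0) := by
    have h1 : Tendsto (fun k : ℕ => Real.sqrt (∫ ω, (trunc k (f (X ω)) - f (X ω)) ^ 2 ∂P))
        atTop (𝓝 0) := by
      have := (Real.continuous_sqrt.tendsto 0).comp hzero
      simpa [Function.comp_def] using this
    simpa using h1.mul_const (Real.sqrt (4 * ∫ ω, f (X ω) ^ 2 ∂P))
  have hB4 : Tendsto (fun k : ℕ => ∫ ω, (P[(fun ω' => trunc k (f (X ω')))|𝓖]) ω ^ 2 ∂P) atTop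
      (𝓝 (∫ ω, (P[(fun ω' => f (X ω'))|𝓖]) ω ^ 2 ∂P)) := by
    have hd : Tendsto (fun k : ℕ => (∫ ω, (P[(fun ω' => trunc k (f (X ω')))|𝓖]) ω ^ 2 ∂P)
        - ∫ ω, (P[(fun ω' => f (X ω'))|𝓖]) ω ^ 2 ∂P) atTop (𝓝 0) :=
      squeeze_zero_norm (fun k => by simpa [Real.norm_eq_abs] using hbnd k) htb
    have := hd.add_const (∫ ω, (P[(fun ω' => f (X ω'))|𝓖]) ω ^ 2 ∂P)
    simpa using this
  refine ⟨?_, ?_, ?_⟩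
  · exact tendsto_nhds_unique hB1 (hB4.congr fun k => (hA1 k).symm)
  · exact tendsto_nhds_unique hB2b (hB2a.congr fun k => (hA2 k).symm)
  · exact tendsto_nhds_unique hB3b (hB3a.congr fun k => (hA3 k).symm)


end EstimatorAux

open EstimatorAux


/-- `E[V₂] = σ_Y² - (σ² + σ_Y²)/(2N)` where `V₂ = N⁻¹ ∑ₙ f(Xₙ) f(X'ₙ) - ((μ̂ + μ̂')/2)²`. -/
theorem estimator_V2_bias
    {Ω E F : Type*} (𝓖 : MeasurableSpace Ω)
    [MeasurableSpace Ω] [MeasurableSpace E] [MeasurableSpace F]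
    (P : Measure Ω) [IsProbabilityMeasure P]
    (Y : Ω → E) (X X' : Ω → F) (f : F → ℝ)
    (hY : Measurable Y) (hX : Measurable X) (hX' : Measurable X') (hf : Measurable f)
    (hL2 : MemLp (fun ω => f (X ω)) 2 P) (hL2' : MemLp (fun ω => f (X' ω)) 2 P)
    (h𝓖 : 𝓖 = MeasurableSpace.comap Y inferInstance)
    -- conditional independence of `X` and `X'` given `𝓖 = σ(Y)`
    (hCondIndep : ∀ g h : F → ℝ, Measurable g → Measurable h →
      (∃ C, ∀ x, |g x| ≤ C) → (∃ C, ∀ x, |h x| ≤ C) →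
      P[(fun ω => g (X ω) * h (X' ω))|𝓖]
        =ᵐ[P] fun ω => ((P[(fun ω' => g (X ω'))|𝓖]) ω) * ((P[(fun ω' => h (X' ω'))|𝓖]) ω))
    -- `X` and `X'` have the same conditional distribution given `𝓖`
    (hSameCondDist : ∀ g : F → ℝ, Measurable g → (∃ C, ∀ x, |g x| ≤ C) →
      P[(fun ω => g (X ω))|𝓖] =ᵐ[P] P[(fun ω => g (X' ω))|𝓖])
    (μ σ2 σY2 : ℝ) (hμ : μ = ∫ ω, f (X ω) ∂P)
    (hσ2 : σ2 = variance (fun ω => f (X ω)) P)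
    (hσY2 : σY2 = variance (P[(fun ω => f (X ω))|𝓖]) P)
    (N : ℕ) (hN : 0 < N)
    -- i.i.d. sample triples `(Yₙ, Xₙ, X'ₙ)` with the same joint distribution as `(Y, X, X')`
    (Ys : Fin N → Ω → E) (Xs Xs' : Fin N → Ω → F)
    (hYs : ∀ n, Measurable (Ys n)) (hXs : ∀ n, Measurable (Xs n)) (hXs' : ∀ n, Measurable (Xs' n))
    (hIndep : iIndepFun (fun n ω => (Ys n ω, Xs n ω, Xs' n ω)) P)
    (hIdent : ∀ n, Measure.map (fun ω => (Ys n ω, Xs n ω, Xs' n ω)) P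
        = Measure.map (fun ω => (Y ω, X ω, X' ω)) P)
    (muHat muHat' : Ω → ℝ)
    (hmuHat : ∀ ω, muHat ω = (N : ℝ)⁻¹ * ∑ n, f (Xs n ω))
    (hmuHat' : ∀ ω, muHat' ω = (N : ℝ)⁻¹ * ∑ n, f (Xs' n ω))
    :
    ∫ ω, ((N : ℝ)⁻¹ * ∑ n, f (Xs n ω) * f (Xs' n ω) - ((muHat ω + muHat' ω) / 2) ^ 2) ∂P
      = σY2 - (σ2 + σY2) / (2 * (N : ℝ)) := by
  have hm : 𝓖 ≤ ‹MeasurableSpace Ω› := h𝓖.le.trans (measurable_iff_comap_le.mp hY)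
  haveI : SigmaFinite (P.trim hm) := inferInstance
  obtain ⟨K1, K2, K3⟩ := key_identities 𝓖 hm P X X' f hX hX' hf hL2 hL2' hCondIndep hSameCondDist
  have hc2 : MemLp (P[(fun ω => f (X ω))|𝓖]) 2 P := memℒp_two_condexp hm hL2
  have hIc : ∫ ω, (P[(fun ω => f (X ω))|𝓖]) ω ∂P = μ := by
    rw [integral_condExp hm]; exact hμ.symm
  have hvar : ∫ ω, f (X ω) ^ 2 ∂P = σ2 + μ ^ 2 := by
    have h := variance_eq_sub hL2
    have h2 : variance (fun ω => f (X ω)) P = ∫ ω, f (X ω) ^ 2 ∂P - (∫ ω, f (X ω) ∂P) ^ 2 := h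
    rw [hσ2, h2, ← hμ]; ring
  have hvarc : ∫ ω, (P[(fun ω => f (X ω))|𝓖]) ω ^ 2 ∂P = σY2 + μ ^ 2 := by
    have h2 : variance (P[(fun ω => f (X ω))|𝓖]) P
        = ∫ ω, (P[(fun ω => f (X ω))|𝓖]) ω ^ 2 ∂P
          - (∫ ω, (P[(fun ω => f (X ω))|𝓖]) ω ∂P) ^ 2 := variance_eq_sub hc2
    rw [hσY2, h2, hIc]; ring
  have hIab : ∫ ω, f (X ω) * f (X' ω) ∂P = σY2 + μ ^ 2 := K1.trans hvarc
  have hIb : ∫ ω, f (X' ω) ∂P = μ := K2.trans hμ.symm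
  have hIb2 : ∫ ω, f (X' ω) ^ 2 ∂P = σ2 + μ ^ 2 := K3.trans hvar
  -- transfer along identical distributions
  have hT : ∀ n, Measurable (fun ω => (Ys n ω, Xs n ω, Xs' n ω)) :=
    fun n => (hYs n).prodMk ((hXs n).prodMk (hXs' n))
  have hT0 : Measurable (fun ω => (Y ω, X ω, X' ω)) := hY.prodMk (hX.prodMk hX')
  have hmap : ∀ (n) (φ : E × F × F → ℝ), Measurable φ →
      ∫ ω, φ (Ys n ω, Xs n ω, Xs' n ω) ∂P = ∫ ω, φ (Y ω, X ω, X' ω) ∂P := by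
    intro n φ hφ
    rw [← integral_map (hT n).aemeasurable hφ.aestronglyMeasurable, hIdent n,
      integral_map hT0.aemeasurable hφ.aestronglyMeasurable]
  have hmem : ∀ (n) (φ : E × F × F → ℝ), Measurable φ →
      MemLp (fun ω => φ (Y ω, X ω, X' ω)) 2 P →
      MemLp (fun ω => φ (Ys n ω, Xs n ω, Xs' n ω)) 2 P := by
    intro n φ hφ h
    have h1 : MemLp φ 2 (Measure.map (fun ω => (Y ω, X ω, X' ω)) P) :=
      (memLp_map_measure_iff hφ.aestronglyMeasurable hT0.aemeasurable).2 h
    rw [← hIdent n] at h1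
    exact (memLp_map_measure_iff hφ.aestronglyMeasurable (hT n).aemeasurable).1 h1
  have hφA : Measurable (fun p : E × F × F => f p.2.1) :=
    hf.comp (measurable_fst.comp measurable_snd)
  have hφB : Measurable (fun p : E × F × F => f p.2.2) :=
    hf.comp (measurable_snd.comp measurable_snd)
  have hφAB : Measurable (fun p : E × F × F => f p.2.1 * f p.2.2) := hφA.mul hφB
  have hφS : Measurable (fun p : E × F × F => f p.2.1 + f p.2.2) := hφA.add hφB
  have hφS2 : Measurable (fun p : E × F × F => (f p.2.1 + f p.2.2) ^ 2) := hφS.pow_const 2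
  have hA2n : ∀ n, MemLp (fun ω => f (Xs n ω)) 2 P :=
    fun n => hmem n (fun p => f p.2.1) hφA hL2
  have hB2n : ∀ n, MemLp (fun ω => f (Xs' n ω)) 2 P :=
    fun n => hmem n (fun p => f p.2.2) hφB hL2'
  have hS2n : ∀ n, MemLp (fun ω => f (Xs n ω) + f (Xs' n ω)) 2 P :=
    fun n => (hA2n n).add (hB2n n)
  have hAB : ∀ n, ∫ ω, f (Xs n ω) * f (Xs' n ω) ∂P = σY2 + μ ^ 2 :=
    fun n => (hmap n (fun p => f p.2.1 * f p.2.2) hφAB).trans hIab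
  have hSn : ∀ n, ∫ ω, (f (Xs n ω) + f (Xs' n ω)) ∂P = 2 * μ := by
    intro n
    refine (hmap n (fun p => f p.2.1 + f p.2.2) hφS).trans ?_
    rw [integral_add (hL2.integrable one_le_two) (hL2'.integrable one_le_two), ← hμ, hIb]
    ring
  have hSq : ∀ n, ∫ ω, (f (Xs n ω) + f (Xs' n ω)) ^ 2 ∂P
      = 2 * (σ2 + μ ^ 2) + 2 * (σY2 + μ ^ 2) := by
    intro n
    refine (hmap n (fun p => (f p.2.1 + f p.2.2) ^ 2) hφS2).trans ?_
    have h1 : Integrable (fun ω => f (X ω) ^ 2) P := hL2.integrable_sq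
    have h2 : Integrable (fun ω => 2 * (f (X ω) * f (X' ω)) + f (X' ω) ^ 2) P :=
      ((integrable_mul2 hL2 hL2').const_mul 2).add hL2'.integrable_sq
    calc ∫ ω, (f (X ω) + f (X' ω)) ^ 2 ∂P
        = ∫ ω, (f (X ω) ^ 2 + (2 * (f (X ω) * f (X' ω)) + f (X' ω) ^ 2)) ∂P :=
          integral_congr_ae (Filter.Eventually.of_forall fun ω => by ring)
      _ = (∫ ω, f (X ω) ^ 2 ∂P)
          + ((∫ ω, 2 * (f (X ω) * f (X' ω)) ∂P) + ∫ ω, f (X' ω) ^ 2 ∂P) := by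
          rw [integral_add h1 h2,
            integral_add ((integrable_mul2 hL2 hL2').const_mul 2) hL2'.integrable_sq]
      _ = 2 * (σ2 + μ ^ 2) + 2 * (σY2 + μ ^ 2) := by
          rw [integral_const_mul, hIab, hvar, hIb2]; ring
  have hind : ∀ n m, n ≠ m →
      ∫ ω, (f (Xs n ω) + f (Xs' n ω)) * (f (Xs m ω) + f (Xs' m ω)) ∂P = (2 * μ) * (2 * μ) := by
    intro n m hnm
    have hIF : IndepFun (fun ω => f (Xs n ω) + f (Xs' n ω))
        (fun ω => f (Xs m ω) + f (Xs' m ω)) P :=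
      (hIndep.indepFun hnm).comp hφS hφS
    rw [IndepFun.integral_fun_mul_eq_mul_integral hIF ((hS2n n).aestronglyMeasurable) ((hS2n m).aestronglyMeasurable),
      hSn n, hSn m]
  -- expand the square of the sum
  have hsum2 : ∫ ω, (∑ n, (f (Xs n ω) + f (Xs' n ω))) ^ 2 ∂P
      = (N : ℝ) * ((N : ℝ) * ((2 * μ) * (2 * μ))
          + (2 * (σ2 + μ ^ 2) + 2 * (σY2 + μ ^ 2) - (2 * μ) * (2 * μ))) := by
    have hexp : ∀ ω : Ω, (∑ n, (f (Xs n ω) + f (Xs' n ω))) ^ 2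
        = ∑ n, ∑ m, (f (Xs n ω) + f (Xs' n ω)) * (f (Xs m ω) + f (Xs' m ω)) := by
      intro ω; rw [sq, Finset.sum_mul_sum]
    calc ∫ ω, (∑ n, (f (Xs n ω) + f (Xs' n ω))) ^ 2 ∂P
        = ∫ ω, ∑ n, ∑ m, (f (Xs n ω) + f (Xs' n ω)) * (f (Xs m ω) + f (Xs' m ω)) ∂P :=
          integral_congr_ae (Filter.Eventually.of_forall fun ω => hexp ω)
      _ = ∑ n, ∑ m, ∫ ω, (f (Xs n ω) + f (Xs' n ω)) * (f (Xs m ω) + f (Xs' m ω)) ∂P := by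
          rw [integral_finset_sum _ fun n _ =>
            integrable_finset_sum _ fun m _ => integrable_mul2 (hS2n n) (hS2n m)]
          exact Finset.sum_congr rfl fun n _ =>
            integral_finset_sum _ fun m _ => integrable_mul2 (hS2n n) (hS2n m)
      _ = ∑ n : Fin N, ((N : ℝ) * ((2 * μ) * (2 * μ))
            + (2 * (σ2 + μ ^ 2) + 2 * (σY2 + μ ^ 2) - (2 * μ) * (2 * μ))) := by
          refine Finset.sum_congr rfl fun n _ => ?_
          have hval : ∀ m : Fin N,
              ∫ ω, (f (Xs n ω) + f (Xs' n ω)) * (f (Xs m ω) + f (Xs' m ω)) ∂P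
              = (2 * μ) * (2 * μ) + (if m = n then
                  (2 * (σ2 + μ ^ 2) + 2 * (σY2 + μ ^ 2) - (2 * μ) * (2 * μ)) else 0) := by
            intro m
            by_cases hnm : m = n
            · subst hnm
              simp only [if_pos rfl]
              rw [show (∫ ω, (f (Xs m ω) + f (Xs' m ω)) * (f (Xs m ω) + f (Xs' m ω)) ∂P)
                  = ∫ ω, (f (Xs m ω) + f (Xs' m ω)) ^ 2 ∂P from
                  integral_congr_ae (Filter.Eventually.of_forall fun ω => (sq _).symm), hSq m]
              simp only [if_true]
              ring
            · rw [if_neg hnm, hind n m (fun h => hnm h.symm)]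
              ring
          rw [Finset.sum_congr rfl fun m _ => hval m, Finset.sum_add_distrib,
            Finset.sum_ite_eq' Finset.univ n
              (fun _ => 2 * (σ2 + μ ^ 2) + 2 * (σY2 + μ ^ 2) - (2 * μ) * (2 * μ)),
            if_pos (Finset.mem_univ n), Finset.sum_const, Finset.card_univ, Fintype.card_fin,
            nsmul_eq_mul]
      _ = (N : ℝ) * ((N : ℝ) * ((2 * μ) * (2 * μ))
            + (2 * (σ2 + μ ^ 2) + 2 * (σY2 + μ ^ 2) - (2 * μ) * (2 * μ))) := by
          rw [Finset.sum_const, Finset.card_univ, Fintype.card_fin, nsmul_eq_mul]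
  -- put the pieces together
  have hpt : ∀ ω, ((muHat ω + muHat' ω) / 2) ^ 2
      = ((N : ℝ)⁻¹ / 2) ^ 2 * (∑ n, (f (Xs n ω) + f (Xs' n ω))) ^ 2 := by
    intro ω
    rw [hmuHat ω, hmuHat' ω, Finset.sum_add_distrib]
    ring
  have hInt1 : Integrable (fun ω => (N : ℝ)⁻¹ * ∑ n, f (Xs n ω) * f (Xs' n ω)) P :=
    (integrable_finset_sum _ fun n _ => integrable_mul2 (hA2n n) (hB2n n)).const_mul _
  have hIntSum2 : Integrable (fun ω => (∑ n, (f (Xs n ω) + f (Xs' n ω))) ^ 2) P := by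
    have hms : MemLp (fun ω => ∑ n, (f (Xs n ω) + f (Xs' n ω))) 2 P := by
      have := memLp_finsetSum' (μ := P) (p := (2 : ℝ≥0∞)) Finset.univ
        (f := fun (n : Fin N) ω => f (Xs n ω) + f (Xs' n ω)) (fun n _ => hS2n n)
      refine this.ae_eq (Filter.Eventually.of_forall fun ω => ?_)
      simp [Finset.sum_apply]
    exact hms.integrable_sq
  have hInt2 : Integrable (fun ω => ((muHat ω + muHat' ω) / 2) ^ 2) P := by
    refine ((hIntSum2.const_mul (((N : ℝ)⁻¹ / 2) ^ 2)).congr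
      (Filter.Eventually.of_forall fun ω => ?_))
    exact (hpt ω).symm
  rw [integral_sub hInt1 hInt2]
  have hfirst : ∫ ω, (N : ℝ)⁻¹ * ∑ n, f (Xs n ω) * f (Xs' n ω) ∂P
      = (N : ℝ)⁻¹ * ((N : ℝ) * (σY2 + μ ^ 2)) := by
    rw [integral_const_mul, integral_finset_sum _ fun n _ => integrable_mul2 (hA2n n) (hB2n n),
      Finset.sum_congr rfl fun n _ => hAB n, Finset.sum_const, Finset.card_univ,
      Fintype.card_fin, nsmul_eq_mul]
  have hsecond : ∫ ω, ((muHat ω + muHat' ω) / 2) ^ 2 ∂P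
      = ((N : ℝ)⁻¹ / 2) ^ 2 * ((N : ℝ) * ((N : ℝ) * ((2 * μ) * (2 * μ))
          + (2 * (σ2 + μ ^ 2) + 2 * (σY2 + μ ^ 2) - (2 * μ) * (2 * μ)))) := by
    rw [integral_congr_ae (Filter.Eventually.of_forall fun ω => hpt ω), integral_const_mul, hsum2]
  rw [hfirst, hsecond]
  have hN0 : (N : ℝ) ≠ 0 := Nat.cast_ne_zero.mpr hN.ne'
  field_simp
  ring
end

section
/- The estimator V₃ = N⁻¹ ∑_{n=1}^N f(Xₙ) f(X'ₙ) − μ̂ μ̂' satisfies E[V₃] = σ_Y² − σ_Y²/N = (1 − 1/N) σ_Y². -/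
open MeasureTheory ProbabilityTheory

open Filter Topology ENNReal


noncomputable section

def tr (M : ℕ) (t : ℝ) : ℝ := max (-(M:ℝ)) (min (M:ℝ) t)

lemma tr_measurable (M : ℕ) : Measurable (tr M) :=
  measurable_const.max (measurable_const.min measurable_id)

lemma abs_tr_le_abs (M : ℕ) (t : ℝ) : |tr M t| ≤ |t| := by
  have hM : (0:ℝ) ≤ M := Nat.cast_nonneg M
  rw [abs_le]
  constructor
  · exact le_max_of_le_right (le_min (by linarith [abs_nonneg t]) (neg_abs_le t))
  · exact max_le (by linarith [abs_nonneg t]) ((min_le_right _ _).trans (le_abs_self t))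

lemma abs_tr_le (M : ℕ) (t : ℝ) : |tr M t| ≤ M := by
  have hM : (0:ℝ) ≤ M := Nat.cast_nonneg M
  rw [abs_le]
  exact ⟨le_max_left _ _, max_le (by linarith) (min_le_left _ _)⟩

lemma tr_eventually_eq (t : ℝ) : ∀ᶠ M : ℕ in atTop, tr M t = t := by
  filter_upwards [eventually_ge_atTop ⌈|t|⌉₊] with M hM
  have h : |t| ≤ (M:ℝ) := (Nat.le_ceil |t|).trans (Nat.cast_le.mpr hM)
  have h1 : t ≤ (M:ℝ) := (le_abs_self t).trans h
  have h2 : -(M:ℝ) ≤ t := by have := neg_abs_le t; linarith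
  simp [tr, min_eq_right h1, max_eq_right h2]

lemma tendsto_tr (t : ℝ) : Tendsto (fun M : ℕ => tr M t) atTop (𝓝 t) :=
  tendsto_const_nhds.congr' ((tr_eventually_eq t).mono fun _ h => h.symm)

lemma integrable_mul_L2 {Ω : Type*} [MeasurableSpace Ω] {P : Measure Ω} {u v : Ω → ℝ}
    (hu : MemLp u 2 P) (hv : MemLp v 2 P) : Integrable (fun ω => u ω * v ω) P :=
  memLp_one_iff_integrable.mp (hv.smul hu (hpqr := ⟨by norm_num [ENNReal.inv_two_add_inv_two]⟩))

lemma tendsto_eLpNorm_two_zero {Ω : Type*} [MeasurableSpace Ω] {P : Measure Ω}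
    {G : ℕ → Ω → ℝ} {g : Ω → ℝ}
    (hmeas : ∀ M, Measurable (G M)) (hg : Measurable g)
    (hgL2 : MemLp g 2 P)
    (hbd : ∀ M ω, |G M ω| ≤ |g ω|)
    (hlim : ∀ ω, Filter.Tendsto (fun M => G M ω) atTop (𝓝 (g ω))) :
    Filter.Tendsto (fun M => eLpNorm (fun ω => G M ω - g ω) 2 P) atTop (𝓝 0) := by
  suffices h : Filter.Tendsto
      (fun M => ∫⁻ ω, (‖G M ω - g ω‖₊ : ℝ≥0∞) ^ (2:ℝ) ∂P) atTop (𝓝 0) by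
    have h2 : ∀ M, eLpNorm (fun ω => G M ω - g ω) 2 P
        = (∫⁻ ω, (‖G M ω - g ω‖₊ : ℝ≥0∞) ^ (2:ℝ) ∂P) ^ (1/(2:ℝ)) := by
      intro M
      rw [eLpNorm_eq_lintegral_rpow_enorm_toReal two_ne_zero ENNReal.ofNat_ne_top]
      norm_num
      rfl
    simp_rw [h2]
    have h3 := ((ENNReal.continuous_rpow_const (y := 1/(2:ℝ))).tendsto 0).comp h
    simpa [ENNReal.zero_rpow_of_pos, Function.comp_def] using h3
  have h0 : (∫⁻ ω, (fun _ : Ω => (0:ℝ≥0∞)) ω ∂P) = 0 := by simp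
  rw [← h0]
  apply tendsto_lintegral_of_dominated_convergence (fun ω => ((2:ℝ≥0∞) * ‖g ω‖₊) ^ (2:ℝ))
  · intro M
    exact (((hmeas M).sub hg).nnnorm.coe_nnreal_ennreal).pow_const _
  · intro M
    refine Filter.Eventually.of_forall fun ω => ?_
    refine ENNReal.rpow_le_rpow ?_ (by norm_num)
    calc (‖G M ω - g ω‖₊ : ℝ≥0∞) ≤ (‖G M ω‖₊ : ℝ≥0∞) + ‖g ω‖₊ := by
          exact_mod_cast nnnorm_sub_le _ _
      _ ≤ (‖g ω‖₊ : ℝ≥0∞) + ‖g ω‖₊ := by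
          gcongr
          exact_mod_cast (by simpa [Real.norm_eq_abs] using hbd M ω : ‖G M ω‖ ≤ ‖g ω‖)
      _ = 2 * ‖g ω‖₊ := (two_mul _).symm
  · have hfin : (∫⁻ ω, (‖g ω‖₊ : ℝ≥0∞) ^ (2:ℝ) ∂P) < ⊤ := by
      have h := lintegral_rpow_enorm_lt_top_of_eLpNorm_lt_top two_ne_zero ENNReal.ofNat_ne_top hgL2.2
      simpa [enorm_eq_nnnorm] using h
    have hlt : (∫⁻ ω, ((2:ℝ≥0∞) * ‖g ω‖₊) ^ (2:ℝ) ∂P) < ⊤ := by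
      calc (∫⁻ ω, ((2:ℝ≥0∞) * ‖g ω‖₊) ^ (2:ℝ) ∂P)
          = ∫⁻ ω, (2:ℝ≥0∞)^(2:ℝ) * (‖g ω‖₊ : ℝ≥0∞) ^ (2:ℝ) ∂P := by
            congr 1; funext ω; rw [ENNReal.mul_rpow_of_nonneg _ _ (by norm_num)]
        _ = (2:ℝ≥0∞)^(2:ℝ) * ∫⁻ ω, (‖g ω‖₊ : ℝ≥0∞) ^ (2:ℝ) ∂P := lintegral_const_mul _
              ((hg.nnnorm.coe_nnreal_ennreal).pow_const _)
        _ < ⊤ := ENNReal.mul_lt_top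
              (ENNReal.rpow_lt_top_of_nonneg (by norm_num) (by norm_num)) hfin
    exact hlt.ne
  · refine Filter.Eventually.of_forall fun ω => ?_
    have h1 : Filter.Tendsto (fun M => G M ω - g ω) atTop (𝓝 (g ω - g ω)) :=
      (hlim ω).sub tendsto_const_nhds
    rw [sub_self] at h1
    have h2 := (ENNReal.continuous_coe.tendsto _).comp h1.nnnorm
    have h3 := ((ENNReal.continuous_rpow_const (y := (2:ℝ))).tendsto _).comp h2
    simpa [ENNReal.zero_rpow_of_pos, Function.comp_def] using h3

lemma condexp_ae_eq_condExpL2' {Ω : Type*} {𝓖 : MeasurableSpace Ω} [m0 : MeasurableSpace Ω]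
    (hle : 𝓖 ≤ m0) (P : Measure Ω) [IsProbabilityMeasure P] {h : Ω → ℝ} (hh : MemLp h 2 P) :
    P[h|𝓖] =ᵐ[P] (condExpL2 ℝ ℝ hle hh.toLp).1 := by
  haveI : SigmaFinite (P.trim hle) := inferInstance
  refine (ae_eq_condExp_of_forall_setIntegral_eq hle (hh.integrable one_le_two)
    (fun s hs hμs => ?_) (fun s hs hμs => ?_) ?_).symm
  · exact integrableOn_condExpL2_of_measure_ne_top hle hμs.ne _
  · rw [integral_condExpL2_eq hle hh.toLp hs hμs.ne]
    exact setIntegral_congr_ae (hle s hs) ((hh.coeFn_toLp).mono fun x hx _ => hx)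
  · exact aestronglyMeasurable_condExpL2 hle _

lemma key_identities {Ω F : Type*} {𝓖 : MeasurableSpace Ω} [m0 : MeasurableSpace Ω]
    [MeasurableSpace F] (hle : 𝓖 ≤ m0)
    (P : Measure Ω) [IsProbabilityMeasure P]
    (X X' : Ω → F) (f : F → ℝ)
    (hX : Measurable X) (hX' : Measurable X') (hf : Measurable f)
    (hL2 : MemLp (fun ω => f (X ω)) 2 P) (hL2' : MemLp (fun ω => f (X' ω)) 2 P)
    (hCondIndep : ∀ g h : F → ℝ, Measurable g → Measurable h →
      (∃ C, ∀ x, |g x| ≤ C) → (∃ C, ∀ x, |h x| ≤ C) →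
      P[(fun ω => g (X ω) * h (X' ω))|𝓖]
        =ᵐ[P] fun ω => ((P[(fun ω' => g (X ω'))|𝓖]) ω) * ((P[(fun ω' => h (X' ω'))|𝓖]) ω))
    (hSameCondDist : ∀ g : F → ℝ, Measurable g → (∃ C, ∀ x, |g x| ≤ C) →
      P[(fun ω => g (X ω))|𝓖] =ᵐ[P] P[(fun ω => g (X' ω))|𝓖]) :
    (∫ ω, f (X ω) * f (X' ω) ∂P
       = ∫ ω, ((P[(fun ω' => f (X ω'))|𝓖]) ω) * ((P[(fun ω' => f (X ω'))|𝓖]) ω) ∂P)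
    ∧ ∫ ω, f (X' ω) ∂P = ∫ ω, f (X ω) ∂P := by
  haveI : SigmaFinite (P.trim hle) := inferInstance
  have hFX : Measurable (fun ω => f (X ω)) := hf.comp hX
  have hFX' : Measurable (fun ω => f (X' ω)) := hf.comp hX'
  -- truncated functions
  set G : ℕ → Ω → ℝ := fun M ω => tr M (f (X ω)) with hG
  set G' : ℕ → Ω → ℝ := fun M ω => tr M (f (X' ω)) with hG'
  have hGmeas : ∀ M, Measurable (G M) := fun M => (tr_measurable M).comp hFX
  have hG'meas : ∀ M, Measurable (G' M) := fun M => (tr_measurable M).comp hFX'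
  have hGbd : ∀ M ω, |G M ω| ≤ |f (X ω)| := fun M ω => abs_tr_le_abs M _
  have hG'bd : ∀ M ω, |G' M ω| ≤ |f (X' ω)| := fun M ω => abs_tr_le_abs M _
  have hGlim : ∀ ω, Tendsto (fun M => G M ω) atTop (𝓝 (f (X ω))) := fun ω => tendsto_tr _
  have hG'lim : ∀ ω, Tendsto (fun M => G' M ω) atTop (𝓝 (f (X' ω))) := fun ω => tendsto_tr _
  have hGL2 : ∀ M, MemLp (G M) 2 P := fun M =>
    hL2.of_le (hGmeas M).aestronglyMeasurable
      (Eventually.of_forall fun ω => by simpa [Real.norm_eq_abs] using hGbd M ω)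
  have hG'L2 : ∀ M, MemLp (G' M) 2 P := fun M =>
    hL2'.of_le (hG'meas M).aestronglyMeasurable
      (Eventually.of_forall fun ω => by simpa [Real.norm_eq_abs] using hG'bd M ω)
  have hbdd : ∀ M : ℕ, ∃ C, ∀ x, |tr M (f x)| ≤ C := fun M => ⟨M, fun x => abs_tr_le M _⟩
  have htrmeas : ∀ M : ℕ, Measurable (fun x => tr M (f x)) := fun M => (tr_measurable M).comp hf
  -- Lp elements
  set u : Lp ℝ 2 P := hL2.toLp _ with hu
  set uM : ℕ → Lp ℝ 2 P := fun M => (hGL2 M).toLp _ with huM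
  -- convergence `uM → u` in L²
  have hnorm : ∀ M, ‖uM M - u‖ = (eLpNorm (fun ω => G M ω - f (X ω)) 2 P).toReal := by
    intro M
    rw [← MemLp.toLp_sub (hGL2 M) hL2, Lp.norm_toLp]
    rfl
  have huconv : Tendsto uM atTop (𝓝 u) := by
    rw [tendsto_iff_norm_sub_tendsto_zero]
    simp_rw [hnorm]
    have h0 := tendsto_eLpNorm_two_zero hGmeas hFX hL2 hGbd hGlim
    have := (ENNReal.tendsto_toReal (by simp)).comp h0
    simpa [Function.comp_def] using this
  -- conditional expectation Lp elements
  set v : Lp ℝ 2 P := (condExpL2 ℝ ℝ hle u).1 with hv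
  set vM : ℕ → Lp ℝ 2 P := fun M => (condExpL2 ℝ ℝ hle (uM M)).1 with hvM
  have hvconv : Tendsto vM atTop (𝓝 v) := by
    rw [tendsto_iff_norm_sub_tendsto_zero]
    have hb : ∀ M, ‖vM M - v‖ ≤ ‖uM M - u‖ := by
      intro M
      have h1 : vM M - v = ((condExpL2 ℝ ℝ hle (uM M) - condExpL2 ℝ ℝ hle u :
          lpMeas ℝ ℝ 𝓖 2 P)).1 := rfl
      rw [h1, ← map_sub (condExpL2 ℝ ℝ hle)]
      exact norm_condExpL2_le hle _
    have h2 : Tendsto (fun M => ‖uM M - u‖) atTop (𝓝 0) :=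
      tendsto_iff_norm_sub_tendsto_zero.mp huconv
    exact squeeze_zero (fun M => norm_nonneg _) hb h2
  -- identity at the bounded level
  have hkey : ∀ M : ℕ, ∫ ω, G M ω * G' M ω ∂P = @inner ℝ _ _ (vM M) (vM M) := by
    intro M
    have e1 : ∫ ω, G M ω * G' M ω ∂P = ∫ ω, (P[G M|𝓖]) ω * (P[G' M|𝓖]) ω ∂P := by
      rw [← integral_condExp hle (f := fun ω => G M ω * G' M ω)]
      exact integral_congr_ae
        (hCondIndep _ _ (htrmeas M) (htrmeas M) (hbdd M) (hbdd M))
    have e2 : ∫ ω, (P[G M|𝓖]) ω * (P[G' M|𝓖]) ω ∂P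
        = ∫ ω, (P[G M|𝓖]) ω * (P[G M|𝓖]) ω ∂P := by
      refine integral_congr_ae ?_
      filter_upwards [hSameCondDist _ (htrmeas M) (hbdd M)] with ω hω
      rw [← hω]
    have e3 : ∫ ω, (P[G M|𝓖]) ω * (P[G M|𝓖]) ω ∂P = @inner ℝ _ _ (vM M) (vM M) := by
      rw [L2.inner_def]
      refine (integral_congr_ae ?_).symm
      filter_upwards [condexp_ae_eq_condExpL2' hle P (hGL2 M)] with ω hω
      rw [RCLike.inner_apply, starRingEnd_apply, star_trivial, ← hω]
    rw [e1, e2, e3]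
  -- limits
  have hL1 : Tendsto (fun M => ∫ ω, G M ω * G' M ω ∂P) atTop
      (𝓝 (∫ ω, f (X ω) * f (X' ω) ∂P)) := by
    refine tendsto_integral_of_dominated_convergence
      (fun ω => |f (X ω)| * |f (X' ω)|)
      (fun M => ((hGmeas M).mul (hG'meas M)).aestronglyMeasurable) ?_ ?_ ?_
    · have : Integrable (fun ω => f (X ω) * f (X' ω)) P := integrable_mul_L2 hL2 hL2'
      have h := this.abs
      refine h.congr (Eventually.of_forall fun ω => ?_)
      simp [abs_mul]
    · intro M
      refine Eventually.of_forall fun ω => ?_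
      rw [Real.norm_eq_abs, abs_mul]
      exact mul_le_mul (hGbd M ω) (hG'bd M ω) (abs_nonneg _) (abs_nonneg _)
    · exact Eventually.of_forall fun ω => (hGlim ω).mul (hG'lim ω)
  have hL2t : Tendsto (fun M => @inner ℝ _ _ (vM M) (vM M)) atTop
      (𝓝 (@inner ℝ _ _ v v)) := hvconv.inner hvconv
  have hmain : ∫ ω, f (X ω) * f (X' ω) ∂P = @inner ℝ _ _ v v := by
    refine tendsto_nhds_unique hL1 ?_
    simpa only [hkey] using hL2t
  constructor
  · rw [hmain, L2.inner_def]
    refine integral_congr_ae ?_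
    filter_upwards [condexp_ae_eq_condExpL2' hle P hL2] with ω hω
    rw [RCLike.inner_apply, starRingEnd_apply, star_trivial, ← hω]
  · -- equality of means
    have hJ : ∀ M : ℕ, ∫ ω, G' M ω ∂P = ∫ ω, G M ω ∂P := by
      intro M
      calc ∫ ω, G' M ω ∂P = ∫ ω, (P[G' M|𝓖]) ω ∂P := (integral_condExp hle).symm
        _ = ∫ ω, (P[G M|𝓖]) ω ∂P :=
            (integral_congr_ae (hSameCondDist _ (htrmeas M) (hbdd M))).symm
        _ = ∫ ω, G M ω ∂P := integral_condExp hle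
    have t1 : Tendsto (fun M => ∫ ω, G' M ω ∂P) atTop (𝓝 (∫ ω, f (X' ω) ∂P)) := by
      refine tendsto_integral_of_dominated_convergence (fun ω => |f (X' ω)|)
        (fun M => (hG'meas M).aestronglyMeasurable) (hL2'.integrable one_le_two).abs ?_ ?_
      · intro M; exact Eventually.of_forall fun ω => by
          simpa [Real.norm_eq_abs] using hG'bd M ω
      · exact Eventually.of_forall fun ω => hG'lim ω
    have t2 : Tendsto (fun M => ∫ ω, G M ω ∂P) atTop (𝓝 (∫ ω, f (X ω) ∂P)) := by
      refine tendsto_integral_of_dominated_convergence (fun ω => |f (X ω)|)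
        (fun M => (hGmeas M).aestronglyMeasurable) (hL2.integrable one_le_two).abs ?_ ?_
      · intro M; exact Eventually.of_forall fun ω => by
          simpa [Real.norm_eq_abs] using hGbd M ω
      · exact Eventually.of_forall fun ω => hGlim ω
    refine tendsto_nhds_unique ?_ t2
    simpa only [hJ] using t1

end

/-- `E[V₃] = σ_Y² - σ_Y²/N = (1 - 1/N) σ_Y²` where `V₃ = N⁻¹ ∑ₙ f(Xₙ) f(X'ₙ) - μ̂ μ̂'`. -/
theorem estimator_V3_bias
    {Ω E F : Type*} (𝓖 : MeasurableSpace Ω)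
    [MeasurableSpace Ω] [MeasurableSpace E] [MeasurableSpace F]
    (P : Measure Ω) [IsProbabilityMeasure P]
    (Y : Ω → E) (X X' : Ω → F) (f : F → ℝ)
    (hY : Measurable Y) (hX : Measurable X) (hX' : Measurable X') (hf : Measurable f)
    (hL2 : MemLp (fun ω => f (X ω)) 2 P) (hL2' : MemLp (fun ω => f (X' ω)) 2 P)
    (h𝓖 : 𝓖 = MeasurableSpace.comap Y inferInstance)
    -- conditional independence of `X` and `X'` given `𝓖 = σ(Y)`
    (hCondIndep : ∀ g h : F → ℝ, Measurable g → Measurable h →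
      (∃ C, ∀ x, |g x| ≤ C) → (∃ C, ∀ x, |h x| ≤ C) →
      P[(fun ω => g (X ω) * h (X' ω))|𝓖]
        =ᵐ[P] fun ω => ((P[(fun ω' => g (X ω'))|𝓖]) ω) * ((P[(fun ω' => h (X' ω'))|𝓖]) ω))
    -- `X` and `X'` have the same conditional distribution given `𝓖`
    (hSameCondDist : ∀ g : F → ℝ, Measurable g → (∃ C, ∀ x, |g x| ≤ C) →
      P[(fun ω => g (X ω))|𝓖] =ᵐ[P] P[(fun ω => g (X' ω))|𝓖])
    (μ σ2 σY2 : ℝ) (hμ : μ = ∫ ω, f (X ω) ∂P)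
    (hσ2 : σ2 = variance (fun ω => f (X ω)) P)
    (hσY2 : σY2 = variance (P[(fun ω => f (X ω))|𝓖]) P)
    (N : ℕ) (hN : 0 < N)
    -- i.i.d. sample triples `(Yₙ, Xₙ, X'ₙ)` with the same joint distribution as `(Y, X, X')`
    (Ys : Fin N → Ω → E) (Xs Xs' : Fin N → Ω → F)
    (hYs : ∀ n, Measurable (Ys n)) (hXs : ∀ n, Measurable (Xs n)) (hXs' : ∀ n, Measurable (Xs' n))
    (hIndep : iIndepFun (fun n ω => (Ys n ω, Xs n ω, Xs' n ω)) P)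
    (hIdent : ∀ n, Measure.map (fun ω => (Ys n ω, Xs n ω, Xs' n ω)) P
        = Measure.map (fun ω => (Y ω, X ω, X' ω)) P)
    (muHat muHat' : Ω → ℝ)
    (hmuHat : ∀ ω, muHat ω = (N : ℝ)⁻¹ * ∑ n, f (Xs n ω))
    (hmuHat' : ∀ ω, muHat' ω = (N : ℝ)⁻¹ * ∑ n, f (Xs' n ω))
    :
    ∫ ω, ((N : ℝ)⁻¹ * ∑ n, f (Xs n ω) * f (Xs' n ω) - muHat ω * muHat' ω) ∂P = σY2 - σY2 / (N : ℝ) ∧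
    ∫ ω, ((N : ℝ)⁻¹ * ∑ n, f (Xs n ω) * f (Xs' n ω) - muHat ω * muHat' ω) ∂P = (1 - 1 / (N : ℝ)) * σY2 := by
  
  have hle : 𝓖 ≤ ‹MeasurableSpace Ω› := by
    rw [h𝓖]; exact measurable_iff_comap_le.mp hY
  haveI : SigmaFinite (P.trim hle) := inferInstance
  have key := key_identities hle P X X' f hX hX' hf hL2 hL2' hCondIndep hSameCondDist
  set A : ℝ := ∫ ω, f (X ω) * f (X' ω) ∂P with hA
  set g : Ω → ℝ := P[(fun ω => f (X ω))|𝓖] with hg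
  have hgL2 : MemLp g 2 P :=
    (Lp.memLp _).ae_eq (condexp_ae_eq_condExpL2' hle P hL2).symm
  have hgint : ∫ ω, g ω ∂P = μ := by rw [hg, integral_condExp hle, ← hμ]
  have hvar : σY2 = A - μ * μ := by
    rw [hσY2, variance_eq_sub hgL2]
    have h1 : ∫ ω, (g ^ 2) ω ∂P = ∫ ω, g ω * g ω ∂P := by
      refine integral_congr_ae (Eventually.of_forall fun ω => ?_)
      simp [pow_two]
    rw [h1, ← key.1, hgint]
    ring
  -- transfer to samples
  have hT : Measurable (fun ω => (Y ω, X ω, X' ω)) := hY.prodMk (hX.prodMk hX')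
  have hTn : ∀ n, Measurable (fun ω => (Ys n ω, Xs n ω, Xs' n ω)) :=
    fun n => (hYs n).prodMk ((hXs n).prodMk (hXs' n))
  have hφ1 : Measurable (fun p : E × F × F => f p.2.1) :=
    hf.comp (measurable_fst.comp measurable_snd)
  have hφ2 : Measurable (fun p : E × F × F => f p.2.2) :=
    hf.comp (measurable_snd.comp measurable_snd)
  have htrans : ∀ (n : Fin N) (ψ : E × F × F → ℝ), Measurable ψ →
      ∫ ω, ψ (Ys n ω, Xs n ω, Xs' n ω) ∂P = ∫ ω, ψ (Y ω, X ω, X' ω) ∂P := by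
    intro n ψ hψ
    rw [← integral_map (hTn n).aemeasurable hψ.aestronglyMeasurable, hIdent n,
      integral_map hT.aemeasurable hψ.aestronglyMeasurable]
  have e1 : ∀ n, ∫ ω, f (Xs n ω) ∂P = μ := by
    intro n; rw [hμ]; exact htrans n (fun p => f p.2.1) hφ1
  have e1' : ∀ n, ∫ ω, f (Xs' n ω) ∂P = μ := by
    intro n
    have h := htrans n (fun p => f p.2.2) hφ2
    rw [hμ, ← key.2]; exact h
  have e2 : ∀ n, ∫ ω, f (Xs n ω) * f (Xs' n ω) ∂P = A := by
    intro n; exact htrans n (fun p => f p.2.1 * f p.2.2) (hφ1.mul hφ2)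
  have hmem : ∀ n, MemLp (fun ω => f (Xs n ω)) 2 P := by
    intro n
    have h1 : MemLp (fun p : E × F × F => f p.2.1) 2 (Measure.map (fun ω => (Y ω, X ω, X' ω)) P) :=
      (memLp_map_measure_iff hφ1.aestronglyMeasurable hT.aemeasurable).mpr hL2
    rw [← hIdent n] at h1
    exact (memLp_map_measure_iff hφ1.aestronglyMeasurable (hTn n).aemeasurable).mp h1
  have hmem' : ∀ n, MemLp (fun ω => f (Xs' n ω)) 2 P := by
    intro n
    have h1 : MemLp (fun p : E × F × F => f p.2.2) 2 (Measure.map (fun ω => (Y ω, X ω, X' ω)) P) :=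
      (memLp_map_measure_iff hφ2.aestronglyMeasurable hT.aemeasurable).mpr hL2'
    rw [← hIdent n] at h1
    exact (memLp_map_measure_iff hφ2.aestronglyMeasurable (hTn n).aemeasurable).mp h1
  have cross : ∀ n m : Fin N, n ≠ m → ∫ ω, f (Xs n ω) * f (Xs' m ω) ∂P = μ * μ := by
    intro n m hnm
    have hind := (hIndep.indepFun hnm).comp hφ1 hφ2
    have h := hind.integral_mul_eq_mul_integral (hmem n).1
      (hmem' m).1
    have h2 : ∫ ω, f (Xs n ω) * f (Xs' m ω) ∂P
        = (∫ ω, f (Xs n ω) ∂P) * ∫ ω, f (Xs' m ω) ∂P := h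
    rw [h2, e1 n, e1' m]
  -- expansion of the product of sums
  have hfun : ∀ ω, muHat ω * muHat' ω
      = ∑ n : Fin N, ∑ m : Fin N, ((N:ℝ)⁻¹ * (N:ℝ)⁻¹) * (f (Xs n ω) * f (Xs' m ω)) := by
    intro ω
    rw [hmuHat ω, hmuHat' ω, mul_mul_mul_comm, Finset.sum_mul_sum]
    rw [Finset.mul_sum]
    refine Finset.sum_congr rfl fun n _ => ?_
    rw [Finset.mul_sum]
  have i1 : Integrable (fun ω => (N:ℝ)⁻¹ * ∑ n, f (Xs n ω) * f (Xs' n ω)) P :=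
    (integrable_finset_sum _ fun n _ => integrable_mul_L2 (hmem n) (hmem' n)).const_mul _
  have i2base : Integrable (fun ω =>
      ∑ n : Fin N, ∑ m : Fin N, ((N:ℝ)⁻¹ * (N:ℝ)⁻¹) * (f (Xs n ω) * f (Xs' m ω))) P :=
    integrable_finset_sum _ fun n _ => integrable_finset_sum _ fun m _ =>
      (integrable_mul_L2 (hmem n) (hmem' m)).const_mul _
  have i2 : Integrable (fun ω => muHat ω * muHat' ω) P :=
    i2base.congr (Eventually.of_forall fun ω => (hfun ω).symm)
  have int1 : ∫ ω, (N:ℝ)⁻¹ * ∑ n, f (Xs n ω) * f (Xs' n ω) ∂P = A := by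
    rw [integral_const_mul, integral_finset_sum _
      (fun n _ => integrable_mul_L2 (hmem n) (hmem' n))]
    have : ∀ n : Fin N, n ∈ Finset.univ → ∫ ω, f (Xs n ω) * f (Xs' n ω) ∂P = A :=
      fun n _ => e2 n
    rw [Finset.sum_congr rfl this, Finset.sum_const, Finset.card_univ, Fintype.card_fin]
    have hNne : (N:ℝ) ≠ 0 := Nat.cast_ne_zero.mpr hN.ne'
    field_simp
    exact nsmul_eq_mul _ _
  have int2 : ∫ ω, muHat ω * muHat' ω ∂P
      = ((N:ℝ)⁻¹ * (N:ℝ)⁻¹) * ((N:ℝ) * A + ((N:ℝ) * ((N:ℝ) - 1)) * (μ * μ)) := by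
    have hrw : ∫ ω, muHat ω * muHat' ω ∂P
        = ∑ n : Fin N, ∑ m : Fin N, ((N:ℝ)⁻¹ * (N:ℝ)⁻¹) * ∫ ω, f (Xs n ω) * f (Xs' m ω) ∂P := by
      rw [integral_congr_ae (Eventually.of_forall hfun)]
      rw [integral_finset_sum _ (fun n _ => integrable_finset_sum _ fun m (_ : m ∈ Finset.univ) =>
        ((integrable_mul_L2 (hmem n) (hmem' m)).const_mul ((N:ℝ)⁻¹ * (N:ℝ)⁻¹)))]
      refine Finset.sum_congr rfl fun n _ => ?_
      rw [integral_finset_sum _ (fun m _ => (integrable_mul_L2 (hmem n) (hmem' m)).const_mul _)]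
      exact Finset.sum_congr rfl fun m _ => integral_const_mul _ _
    rw [hrw]
    have hinner : ∀ n : Fin N,
        ∑ m : Fin N, ((N:ℝ)⁻¹ * (N:ℝ)⁻¹) * ∫ ω, f (Xs n ω) * f (Xs' m ω) ∂P
        = ((N:ℝ)⁻¹ * (N:ℝ)⁻¹) * (A + ((N:ℝ) - 1) * (μ * μ)) := by
      intro n
      rw [← Finset.add_sum_erase _ _ (Finset.mem_univ n)]
      have hconst : ∀ m ∈ Finset.univ.erase n,
          ((N:ℝ)⁻¹ * (N:ℝ)⁻¹) * ∫ ω, f (Xs n ω) * f (Xs' m ω) ∂P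
          = ((N:ℝ)⁻¹ * (N:ℝ)⁻¹) * (μ * μ) := by
        intro m hm
        rw [cross n m (Finset.ne_of_mem_erase hm).symm]
      rw [Finset.sum_congr rfl hconst, Finset.sum_const, Finset.card_erase_of_mem
        (Finset.mem_univ n), Finset.card_univ, Fintype.card_fin, e2 n]
      have : ((N - 1 : ℕ) : ℝ) = (N:ℝ) - 1 := by
        push_cast [Nat.cast_sub hN]
        ring
      rw [nsmul_eq_mul, this]
      ring
    rw [Finset.sum_congr rfl fun n _ => hinner n, Finset.sum_const, Finset.card_univ,
      Fintype.card_fin, nsmul_eq_mul]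
    ring
  have hNne : (N:ℝ) ≠ 0 := Nat.cast_ne_zero.mpr hN.ne'
  have hexp : ∫ ω, ((N : ℝ)⁻¹ * ∑ n, f (Xs n ω) * f (Xs' n ω) - muHat ω * muHat' ω) ∂P
      = (1 - 1 / (N : ℝ)) * σY2 := by
    rw [integral_sub i1 i2, int1, int2, hvar]
    field_simp
    ring
  exact ⟨by rw [hexp]; ring, hexp⟩
end

section
/- For N ≥ 2, the estimator Ṽ₁ = V₁ + s²/N, where V₁ = N⁻¹ ∑_{n=1}^N f(Xₙ) f(X'ₙ) − μ̂², is unbiased: E[Ṽ₁] = σ_Y². -/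
open MeasureTheory ProbabilityTheory Filter

section Aux

variable {Ω : Type*} {m : MeasurableSpace Ω} [m0 : MeasurableSpace Ω] {P : Measure Ω}

lemma aux_integrable_mul {a b : Ω → ℝ} (ha : MemLp a 2 P) (hb : MemLp b 2 P) :
    Integrable (fun ω => a ω * b ω) P := by
  have h1 := (ha.add hb).integrable_sq
  have h := ((h1.sub ha.integrable_sq).sub hb.integrable_sq).div_const 2
  refine h.congr (Filter.Eventually.of_forall fun ω => ?_)
  simp only [Pi.sub_apply, Pi.add_apply]
  ring

lemma aux_condexp_ae_eq_condExpL2 (hm : m ≤ m0)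
    [IsProbabilityMeasure P] {W : Ω → ℝ} (hW : MemLp W 2 P) :
    (condExpL2 ℝ ℝ hm (hW.toLp W) : Ω → ℝ) =ᵐ[P] P[W|m] := by
  refine ae_eq_condExp_of_forall_setIntegral_eq hm (hW.integrable one_le_two)
    (fun s hs hμs => ?_) (fun s hs hμs => ?_) ?_
  · exact integrableOn_condExpL2_of_measure_ne_top hm hμs.ne _
  · rw [integral_condExpL2_eq hm (hW.toLp W) hs hμs.ne]
    exact setIntegral_congr_ae (hm s hs) ((hW.coeFn_toLp).mono fun x hx _ => hx)
  · exact aestronglyMeasurable_condExpL2 hm _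

lemma aux_memLp2_condexp (hm : m ≤ m0) [IsProbabilityMeasure P]
    {W : Ω → ℝ} (hW : MemLp W 2 P) : MemLp (P[W|m]) 2 P :=
  (Lp.memLp ((condExpL2 ℝ ℝ hm (hW.toLp W) : lpMeas ℝ ℝ m 2 P) : Lp ℝ 2 P)).ae_eq
    (aux_condexp_ae_eq_condExpL2 hm hW)

lemma aux_cauchy_schwarz [IsProbabilityMeasure P] {a b : Ω → ℝ}
    (ha : MemLp a 2 P) (hb : MemLp b 2 P) :
    |∫ ω, a ω * b ω ∂P| ≤ Real.sqrt (∫ ω, a ω ^ 2 ∂P) * Real.sqrt (∫ ω, b ω ^ 2 ∂P) := by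
  have hpq : Real.HolderConjugate 2 2 := ⟨by norm_num, by norm_num, by norm_num⟩
  have ha2 : MemLp a (ENNReal.ofReal 2) P := by
    simpa [ENNReal.ofReal_ofNat] using ha
  have hb2 : MemLp b (ENNReal.ofReal 2) P := by
    simpa [ENNReal.ofReal_ofNat] using hb
  have h := integral_mul_norm_le_Lp_mul_Lq hpq ha2 hb2
  have e : ∀ u : Ω → ℝ, (∫ ω, ‖u ω‖ ^ (2:ℝ) ∂P) ^ (1/(2:ℝ)) = Real.sqrt (∫ ω, u ω ^ 2 ∂P) := by
    intro u
    rw [Real.sqrt_eq_rpow]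
    congr 1
    refine integral_congr_ae (Filter.Eventually.of_forall fun ω => ?_)
    show ‖u ω‖ ^ (2:ℝ) = u ω ^ 2
    rw [Real.norm_eq_abs, Real.rpow_two, sq_abs]
  rw [e, e] at h
  refine le_trans ?_ h
  calc |∫ ω, a ω * b ω ∂P| = ‖∫ ω, a ω * b ω ∂P‖ := (Real.norm_eq_abs _).symm
    _ ≤ ∫ ω, ‖a ω * b ω‖ ∂P := norm_integral_le_integral_norm _
    _ = ∫ ω, ‖a ω‖ * ‖b ω‖ ∂P := by
        refine integral_congr_ae (Filter.Eventually.of_forall fun ω => ?_)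
        show ‖a ω * b ω‖ = ‖a ω‖ * ‖b ω‖
        rw [norm_mul]

lemma aux_condexp_sq_le (hm : m ≤ m0) [IsProbabilityMeasure P]
    {D : Ω → ℝ} (hD : MemLp D 2 P) :
    ∫ ω, ((P[D|m]) ω) ^ 2 ∂P ≤ ∫ ω, D ω ^ 2 ∂P := by
  have hC : MemLp (P[D|m]) 2 P := aux_memLp2_condexp hm hD
  have hDi : Integrable D P := hD.integrable one_le_two
  have hCD : Integrable (P[D|m] * D) P := aux_integrable_mul hC hD
  have hproj : ∫ ω, (P[D|m]) ω * D ω ∂P = ∫ ω, ((P[D|m]) ω)^2 ∂P := by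
    have hmul := condExp_mul_of_stronglyMeasurable_left (μ := P) (m := m)
      (stronglyMeasurable_condExp (f := D)) hCD hDi
    calc ∫ ω, (P[D|m]) ω * D ω ∂P = ∫ ω, (P[D|m] * D) ω ∂P := rfl
      _ = ∫ ω, (P[(P[D|m] * D)|m]) ω ∂P := (integral_condExp hm).symm
      _ = ∫ ω, ((P[D|m]) * (P[D|m])) ω ∂P := integral_congr_ae hmul
      _ = ∫ ω, ((P[D|m]) ω)^2 ∂P := by
          refine integral_congr_ae (Filter.Eventually.of_forall fun ω => ?_)
          simp [Pi.mul_apply, sq]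
  have hcs := aux_cauchy_schwarz hC hD
  set x := Real.sqrt (∫ ω, ((P[D|m]) ω)^2 ∂P) with hxdef
  set y := Real.sqrt (∫ ω, D ω^2 ∂P) with hydef
  have hx : ∫ ω, ((P[D|m]) ω)^2 ∂P = x^2 :=
    (Real.sq_sqrt (integral_nonneg fun ω => sq_nonneg _)).symm
  have hy : ∫ ω, D ω^2 ∂P = y^2 :=
    (Real.sq_sqrt (integral_nonneg fun ω => sq_nonneg _)).symm
  have hxy : x^2 ≤ x*y := by
    rw [← hx, ← hproj]
    exact (le_abs_self _).trans hcs
  rw [hx, hy]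
  nlinarith [hxy, Real.sqrt_nonneg (∫ ω, ((P[D|m]) ω)^2 ∂P), Real.sqrt_nonneg (∫ ω, D ω^2 ∂P),
    sq_nonneg (x - y)]

end Aux

set_option maxHeartbeats 2000000 in
/-- `Ṽ₁ = V₁ + s²/N` is unbiased: `E[Ṽ₁] = σ_Y²`. -/
theorem corrected_estimator_V1_unbiased
    {Ω E F : Type*} (𝓖 : MeasurableSpace Ω)
    [MeasurableSpace Ω] [MeasurableSpace E] [MeasurableSpace F]
    (P : Measure Ω) [IsProbabilityMeasure P]
    (Y : Ω → E) (X X' : Ω → F) (f : F → ℝ)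
    (hY : Measurable Y) (hX : Measurable X) (hX' : Measurable X') (hf : Measurable f)
    (hL2 : MemLp (fun ω => f (X ω)) 2 P) (hL2' : MemLp (fun ω => f (X' ω)) 2 P)
    (h𝓖 : 𝓖 = MeasurableSpace.comap Y inferInstance)
    -- conditional independence of `X` and `X'` given `𝓖 = σ(Y)`
    (hCondIndep : ∀ g h : F → ℝ, Measurable g → Measurable h →
      (∃ C, ∀ x, |g x| ≤ C) → (∃ C, ∀ x, |h x| ≤ C) →
      P[(fun ω => g (X ω) * h (X' ω))|𝓖]
        =ᵐ[P] fun ω => ((P[(fun ω' => g (X ω'))|𝓖]) ω) * ((P[(fun ω' => h (X' ω'))|𝓖]) ω))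
    -- `X` and `X'` have the same conditional distribution given `𝓖`
    (hSameCondDist : ∀ g : F → ℝ, Measurable g → (∃ C, ∀ x, |g x| ≤ C) →
      P[(fun ω => g (X ω))|𝓖] =ᵐ[P] P[(fun ω => g (X' ω))|𝓖])
    (μ σ2 σY2 : ℝ) (hμ : μ = ∫ ω, f (X ω) ∂P)
    (hσ2 : σ2 = variance (fun ω => f (X ω)) P)
    (hσY2 : σY2 = variance (P[(fun ω => f (X ω))|𝓖]) P)
    (N : ℕ) (hN : 2 ≤ N)
    -- i.i.d. sample triples `(Yₙ, Xₙ, X'ₙ)` with the same joint distribution as `(Y, X, X')`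
    (Ys : Fin N → Ω → E) (Xs Xs' : Fin N → Ω → F)
    (hYs : ∀ n, Measurable (Ys n)) (hXs : ∀ n, Measurable (Xs n)) (hXs' : ∀ n, Measurable (Xs' n))
    (hIndep : iIndepFun (fun n ω => (Ys n ω, Xs n ω, Xs' n ω)) P)
    (hIdent : ∀ n, Measure.map (fun ω => (Ys n ω, Xs n ω, Xs' n ω)) P
        = Measure.map (fun ω => (Y ω, X ω, X' ω)) P)
    (muHat muHat' : Ω → ℝ)
    (hmuHat : ∀ ω, muHat ω = (N : ℝ)⁻¹ * ∑ n, f (Xs n ω))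
    (hmuHat' : ∀ ω, muHat' ω = (N : ℝ)⁻¹ * ∑ n, f (Xs' n ω))
    (s2 s2' : Ω → ℝ)
    (hs2 : ∀ ω, s2 ω = ((N : ℝ) - 1)⁻¹ * ∑ n, (f (Xs n ω) - muHat ω) ^ 2)
    (hs2' : ∀ ω, s2' ω = ((N : ℝ) - 1)⁻¹ * ∑ n, (f (Xs' n ω) - muHat' ω) ^ 2)
    :
    ∫ ω, (((N : ℝ)⁻¹ * ∑ n, f (Xs n ω) * f (Xs' n ω) - muHat ω ^ 2) + s2 ω / (N : ℝ)) ∂P = σY2 := by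
  classical
  have hm : 𝓖 ≤ ‹MeasurableSpace Ω› := by rw [h𝓖]; exact hY.comap_le
  have hN0 : (N:ℝ) ≠ 0 := Nat.cast_ne_zero.mpr (by omega)
  have hN2 : (2:ℝ) ≤ (N:ℝ) := by exact_mod_cast hN
  have hN1 : (N:ℝ) - 1 ≠ 0 := by linarith
  -- measurability of the triple maps
  have hφmeas : ∀ n : Fin N, Measurable (fun ω => (Ys n ω, Xs n ω, Xs' n ω)) :=
    fun n => (hYs n).prodMk ((hXs n).prodMk (hXs' n))
  have hφ0 : Measurable (fun ω => (Y ω, X ω, X' ω)) := hY.prodMk (hX.prodMk hX')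
  have hπ1 : Measurable (fun p : E × F × F => f p.2.1) :=
    hf.comp (measurable_fst.comp measurable_snd)
  have hπ2 : Measurable (fun p : E × F × F => f p.2.2) :=
    hf.comp (measurable_snd.comp measurable_snd)
  -- transfer of integrals along identical distributions
  have hTrans : ∀ (n : Fin N) (g : E × F × F → ℝ), Measurable g →
      ∫ ω, g (Ys n ω, Xs n ω, Xs' n ω) ∂P = ∫ ω, g (Y ω, X ω, X' ω) ∂P := by
    intro n g hg
    have h1 : ∫ ω, g (Ys n ω, Xs n ω, Xs' n ω) ∂P
        = ∫ p, g p ∂(Measure.map (fun ω => (Ys n ω, Xs n ω, Xs' n ω)) P) :=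
      (integral_map (hφmeas n).aemeasurable hg.aestronglyMeasurable).symm
    have h2 : ∫ ω, g (Y ω, X ω, X' ω) ∂P
        = ∫ p, g p ∂(Measure.map (fun ω => (Y ω, X ω, X' ω)) P) :=
      (integral_map hφ0.aemeasurable hg.aestronglyMeasurable).symm
    rw [h1, h2, hIdent n]
  -- MemLp transfers
  have hMemA : ∀ n : Fin N, MemLp (fun ω => f (Xs n ω)) 2 P := by
    intro n
    have h1 : MemLp (fun p : E × F × F => f p.2.1) 2
        (Measure.map (fun ω => (Ys n ω, Xs n ω, Xs' n ω)) P) := by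
      rw [hIdent n, memLp_map_measure_iff hπ1.aestronglyMeasurable hφ0.aemeasurable]
      exact hL2
    rw [memLp_map_measure_iff hπ1.aestronglyMeasurable (hφmeas n).aemeasurable] at h1
    exact h1
  have hMemB : ∀ n : Fin N, MemLp (fun ω => f (Xs' n ω)) 2 P := by
    intro n
    have h1 : MemLp (fun p : E × F × F => f p.2.2) 2
        (Measure.map (fun ω => (Ys n ω, Xs n ω, Xs' n ω)) P) := by
      rw [hIdent n, memLp_map_measure_iff hπ2.aestronglyMeasurable hφ0.aemeasurable]
      exact hL2'
    rw [memLp_map_measure_iff hπ2.aestronglyMeasurable (hφmeas n).aemeasurable] at h1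
    exact h1
  -- values of basic integrals
  have hKn : ∀ n : Fin N, ∫ ω, f (Xs n ω) * f (Xs' n ω) ∂P = ∫ ω, f (X ω) * f (X' ω) ∂P :=
    fun n => by simpa using hTrans n (fun p => f p.2.1 * f p.2.2) (hπ1.mul hπ2)
  have hQn : ∀ n : Fin N, ∫ ω, f (Xs n ω)^2 ∂P = ∫ ω, f (X ω)^2 ∂P :=
    fun n => by simpa using hTrans n (fun p => f p.2.1 ^ 2) (hπ1.pow_const 2)
  have hmun : ∀ n : Fin N, ∫ ω, f (Xs n ω) ∂P = μ := by
    intro n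
    rw [hμ]
    simpa using hTrans n (fun p => f p.2.1) hπ1
  -- independence of distinct samples
  have hcross : ∀ i j : Fin N, i ≠ j →
      ∫ ω, f (Xs i ω) * f (Xs j ω) ∂P = μ * μ := by
    intro i j hij
    have hind : IndepFun (fun ω => f (Xs i ω)) (fun ω => f (Xs j ω)) P :=
      (hIndep.indepFun hij).comp hπ1 hπ1
    have h := hind.integral_fun_mul_eq_mul_integral
      (hMemA i).1 (hMemA j).1
    beta_reduce at h
    rw [hmun i, hmun j] at h
    exact h
  -- integrabilities
  have hintAB : ∀ n : Fin N, Integrable (fun ω => f (Xs n ω) * f (Xs' n ω)) P :=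
    fun n => aux_integrable_mul (hMemA n) (hMemB n)
  have hintAA : ∀ i j : Fin N, Integrable (fun ω => f (Xs i ω) * f (Xs j ω)) P :=
    fun i j => aux_integrable_mul (hMemA i) (hMemA j)
  have hintA2 : ∀ n : Fin N, Integrable (fun ω => f (Xs n ω)^2) P :=
    fun n => (hMemA n).integrable_sq
  -- pointwise rewriting of the estimator
  have hptwise : ∀ ω, (((N : ℝ)⁻¹ * ∑ n, f (Xs n ω) * f (Xs' n ω) - muHat ω ^ 2) + s2 ω / (N : ℝ))
      = (N:ℝ)⁻¹ * (∑ n, f (Xs n ω) * f (Xs' n ω))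
        + ((N:ℝ)⁻¹ * ((N:ℝ)-1)⁻¹) * (∑ n, f (Xs n ω)^2)
        - ((N:ℝ)⁻¹ * ((N:ℝ)-1)⁻¹) * (∑ i, ∑ j, f (Xs i ω) * f (Xs j ω)) := by
    intro ω
    have h1 : ∀ n : Fin N, (f (Xs n ω) - muHat ω)^2
        = f (Xs n ω)^2 - (2 * muHat ω) * f (Xs n ω) + muHat ω^2 := fun n => by ring
    have h2 : (∑ n, (f (Xs n ω) - muHat ω)^2)
        = (∑ n, f (Xs n ω)^2) - (2 * muHat ω) * (∑ n, f (Xs n ω)) + (N:ℝ) * muHat ω^2 := by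
      simp_rw [h1]
      rw [Finset.sum_add_distrib, Finset.sum_sub_distrib, ← Finset.mul_sum,
        Finset.sum_const, Finset.card_univ, Fintype.card_fin, nsmul_eq_mul]
    have h3 : (∑ i, ∑ j, f (Xs i ω) * f (Xs j ω))
        = (∑ n, f (Xs n ω)) * (∑ n, f (Xs n ω)) := (Finset.sum_mul_sum _ _ _ _).symm
    rw [hs2 ω, h2, hmuHat ω, h3]
    field_simp
    ring
  -- integral of the estimator
  have e1 : ∫ ω, (∑ n, f (Xs n ω) * f (Xs' n ω)) ∂P
      = (N:ℝ) * ∫ ω, f (X ω) * f (X' ω) ∂P := by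
    rw [integral_finset_sum _ (fun n _ => hintAB n),
      Finset.sum_congr rfl (fun n _ => hKn n),
      Finset.sum_const, Finset.card_univ, Fintype.card_fin, nsmul_eq_mul]
  have e2 : ∫ ω, (∑ n, f (Xs n ω)^2) ∂P = (N:ℝ) * ∫ ω, f (X ω)^2 ∂P := by
    rw [integral_finset_sum _ (fun n _ => hintA2 n),
      Finset.sum_congr rfl (fun n _ => hQn n),
      Finset.sum_const, Finset.card_univ, Fintype.card_fin, nsmul_eq_mul]
  have hij : ∀ i j : Fin N, ∫ ω, f (Xs i ω) * f (Xs j ω) ∂P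
      = if i = j then ∫ ω, f (X ω)^2 ∂P else μ * μ := by
    intro i j
    by_cases h : i = j
    · subst h
      rw [if_pos rfl]
      have hsq : ∫ ω, f (Xs i ω) * f (Xs i ω) ∂P = ∫ ω, f (Xs i ω)^2 ∂P :=
        integral_congr_ae (Filter.Eventually.of_forall fun ω => (sq (f (Xs i ω))).symm)
      rw [hsq, hQn i]
    · rw [if_neg h]
      exact hcross i j h
  have e3 : ∫ ω, (∑ i, ∑ j, f (Xs i ω) * f (Xs j ω)) ∂P
      = (N:ℝ) * (∫ ω, f (X ω)^2 ∂P) + ((N:ℝ) * ((N:ℝ)-1)) * (μ * μ) := by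
    rw [integral_finset_sum _ (fun i _ => integrable_finset_sum _ (fun j _ => hintAA i j)),
      Finset.sum_congr rfl (fun i _ => integral_finset_sum _ (fun j _ => hintAA i j)),
      Finset.sum_congr rfl (fun i _ => Finset.sum_congr rfl (fun j _ => hij i j))]
    have hfix : ∀ i : Fin N,
        (∑ j, if i = j then (∫ ω, f (X ω)^2 ∂P) else μ * μ)
        = (∫ ω, f (X ω)^2 ∂P) + ((N:ℝ)-1) * (μ * μ) := by
      intro i
      have hsplit : ∀ j : Fin N,
          (if i = j then (∫ ω, f (X ω)^2 ∂P) else μ * μ)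
          = μ * μ + (if i = j then (∫ ω, f (X ω)^2 ∂P) - μ * μ else 0) := by
        intro j; split <;> ring
      simp_rw [hsplit]
      rw [Finset.sum_add_distrib, Finset.sum_ite_eq, Finset.sum_const, Finset.card_univ,
        Fintype.card_fin, nsmul_eq_mul, if_pos (Finset.mem_univ i)]
      ring
    rw [Finset.sum_congr rfl (fun i _ => hfix i), Finset.sum_const, Finset.card_univ,
      Fintype.card_fin, nsmul_eq_mul]
    ring
  have hEq1 : ∫ ω, (((N : ℝ)⁻¹ * ∑ n, f (Xs n ω) * f (Xs' n ω) - muHat ω ^ 2) + s2 ω / (N : ℝ)) ∂P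
      = (∫ ω, f (X ω) * f (X' ω) ∂P) - μ^2 := by
    rw [integral_congr_ae (Filter.Eventually.of_forall hptwise)]
    have i1 : Integrable (fun ω => (N:ℝ)⁻¹ * ∑ n, f (Xs n ω) * f (Xs' n ω)) P :=
      (integrable_finset_sum _ fun n _ => hintAB n).const_mul _
    have i2 : Integrable (fun ω => ((N:ℝ)⁻¹ * ((N:ℝ)-1)⁻¹) * ∑ n, f (Xs n ω)^2) P :=
      (integrable_finset_sum _ fun n _ => hintA2 n).const_mul _
    have i3 : Integrable
        (fun ω => ((N:ℝ)⁻¹ * ((N:ℝ)-1)⁻¹) * ∑ i, ∑ j, f (Xs i ω) * f (Xs j ω)) P :=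
      (integrable_finset_sum _ fun i _ =>
        integrable_finset_sum _ fun j _ => hintAA i j).const_mul _
    have i12 : Integrable (fun ω => (N:ℝ)⁻¹ * ∑ n, f (Xs n ω) * f (Xs' n ω)
        + ((N:ℝ)⁻¹ * ((N:ℝ)-1)⁻¹) * ∑ n, f (Xs n ω)^2) P := i1.add i2
    rw [integral_sub i12 i3, integral_add i1 i2, integral_const_mul, integral_const_mul,
      integral_const_mul, e1, e2, e3]
    field_simp
    ring
  rw [hEq1]
  -- ====== Part IV : σY2 = K - μ² ======
  -- truncations
  set g : ℕ → F → ℝ := fun k x => max (-(k:ℝ)) (min (k:ℝ) (f x)) with hgdef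
  have hgmeas : ∀ k : ℕ, Measurable (g k) := by
    intro k
    simp only [hgdef]
    exact measurable_const.max (measurable_const.min hf)
  have hgbd : ∀ (k : ℕ) (x : F), |g k x| ≤ (k:ℝ) := by
    intro k x
    rw [abs_le]
    refine ⟨neg_le.mp ?_, ?_⟩ <;> simp only [hgdef]
    · exact neg_le.mpr (le_max_left _ _)
    · exact max_le (neg_le_self (by positivity)) (min_le_left _ _)
  have hgle : ∀ (k : ℕ) (x : F), |g k x| ≤ |f x| := by
    intro k x
    rw [abs_le]
    constructor
    · simp only [hgdef]
      refine le_trans ?_ (le_max_right _ _)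
      exact le_min (le_trans (neg_nonpos.mpr (abs_nonneg _)) (by positivity)) (neg_abs_le _)
    · simp only [hgdef]
      exact max_le (le_trans (neg_nonpos.mpr (by positivity)) (abs_nonneg _))
        (le_trans (min_le_right _ _) (le_abs_self _))
  have hgsq : ∀ (k : ℕ) (x : F), g k x ^ 2 ≤ f x ^ 2 := by
    intro k x
    have h := mul_self_le_mul_self (abs_nonneg (g k x)) (hgle k x)
    simpa [← sq, sq_abs] using h
  have hgtend : ∀ x : F, Tendsto (fun k : ℕ => g k x) atTop (nhds (f x)) := by
    intro x
    refine Filter.Tendsto.congr' ?_ tendsto_const_nhds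
    filter_upwards [Filter.eventually_ge_atTop ⌈|f x|⌉₊] with k hk
    have hk' : |f x| ≤ (k:ℝ) := (Nat.le_ceil _).trans (by exact_mod_cast hk)
    have h1 : f x ≤ (k:ℝ) := (le_abs_self _).trans hk'
    have h2 : -(k:ℝ) ≤ f x := by
      have := neg_abs_le (f x); linarith
    simp only [hgdef]
    rw [min_eq_right h1, max_eq_right h2]
  -- truncated variables are in L²
  have hmemgX : ∀ k : ℕ, MemLp (fun ω => g k (X ω)) 2 P := fun k =>
    MemLp.of_bound ((hgmeas k).comp hX).aestronglyMeasurable (k:ℝ)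
      (Filter.Eventually.of_forall fun ω => by
        simpa [Real.norm_eq_abs] using hgbd k (X ω))
  have hmemgX' : ∀ k : ℕ, MemLp (fun ω => g k (X' ω)) 2 P := fun k =>
    MemLp.of_bound ((hgmeas k).comp hX').aestronglyMeasurable (k:ℝ)
      (Filter.Eventually.of_forall fun ω => by
        simpa [Real.norm_eq_abs] using hgbd k (X' ω))
  set T := P[(fun ω => f (X ω))|𝓖] with hTdef
  have hTmem : MemLp T 2 P := aux_memLp2_condexp hm hL2
  set Pk : ℕ → Ω → ℝ := fun k => P[(fun ω => g k (X ω))|𝓖] with hPkdef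
  have hPkmem : ∀ k : ℕ, MemLp (Pk k) 2 P := fun k => aux_memLp2_condexp hm (hmemgX k)
  -- per-k identity
  have hPk : ∀ k : ℕ, ∫ ω, g k (X ω) * g k (X' ω) ∂P = ∫ ω, (Pk k ω)^2 ∂P := by
    intro k
    have h1 : ∫ ω, g k (X ω) * g k (X' ω) ∂P
        = ∫ ω, (P[(fun ω => g k (X ω) * g k (X' ω))|𝓖]) ω ∂P := (integral_condExp hm).symm
    rw [h1, integral_congr_ae (hCondIndep (g k) (g k) (hgmeas k) (hgmeas k)
      ⟨(k:ℝ), hgbd k⟩ ⟨(k:ℝ), hgbd k⟩)]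
    refine integral_congr_ae ?_
    filter_upwards [hSameCondDist (g k) (hgmeas k) ⟨(k:ℝ), hgbd k⟩] with ω hω
    rw [← hω, ← sq]
  -- limit of the left-hand side
  have hLlim : Tendsto (fun k : ℕ => ∫ ω, g k (X ω) * g k (X' ω) ∂P) atTop
      (nhds (∫ ω, f (X ω) * f (X' ω) ∂P)) := by
    refine tendsto_integral_of_dominated_convergence
      (fun ω => (f (X ω)^2 + f (X' ω)^2)/2)
      (fun k => (((hgmeas k).comp hX).mul ((hgmeas k).comp hX')).aestronglyMeasurable)
      ((hL2.integrable_sq.add hL2'.integrable_sq).div_const 2)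
      (fun k => Filter.Eventually.of_forall fun ω => ?_)
      (Filter.Eventually.of_forall fun ω => (hgtend (X ω)).mul (hgtend (X' ω)))
    rw [Real.norm_eq_abs, abs_mul]
    have h1 : |g k (X ω)| * |g k (X' ω)| ≤ |f (X ω)| * |f (X' ω)| :=
      mul_le_mul (hgle k (X ω)) (hgle k (X' ω)) (abs_nonneg _) (abs_nonneg _)
    nlinarith [sq_nonneg (|f (X ω)| - |f (X' ω)|), sq_abs (f (X ω)), sq_abs (f (X' ω))]
  -- L² convergence of the truncations
  have hDkto : Tendsto (fun k : ℕ => ∫ ω, (g k (X ω) - f (X ω))^2 ∂P) atTop (nhds 0) := by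
    have h0 : (0:ℝ) = ∫ (_ : Ω), (0:ℝ) ∂P := by simp
    rw [h0]
    refine tendsto_integral_of_dominated_convergence (fun ω => 4 * f (X ω)^2)
      (fun k => ((((hgmeas k).comp hX).sub (hf.comp hX)).pow_const 2).aestronglyMeasurable)
      (hL2.integrable_sq.const_mul 4)
      (fun k => Filter.Eventually.of_forall fun ω => ?_)
      (Filter.Eventually.of_forall fun ω => ?_)
    · rw [Real.norm_eq_abs, abs_of_nonneg (sq_nonneg _)]
      show (g k (X ω) - f (X ω))^2 ≤ 4 * f (X ω)^2
      nlinarith [hgsq k (X ω), sq_nonneg (g k (X ω) + f (X ω))]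
    · have h1 : Tendsto (fun k : ℕ => g k (X ω) - f (X ω)) atTop (nhds (f (X ω) - f (X ω))) :=
        (hgtend (X ω)).sub tendsto_const_nhds
      rw [sub_self] at h1
      simpa using h1.pow 2
  -- bound on the difference of second moments of the conditional expectations
  have hbound : ∀ k : ℕ, |∫ ω, (Pk k ω)^2 ∂P - ∫ ω, (T ω)^2 ∂P|
      ≤ Real.sqrt (∫ ω, (g k (X ω) - f (X ω))^2 ∂P)
        * Real.sqrt (4 * ∫ ω, f (X ω)^2 ∂P) := by
    intro k
    have hdiff : ∫ ω, (Pk k - T) ω * (Pk k + T) ω ∂P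
        = ∫ ω, (Pk k ω)^2 ∂P - ∫ ω, (T ω)^2 ∂P := by
      rw [← integral_sub ((hPkmem k).integrable_sq) (hTmem.integrable_sq)]
      refine integral_congr_ae (Filter.Eventually.of_forall fun ω => ?_)
      simp only [Pi.sub_apply, Pi.add_apply]
      ring
    have hc1 : ∫ ω, (Pk k - T) ω ^ 2 ∂P = ∫ ω, (Pk k ω - T ω)^2 ∂P :=
      integral_congr_ae (Filter.Eventually.of_forall fun ω => by simp [Pi.sub_apply])
    have hc2 : ∫ ω, (Pk k + T) ω ^ 2 ∂P = ∫ ω, (Pk k ω + T ω)^2 ∂P :=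
      integral_congr_ae (Filter.Eventually.of_forall fun ω => by simp [Pi.add_apply])
    have hcs := aux_cauchy_schwarz ((hPkmem k).sub hTmem) ((hPkmem k).add hTmem)
    rw [hdiff, hc1, hc2] at hcs
    -- contraction bound
    have h3 : ∫ ω, (Pk k ω - T ω)^2 ∂P ≤ ∫ ω, (g k (X ω) - f (X ω))^2 ∂P := by
      have hae : P[(fun ω => g k (X ω)) - (fun ω => f (X ω))|𝓖]
          =ᵐ[P] Pk k - T :=
        condExp_sub ((hmemgX k).integrable one_le_two) (hL2.integrable one_le_two) _
      have hD2 : MemLp ((fun ω => g k (X ω)) - (fun ω => f (X ω))) 2 P :=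
        (hmemgX k).sub hL2
      have hle := aux_condexp_sq_le hm hD2
      have heq1 : ∫ ω, (Pk k ω - T ω)^2 ∂P
          = ∫ ω, ((P[(fun ω => g k (X ω)) - (fun ω => f (X ω))|𝓖]) ω)^2 ∂P := by
        refine integral_congr_ae ?_
        filter_upwards [hae] with ω hω
        rw [hω]
        simp [Pi.sub_apply]
      have heq2 : ∫ ω, ((fun ω => g k (X ω)) - (fun ω => f (X ω))) ω ^2 ∂P
          = ∫ ω, (g k (X ω) - f (X ω))^2 ∂P := by
        refine integral_congr_ae (Filter.Eventually.of_forall fun ω => ?_)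
        simp [Pi.sub_apply]
      rw [heq1]
      calc ∫ ω, ((P[(fun ω => g k (X ω)) - (fun ω => f (X ω))|𝓖]) ω)^2 ∂P
          ≤ ∫ ω, ((fun ω => g k (X ω)) - (fun ω => f (X ω))) ω ^2 ∂P := hle
        _ = ∫ ω, (g k (X ω) - f (X ω))^2 ∂P := heq2
    have h4 : ∫ ω, (Pk k ω + T ω)^2 ∂P ≤ 4 * ∫ ω, f (X ω)^2 ∂P := by
      have eP : ∫ ω, (Pk k ω)^2 ∂P ≤ ∫ ω, f (X ω)^2 ∂P := by
        have hc := aux_condexp_sq_le hm (hmemgX k)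
        have hmono : ∫ ω, g k (X ω)^2 ∂P ≤ ∫ ω, f (X ω)^2 ∂P :=
          integral_mono (hmemgX k).integrable_sq hL2.integrable_sq
            (fun ω => hgsq k (X ω))
        exact hc.trans hmono
      have eT : ∫ ω, (T ω)^2 ∂P ≤ ∫ ω, f (X ω)^2 ∂P := aux_condexp_sq_le hm hL2
      have e5 : ∫ ω, (Pk k ω + T ω)^2 ∂P
          ≤ ∫ ω, (2*(Pk k ω)^2 + 2*(T ω)^2) ∂P := by
        refine integral_mono ((hPkmem k).add hTmem).integrable_sq
          (((hPkmem k).integrable_sq.const_mul 2).add (hTmem.integrable_sq.const_mul 2))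
          (fun ω => ?_)
        nlinarith [sq_nonneg (Pk k ω - T ω)]
      rw [integral_add ((hPkmem k).integrable_sq.const_mul 2)
          (hTmem.integrable_sq.const_mul 2), integral_const_mul, integral_const_mul] at e5
      linarith
    have hsqrt1 : Real.sqrt (∫ ω, (Pk k ω - T ω)^2 ∂P)
        ≤ Real.sqrt (∫ ω, (g k (X ω) - f (X ω))^2 ∂P) := Real.sqrt_le_sqrt h3
    have hsqrt2 : Real.sqrt (∫ ω, (Pk k ω + T ω)^2 ∂P)
        ≤ Real.sqrt (4 * ∫ ω, f (X ω)^2 ∂P) := Real.sqrt_le_sqrt h4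
    calc |∫ ω, (Pk k ω)^2 ∂P - ∫ ω, (T ω)^2 ∂P|
        ≤ Real.sqrt (∫ ω, (Pk k ω - T ω)^2 ∂P)
          * Real.sqrt (∫ ω, (Pk k ω + T ω)^2 ∂P) := hcs
      _ ≤ Real.sqrt (∫ ω, (g k (X ω) - f (X ω))^2 ∂P)
          * Real.sqrt (4 * ∫ ω, f (X ω)^2 ∂P) :=
          mul_le_mul hsqrt1 hsqrt2 (Real.sqrt_nonneg _) (Real.sqrt_nonneg _)
  -- limit of the right-hand side
  have hRlim : Tendsto (fun k : ℕ => ∫ ω, (Pk k ω)^2 ∂P) atTop (nhds (∫ ω, (T ω)^2 ∂P)) := by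
    have hsq0 : Tendsto (fun k : ℕ => Real.sqrt (∫ ω, (g k (X ω) - f (X ω))^2 ∂P)
        * Real.sqrt (4 * ∫ ω, f (X ω)^2 ∂P)) atTop (nhds 0) := by
      have h1 : Tendsto (fun k : ℕ => Real.sqrt (∫ ω, (g k (X ω) - f (X ω))^2 ∂P)) atTop
          (nhds (Real.sqrt 0)) := (Real.continuous_sqrt.tendsto 0).comp hDkto
      rw [Real.sqrt_zero] at h1
      simpa using h1.mul_const (Real.sqrt (4 * ∫ ω, f (X ω)^2 ∂P))
    have h2 : Tendsto (fun k : ℕ => ∫ ω, (Pk k ω)^2 ∂P - ∫ ω, (T ω)^2 ∂P) atTop (nhds 0) := by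
      refine squeeze_zero_norm (fun k => ?_) hsq0
      rw [Real.norm_eq_abs]
      exact hbound k
    exact tendsto_sub_nhds_zero_iff.mp h2
  have hKT : ∫ ω, f (X ω) * f (X' ω) ∂P = ∫ ω, (T ω)^2 ∂P :=
    tendsto_nhds_unique (hLlim.congr hPk) hRlim
  -- conclude
  have hTint : ∫ ω, T ω ∂P = μ := by
    rw [hTdef, integral_condExp hm, hμ]
  have hTPμ : P[T] = μ := hTint
  have hpow : P[T ^ 2] = ∫ ω, (T ω)^2 ∂P :=
    integral_congr_ae (Filter.Eventually.of_forall fun ω => by simp)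
  rw [hσY2, variance_eq_sub hTmem, hpow, hTPμ, hKT]
end

section
/- For N ≥ 2, the estimator Ṽ₂ = (2N/(2N−1)) · (V₂ + (s² + s'²)/(4N)), where V₂ = N⁻¹ ∑_{n=1}^N f(Xₙ) f(X'ₙ) − ((μ̂ + μ̂')/2)², is unbiased: E[Ṽ₂] = σ_Y². -/
open MeasureTheory ProbabilityTheory Filter
open scoped ENNReal Topology

section AuxKey
variable {α : Type*} {m m0 : MeasurableSpace α} {μ : Measure α}

theorem aux_integrable_mul_s11 {f g : α → ℝ} (hf : MemLp f 2 μ) (hg : MemLp g 2 μ) :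
    Integrable (fun x => f x * g x) μ := by
  have h := hf.smul (φ := g) (p := 2) (q := 2) (r := 1) hg
  rw [memLp_one_iff_integrable] at h
  exact h.congr (Filter.Eventually.of_forall fun x => mul_comm (g x) (f x))

theorem aux_condexp_ae_eq_condexpL2 (hm : m ≤ m0) [IsFiniteMeasure μ] {f : α → ℝ}
    (hf : MemLp f 2 μ) :
    (condExpL2 ℝ ℝ hm (hf.toLp f) : α → ℝ) =ᵐ[μ] μ[f|m] := by
  refine ae_eq_condExp_of_forall_setIntegral_eq hm (hf.integrable one_le_two) ?_ ?_ ?_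
  · intro s _ _
    exact (integrable_condExpL2_of_isFiniteMeasure hm).integrableOn
  · intro s hs hμs
    rw [integral_condExpL2_eq hm (hf.toLp f) hs hμs.ne]
    exact setIntegral_congr_ae (hm s hs) ((hf.coeFn_toLp).mono fun x hx _ => hx)
  · exact lpMeas.aestronglyMeasurable _

theorem aux_eLpNorm_condexp_le (hm : m ≤ m0) [IsFiniteMeasure μ] {f : α → ℝ}
    (hf : MemLp f 2 μ) :
    eLpNorm (μ[f|m]) 2 μ ≤ eLpNorm f 2 μ := by
  rw [← eLpNorm_congr_ae (aux_condexp_ae_eq_condexpL2 hm hf)]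
  refine (eLpNorm_condExpL2_le hm _).trans ?_
  rw [eLpNorm_congr_ae hf.coeFn_toLp]

theorem aux_memℒp_condexp (hm : m ≤ m0) [IsFiniteMeasure μ] {f : α → ℝ}
    (hf : MemLp f 2 μ) :
    MemLp (μ[f|m]) 2 μ :=
  ⟨(stronglyMeasurable_condExp.mono hm).aestronglyMeasurable,
    lt_of_le_of_lt (aux_eLpNorm_condexp_le hm hf) hf.2⟩

theorem aux_tendsto_eLpNorm_zero {h : ℕ → α → ℝ} {G : α → ℝ}
    (hmeas : ∀ k, AEStronglyMeasurable (h k) μ) (hG : MemLp G 2 μ)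
    (hbound : ∀ k x, |h k x| ≤ |G x|)
    (hlim : ∀ x, Tendsto (fun k => h k x) atTop (𝓝 0)) :
    Tendsto (fun k => eLpNorm (h k) 2 μ) atTop (𝓝 0) := by
  have h2 : ∀ (u : α → ℝ), eLpNorm u 2 μ
      = (∫⁻ x, (‖u x‖₊ : ℝ≥0∞) ^ (2 : ℝ) ∂μ) ^ (1 / (2:ℝ)) := by
    intro u
    rw [eLpNorm_eq_lintegral_rpow_enorm_toReal (by norm_num) (by norm_num)]
    norm_num
    rfl
  have hGint : (∫⁻ x, (‖G x‖₊ : ℝ≥0∞) ^ (2 : ℝ) ∂μ) ≠ ∞ := by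
    have := hG.2
    rw [h2 G] at this
    intro hcon
    rw [hcon] at this
    simp at this
  have hlint : Tendsto (fun k => ∫⁻ x, (‖h k x‖₊ : ℝ≥0∞) ^ (2 : ℝ) ∂μ) atTop (𝓝 0) := by
    have h0 : (0 : ℝ≥0∞) = ∫⁻ x, (‖(0:ℝ)‖₊ : ℝ≥0∞) ^ (2:ℝ) ∂μ := by simp
    rw [h0]
    refine tendsto_lintegral_of_dominated_convergence' (fun x => (‖G x‖₊ : ℝ≥0∞) ^ (2:ℝ))
      (fun k => ((hmeas k).aemeasurable.nnnorm.coe_nnreal_ennreal).pow_const _)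
      (fun k => Filter.Eventually.of_forall fun x => ?_) hGint
      (Filter.Eventually.of_forall fun x => ?_)
    · refine ENNReal.rpow_le_rpow ?_ (by norm_num)
      rw [ENNReal.coe_le_coe, ← NNReal.coe_le_coe, coe_nnnorm, coe_nnnorm,
        Real.norm_eq_abs, Real.norm_eq_abs]
      exact hbound k x
    · have : Tendsto (fun k => (‖h k x‖₊ : ℝ≥0∞)) atTop (𝓝 (‖(0:ℝ)‖₊ : ℝ≥0∞)) := by
        refine ENNReal.tendsto_coe.mpr ?_
        exact (continuous_nnnorm.tendsto _).comp (hlim x)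
      have hc : Continuous fun z : ℝ≥0∞ => z ^ (2:ℝ) := ENNReal.continuous_rpow_const
      exact (hc.tendsto _).comp this
  have : Tendsto (fun k => (∫⁻ x, (‖h k x‖₊ : ℝ≥0∞) ^ (2 : ℝ) ∂μ) ^ (1/(2:ℝ))) atTop
      (𝓝 ((0 : ℝ≥0∞) ^ (1/(2:ℝ)))) := by
    have hc : Continuous fun z : ℝ≥0∞ => z ^ (1/(2:ℝ)) := ENNReal.continuous_rpow_const
    exact (hc.tendsto _).comp hlint
  rw [ENNReal.zero_rpow_of_pos (by norm_num)] at this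
  simpa [h2] using this

end AuxKey

section Key
variable {Ω F : Type*}

set_option maxHeartbeats 1000000 in
theorem aux_key (𝓖 : MeasurableSpace Ω) [mΩ : MeasurableSpace Ω] [mF : MeasurableSpace F]
    (hle : 𝓖 ≤ mΩ)
    (P : Measure Ω) [IsProbabilityMeasure P]
    {X X' : Ω → F} (hX : Measurable X) (hX' : Measurable X')
    {f : F → ℝ} (hf : Measurable f)
    (hL2 : MemLp (fun ω => f (X ω)) 2 P) (hL2' : MemLp (fun ω => f (X' ω)) 2 P)
    (hCondIndep : ∀ g h : F → ℝ, Measurable g → Measurable h →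
      (∃ C, ∀ x, |g x| ≤ C) → (∃ C, ∀ x, |h x| ≤ C) →
      P[(fun ω => g (X ω) * h (X' ω))|𝓖]
        =ᵐ[P] fun ω => ((P[(fun ω' => g (X ω'))|𝓖]) ω) * ((P[(fun ω' => h (X' ω'))|𝓖]) ω))
    (hSameCondDist : ∀ g : F → ℝ, Measurable g → (∃ C, ∀ x, |g x| ≤ C) →
      P[(fun ω => g (X ω))|𝓖] =ᵐ[P] P[(fun ω => g (X' ω))|𝓖]) :
    ∫ ω, f (X ω) * f (X' ω) ∂P
      = ∫ ω, ((P[(fun ω => f (X ω))|𝓖]) ω) * ((P[(fun ω => f (X ω))|𝓖]) ω) ∂P := by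
  haveI hSF : SigmaFinite (P.trim hle) := by infer_instance
  set gk : ℕ → F → ℝ := fun k x => max (min (f x) k) (-(k:ℝ)) with hgk_def
  have hgkm : ∀ k, Measurable (gk k) := fun k => (hf.min measurable_const).max measurable_const
  have hgkb : ∀ k, ∃ C, ∀ x, |gk k x| ≤ C := by
    intro k
    refine ⟨k, fun x => ?_⟩
    rw [abs_le]
    exact ⟨le_max_right _ _, max_le (min_le_right _ _) (neg_le_self (Nat.cast_nonneg k))⟩
  have hgkabs : ∀ k x, |gk k x| ≤ |f x| := by
    intro k x
    rw [abs_le]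
    constructor
    · rcases le_or_gt 0 (f x) with h | h
      · have h1 : (0:ℝ) ≤ min (f x) k := le_min h (Nat.cast_nonneg k)
        have h2 := le_max_left (min (f x) k) (-(k:ℝ))
        have h3 := neg_abs_le (f x)
        have h4 := abs_nonneg (f x)
        simp only [hgk_def]
        linarith
      · have h1 : min (f x) (k:ℝ) = f x := min_eq_left (le_trans h.le (Nat.cast_nonneg k))
        simp only [hgk_def, h1]
        have h2 : -|f x| = f x := by rw [abs_of_neg h]; ring
        rw [h2]
        exact le_max_left _ _
    · refine max_le (le_trans (min_le_left _ _) (le_abs_self _)) ?_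
      have h1 : -(k:ℝ) ≤ 0 := neg_nonpos.mpr (Nat.cast_nonneg k)
      exact le_trans h1 (abs_nonneg _)
  have hgklim : ∀ x, Tendsto (fun k => gk k x) atTop (𝓝 (f x)) := by
    intro x
    refine tendsto_const_nhds.congr' ?_
    filter_upwards [eventually_ge_atTop ⌈|f x|⌉₊] with k hk
    have hk' : |f x| ≤ (k:ℝ) := le_trans (Nat.le_ceil _) (Nat.cast_le.mpr hk)
    have h1 : min (f x) (k:ℝ) = f x := min_eq_left ((le_abs_self _).trans hk')
    have h2 : -(k:ℝ) ≤ f x := by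
      have := neg_abs_le (f x); linarith
    simp only [hgk_def, h1]
    exact (max_eq_left h2).symm
  have hgkL2 : ∀ k, MemLp (fun ω => gk k (X ω)) 2 P := by
    intro k
    refine hL2.of_le ((hgkm k).comp hX).aestronglyMeasurable ?_
    exact Filter.Eventually.of_forall fun ω => by
      simpa [Real.norm_eq_abs] using hgkabs k (X ω)
  have hgkL2' : ∀ k, MemLp (fun ω => gk k (X' ω)) 2 P := by
    intro k
    refine hL2'.of_le ((hgkm k).comp hX').aestronglyMeasurable ?_
    exact Filter.Eventually.of_forall fun ω => by
      simpa [Real.norm_eq_abs] using hgkabs k (X' ω)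
  -- Step A
  have stepA : ∀ k, ∫ ω, gk k (X ω) * gk k (X' ω) ∂P
      = ∫ ω, ((P[(fun ω => gk k (X ω))|𝓖]) ω) * ((P[(fun ω => gk k (X ω))|𝓖]) ω) ∂P := by
    intro k
    calc ∫ ω, gk k (X ω) * gk k (X' ω) ∂P
        = ∫ ω, (P[(fun ω => gk k (X ω) * gk k (X' ω))|𝓖]) ω ∂P := (integral_condExp hle).symm
      _ = ∫ ω, ((P[(fun ω => gk k (X ω))|𝓖]) ω) * ((P[(fun ω => gk k (X' ω))|𝓖]) ω) ∂P :=
          integral_congr_ae (hCondIndep (gk k) (gk k) (hgkm k) (hgkm k) (hgkb k) (hgkb k))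
      _ = ∫ ω, ((P[(fun ω => gk k (X ω))|𝓖]) ω) * ((P[(fun ω => gk k (X ω))|𝓖]) ω) ∂P := by
          refine integral_congr_ae ?_
          filter_upwards [hSameCondDist (gk k) (hgkm k) (hgkb k)] with ω hω
          rw [← hω]
  -- Step B
  have habsL2 : MemLp (fun ω => |f (X ω)|) 2 P := by
    simpa [Real.norm_eq_abs] using hL2.norm
  have habsL2' : MemLp (fun ω => |f (X' ω)|) 2 P := by
    simpa [Real.norm_eq_abs] using hL2'.norm
  have stepB : Tendsto (fun k => ∫ ω, gk k (X ω) * gk k (X' ω) ∂P) atTop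
      (𝓝 (∫ ω, f (X ω) * f (X' ω) ∂P)) := by
    refine tendsto_integral_of_dominated_convergence (fun ω => |f (X ω)| * |f (X' ω)|)
      (fun k => (((hgkm k).comp hX).aestronglyMeasurable.mul
        ((hgkm k).comp hX').aestronglyMeasurable))
      (aux_integrable_mul_s11 habsL2 habsL2')
      (fun k => Filter.Eventually.of_forall fun ω => ?_)
      (Filter.Eventually.of_forall fun ω => ?_)
    · rw [Real.norm_eq_abs, abs_mul]
      exact mul_le_mul (hgkabs k (X ω)) (hgkabs k (X' ω)) (abs_nonneg _) (abs_nonneg _)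
    · exact (hgklim (X ω)).mul (hgklim (X' ω))
  -- Step C
  set a : Ω → ℝ := P[(fun ω => f (X ω))|𝓖] with ha_def
  set ak : ℕ → Ω → ℝ := fun k => P[(fun ω => gk k (X ω))|𝓖] with hak_def
  have haL2 : MemLp a 2 P := by rw [ha_def]; exact aux_memℒp_condexp hle hL2
  have hakL2 : ∀ k, MemLp (ak k) 2 P := by
    intro k
    rw [hak_def]
    exact aux_memℒp_condexp hle (hgkL2 k)
  have hdiff : ∀ k, eLpNorm (fun ω => ak k ω - a ω) 2 P
      ≤ eLpNorm (fun ω => gk k (X ω) - f (X ω)) 2 P := by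
    intro k
    have hsub : (fun ω => ak k ω - a ω)
        =ᵐ[P] P[(fun ω => gk k (X ω)) - (fun ω => f (X ω))|𝓖] := by
      have h := condExp_sub (m := 𝓖) (μ := P) (f := fun ω => gk k (X ω))
        (g := fun ω => f (X ω)) ((hgkL2 k).integrable one_le_two)
        (hL2.integrable one_le_two)
      filter_upwards [h] with ω hω
      rw [hω]
      rfl
    rw [eLpNorm_congr_ae hsub]
    refine (aux_eLpNorm_condexp_le hle ((hgkL2 k).sub hL2)).trans (le_of_eq ?_)
    exact eLpNorm_congr_ae (Filter.Eventually.of_forall fun ω => rfl)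
  have htail : Tendsto (fun k => eLpNorm (fun ω => gk k (X ω) - f (X ω)) 2 P) atTop (𝓝 0) := by
    refine aux_tendsto_eLpNorm_zero
      (fun k => (((hgkm k).comp hX).sub (hf.comp hX)).aestronglyMeasurable)
      ((habsL2.const_mul 2) : MemLp (fun ω => 2 * |f (X ω)|) 2 P)
      (fun k ω => ?_) (fun ω => ?_)
    · have h1 : |gk k (X ω) - f (X ω)| ≤ |gk k (X ω)| + |f (X ω)| := abs_sub _ _
      have h2 := hgkabs k (X ω)
      have h3 : (0:ℝ) ≤ 2 * |f (X ω)| := by positivity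
      rw [abs_of_nonneg h3]
      linarith
    · have := (hgklim (X ω)).sub (tendsto_const_nhds (x := f (X ω)))
      simpa using this
  have hAtendsto : Tendsto (fun k => eLpNorm (fun ω => ak k ω - a ω) 2 P) atTop (𝓝 0) :=
    tendsto_of_tendsto_of_tendsto_of_le_of_le tendsto_const_nhds htail
      (fun k => zero_le) hdiff
  -- move to Lp
  set A : ℕ → Lp ℝ 2 P := fun k => (hakL2 k).toLp (ak k) with hA_def
  set Aa : Lp ℝ 2 P := haL2.toLp a with hAa_def
  have hALp : Tendsto A atTop (𝓝 Aa) := by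
    rw [tendsto_iff_norm_sub_tendsto_zero]
    have hnorm : ∀ k, ‖A k - Aa‖ = (eLpNorm (fun ω => ak k ω - a ω) 2 P).toReal := by
      intro k
      have h1 : A k - Aa = ((hakL2 k).sub haL2).toLp (ak k - a) := by
        rw [MemLp.toLp_sub]
      rw [h1, Lp.norm_toLp]
      rfl
    simp only [hnorm]
    have h0 : (0:ℝ) = (0:ℝ≥0∞).toReal := by simp
    rw [h0]
    exact (ENNReal.tendsto_toReal (by simp)).comp hAtendsto
  have hinner : Tendsto (fun k => ∫ ω, ak k ω * ak k ω ∂P) atTop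
      (𝓝 (∫ ω, a ω * a ω ∂P)) := by
    have h1 : ∀ k, ∫ ω, ak k ω * ak k ω ∂P = inner (𝕜 := ℝ) (A k) (A k) := by
      intro k
      rw [L2.inner_def]
      refine (integral_congr_ae ?_).symm
      filter_upwards [MemLp.coeFn_toLp (hakL2 k)] with ω hω
      have hω' : (A k : Ω → ℝ) ω = ak k ω := hω
      rw [hω']
      simp [RCLike.inner_apply, conj_trivial, sq]
    have h2 : ∫ ω, a ω * a ω ∂P = inner (𝕜 := ℝ) Aa Aa := by
      rw [L2.inner_def]
      refine (integral_congr_ae ?_).symm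
      filter_upwards [MemLp.coeFn_toLp haL2] with ω hω
      have hω' : (Aa : Ω → ℝ) ω = a ω := hω
      rw [hω']
      simp [RCLike.inner_apply, conj_trivial, sq]
    simp only [h1, h2]
    exact hALp.inner hALp
  have : Tendsto (fun k => ∫ ω, gk k (X ω) * gk k (X' ω) ∂P) atTop
      (𝓝 (∫ ω, a ω * a ω ∂P)) := by
    refine hinner.congr fun k => ?_
    exact (stepA k).symm
  exact tendsto_nhds_unique stepB this

end Key


set_option maxHeartbeats 1600000 in
/-- `Ṽ₂ = (2N/(2N-1)) (V₂ + (s² + s'²)/(4N))` is unbiased: `E[Ṽ₂] = σ_Y²`. -/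
theorem corrected_estimator_V2_unbiased
    {Ω E F : Type*} (𝓖 : MeasurableSpace Ω)
    [MeasurableSpace Ω] [MeasurableSpace E] [MeasurableSpace F]
    (P : Measure Ω) [IsProbabilityMeasure P]
    (Y : Ω → E) (X X' : Ω → F) (f : F → ℝ)
    (hY : Measurable Y) (hX : Measurable X) (hX' : Measurable X') (hf : Measurable f)
    (hL2 : MemLp (fun ω => f (X ω)) 2 P) (hL2' : MemLp (fun ω => f (X' ω)) 2 P)
    (h𝓖 : 𝓖 = MeasurableSpace.comap Y inferInstance)
    -- conditional independence of `X` and `X'` given `𝓖 = σ(Y)`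
    (hCondIndep : ∀ g h : F → ℝ, Measurable g → Measurable h →
      (∃ C, ∀ x, |g x| ≤ C) → (∃ C, ∀ x, |h x| ≤ C) →
      P[(fun ω => g (X ω) * h (X' ω))|𝓖]
        =ᵐ[P] fun ω => ((P[(fun ω' => g (X ω'))|𝓖]) ω) * ((P[(fun ω' => h (X' ω'))|𝓖]) ω))
    -- `X` and `X'` have the same conditional distribution given `𝓖`
    (hSameCondDist : ∀ g : F → ℝ, Measurable g → (∃ C, ∀ x, |g x| ≤ C) →
      P[(fun ω => g (X ω))|𝓖] =ᵐ[P] P[(fun ω => g (X' ω))|𝓖])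
    (μ σ2 σY2 : ℝ) (hμ : μ = ∫ ω, f (X ω) ∂P)
    (hσ2 : σ2 = variance (fun ω => f (X ω)) P)
    (hσY2 : σY2 = variance (P[(fun ω => f (X ω))|𝓖]) P)
    (N : ℕ) (hN : 2 ≤ N)
    -- i.i.d. sample triples `(Yₙ, Xₙ, X'ₙ)` with the same joint distribution as `(Y, X, X')`
    (Ys : Fin N → Ω → E) (Xs Xs' : Fin N → Ω → F)
    (hYs : ∀ n, Measurable (Ys n)) (hXs : ∀ n, Measurable (Xs n)) (hXs' : ∀ n, Measurable (Xs' n))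
    (hIndep : iIndepFun (fun n ω => (Ys n ω, Xs n ω, Xs' n ω)) P)
    (hIdent : ∀ n, Measure.map (fun ω => (Ys n ω, Xs n ω, Xs' n ω)) P
        = Measure.map (fun ω => (Y ω, X ω, X' ω)) P)
    (muHat muHat' : Ω → ℝ)
    (hmuHat : ∀ ω, muHat ω = (N : ℝ)⁻¹ * ∑ n, f (Xs n ω))
    (hmuHat' : ∀ ω, muHat' ω = (N : ℝ)⁻¹ * ∑ n, f (Xs' n ω))
    (s2 s2' : Ω → ℝ)
    (hs2 : ∀ ω, s2 ω = ((N : ℝ) - 1)⁻¹ * ∑ n, (f (Xs n ω) - muHat ω) ^ 2)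
    (hs2' : ∀ ω, s2' ω = ((N : ℝ) - 1)⁻¹ * ∑ n, (f (Xs' n ω) - muHat' ω) ^ 2)
    :
    ∫ ω, (2 * (N : ℝ) / (2 * (N : ℝ) - 1))
        * (((N : ℝ)⁻¹ * ∑ n, f (Xs n ω) * f (Xs' n ω) - ((muHat ω + muHat' ω) / 2) ^ 2)
          + (s2 ω + s2' ω) / (4 * (N : ℝ))) ∂P = σY2 := by
  have hle : 𝓖 ≤ ‹MeasurableSpace Ω› := h𝓖 ▸ hY.comap_le
  haveI hSF : SigmaFinite (P.trim hle) := by infer_instance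
  -- numeric facts
  have hNR : (2 : ℝ) ≤ (N : ℝ) := by exact_mod_cast hN
  have hN0 : (N : ℝ) ≠ 0 := by linarith
  have hN1 : (N : ℝ) - 1 ≠ 0 := by intro h; nlinarith
  have h2N1 : 2 * (N : ℝ) - 1 ≠ 0 := by intro h; nlinarith
  -- the law of `X'` equals the law of `X`
  have hlaw' : Measure.map X' P = Measure.map X P := by
    ext s hs
    have hsc := hSameCondDist (s.indicator fun _ => (1:ℝ))
      (measurable_const.indicator hs)
      ⟨1, fun x => by by_cases hx : x ∈ s <;> simp [Set.indicator_apply, hx]⟩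
    have hint := integral_congr_ae hsc
    rw [integral_condExp hle, integral_condExp hle] at hint
    have key : ∀ (Z : Ω → F), Measurable Z →
        ∫ ω, Set.indicator s (fun _ => (1:ℝ)) (Z ω) ∂P = (P (Z ⁻¹' s)).toReal := by
      intro Z hZ
      have h1 : (fun ω => Set.indicator s (fun _ => (1:ℝ)) (Z ω))
          = Set.indicator (Z ⁻¹' s) (fun _ => (1:ℝ)) := by
        ext ω
        by_cases hω : Z ω ∈ s <;> simp [Set.indicator_apply, hω, Set.mem_preimage]
      rw [h1, integral_indicator_const (1:ℝ) (hZ hs), smul_eq_mul, mul_one, measureReal_def]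
    rw [key X hX, key X' hX'] at hint
    rw [Measure.map_apply hX' hs, Measure.map_apply hX hs]
    exact (ENNReal.toReal_eq_toReal_iff' (measure_ne_top _ _) (measure_ne_top _ _)).mp hint.symm
  -- transfer of integrals and MemLp along the identical distribution of the triples
  have hT : Measurable (fun ω => (Y ω, X ω, X' ω)) := hY.prodMk (hX.prodMk hX')
  have hTn : ∀ n, Measurable (fun ω => (Ys n ω, Xs n ω, Xs' n ω)) :=
    fun n => (hYs n).prodMk ((hXs n).prodMk (hXs' n))
  have htransfer : ∀ (φ : E × F × F → ℝ), Measurable φ → ∀ n,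
      ∫ ω, φ (Ys n ω, Xs n ω, Xs' n ω) ∂P = ∫ ω, φ (Y ω, X ω, X' ω) ∂P := by
    intro φ hφ n
    calc ∫ ω, φ (Ys n ω, Xs n ω, Xs' n ω) ∂P
        = ∫ p, φ p ∂(Measure.map (fun ω => (Ys n ω, Xs n ω, Xs' n ω)) P) :=
          (integral_map (hTn n).aemeasurable hφ.aestronglyMeasurable).symm
      _ = ∫ p, φ p ∂(Measure.map (fun ω => (Y ω, X ω, X' ω)) P) := by rw [hIdent n]
      _ = ∫ ω, φ (Y ω, X ω, X' ω) ∂P := integral_map hT.aemeasurable hφ.aestronglyMeasurable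
  have hmemtransfer : ∀ (φ : E × F × F → ℝ), Measurable φ →
      MemLp (fun ω => φ (Y ω, X ω, X' ω)) 2 P → ∀ n,
      MemLp (fun ω => φ (Ys n ω, Xs n ω, Xs' n ω)) 2 P := by
    intro φ hφ h n
    have h1 : MemLp φ 2 (Measure.map (fun ω => (Y ω, X ω, X' ω)) P) :=
      (memLp_map_measure_iff hφ.aestronglyMeasurable hT.aemeasurable).mpr h
    rw [← hIdent n] at h1
    exact (memLp_map_measure_iff hφ.aestronglyMeasurable (hTn n).aemeasurable).mp h1
  -- measurable projections
  have hφ1 : Measurable (fun p : E × F × F => f p.2.1) :=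
    hf.comp (measurable_fst.comp measurable_snd)
  have hφ2 : Measurable (fun p : E × F × F => f p.2.2) :=
    hf.comp (measurable_snd.comp measurable_snd)
  -- moments of the population
  have hpow : ∀ (g : Ω → ℝ), ∫ ω, (g^2) ω ∂P = ∫ ω, g ω * g ω ∂P := fun g =>
    integral_congr_ae (Filter.Eventually.of_forall fun ω => by simp [pow_two])
  have hXX : ∫ ω, f (X ω) * f (X ω) ∂P = σ2 + μ * μ := by
    have h := variance_eq_sub (μ := P) hL2
    rw [hpow] at h
    rw [hσ2, h, hμ]
    ring
  have hX'm : ∫ ω, f (X' ω) ∂P = μ := by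
    rw [hμ]
    calc ∫ ω, f (X' ω) ∂P = ∫ x, f x ∂(Measure.map X' P) :=
          (integral_map hX'.aemeasurable hf.aestronglyMeasurable).symm
      _ = ∫ x, f x ∂(Measure.map X P) := by rw [hlaw']
      _ = ∫ ω, f (X ω) ∂P := integral_map hX.aemeasurable hf.aestronglyMeasurable
  have hX'X' : ∫ ω, f (X' ω) * f (X' ω) ∂P = σ2 + μ * μ := by
    have hmm : Measurable (fun x => f x * f x) := hf.mul hf
    calc ∫ ω, f (X' ω) * f (X' ω) ∂P = ∫ x, f x * f x ∂(Measure.map X' P) :=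
          (integral_map hX'.aemeasurable hmm.aestronglyMeasurable).symm
      _ = ∫ x, f x * f x ∂(Measure.map X P) := by rw [hlaw']
      _ = ∫ ω, f (X ω) * f (X ω) ∂P := integral_map hX.aemeasurable hmm.aestronglyMeasurable
      _ = σ2 + μ * μ := hXX
  have hXX' : ∫ ω, f (X ω) * f (X' ω) ∂P = σY2 + μ * μ := by
    have hc := aux_key 𝓖 hle P hX hX' hf hL2 hL2' hCondIndep hSameCondDist
    have hveq := variance_eq_sub (μ := P) (aux_memℒp_condexp hle hL2)
    rw [hpow] at hveq
    have hEcond : ∫ ω, (P[(fun ω => f (X ω))|𝓖]) ω ∂P = μ := by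
      rw [integral_condExp hle]; exact hμ.symm
    rw [hc, hσY2, hveq, hEcond]
    ring
  -- moments of the samples
  have hint1 : ∀ n, ∫ ω, f (Xs n ω) ∂P = μ := by
    intro n
    have h := htransfer (fun p => f p.2.1) hφ1 n
    simpa using h.trans hμ.symm
  have hint1' : ∀ n, ∫ ω, f (Xs' n ω) ∂P = μ := by
    intro n
    have h := htransfer (fun p => f p.2.2) hφ2 n
    simpa using h.trans hX'm
  have hint2 : ∀ n, ∫ ω, f (Xs n ω) * f (Xs n ω) ∂P = σ2 + μ * μ := by
    intro n
    have h := htransfer (fun p => f p.2.1 * f p.2.1) (hφ1.mul hφ1) n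
    simpa using h.trans hXX
  have hint2' : ∀ n, ∫ ω, f (Xs' n ω) * f (Xs' n ω) ∂P = σ2 + μ * μ := by
    intro n
    have h := htransfer (fun p => f p.2.2 * f p.2.2) (hφ2.mul hφ2) n
    simpa using h.trans hX'X'
  have hint11 : ∀ n, ∫ ω, f (Xs n ω) * f (Xs' n ω) ∂P = σY2 + μ * μ := by
    intro n
    have h := htransfer (fun p => f p.2.1 * f p.2.2) (hφ1.mul hφ2) n
    simpa using h.trans hXX'
  have hG2 : ∀ n, MemLp (fun ω => f (Xs n ω)) 2 P := by
    intro n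
    have h := hmemtransfer (fun p => f p.2.1) hφ1 (by exact hL2) n
    simpa using h
  have hG2' : ∀ n, MemLp (fun ω => f (Xs' n ω)) 2 P := by
    intro n
    have h := hmemtransfer (fun p => f p.2.2) hφ2 (by exact hL2') n
    simpa using h
  -- cross moments via independence
  have hindepcross : ∀ (φ ψ : E × F × F → ℝ), Measurable φ → Measurable ψ →
      ∀ n m, n ≠ m →
      ∫ ω, φ (Ys n ω, Xs n ω, Xs' n ω) * ψ (Ys m ω, Xs m ω, Xs' m ω) ∂P
        = (∫ ω, φ (Ys n ω, Xs n ω, Xs' n ω) ∂P) * (∫ ω, ψ (Ys m ω, Xs m ω, Xs' m ω) ∂P) := by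
    intro φ ψ hφ hψ n m hnm
    have h := (hIndep.indepFun hnm).comp hφ hψ
    exact h.integral_fun_mul_eq_mul_integral (hφ.comp (hTn n)).aestronglyMeasurable
      (hψ.comp (hTn m)).aestronglyMeasurable
  have hcrossGG : ∀ n m, n ≠ m → ∫ ω, f (Xs n ω) * f (Xs m ω) ∂P = μ * μ := by
    intro n m hnm
    have h := hindepcross (fun p => f p.2.1) (fun p => f p.2.1) hφ1 hφ1 n m hnm
    simp only [] at h
    rw [h, hint1 n, hint1 m]
  have hcrossGG' : ∀ n m, n ≠ m → ∫ ω, f (Xs n ω) * f (Xs' m ω) ∂P = μ * μ := by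
    intro n m hnm
    have h := hindepcross (fun p => f p.2.1) (fun p => f p.2.2) hφ1 hφ2 n m hnm
    simp only [] at h
    rw [h, hint1 n, hint1' m]
  have hcrossG'G' : ∀ n m, n ≠ m → ∫ ω, f (Xs' n ω) * f (Xs' m ω) ∂P = μ * μ := by
    intro n m hnm
    have h := hindepcross (fun p => f p.2.2) (fun p => f p.2.2) hφ2 hφ2 n m hnm
    simp only [] at h
    rw [h, hint1' n, hint1' m]
  -- integrability
  have intGG : ∀ n m, Integrable (fun ω => f (Xs n ω) * f (Xs m ω)) P :=
    fun n m => aux_integrable_mul_s11 (hG2 n) (hG2 m)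
  have intGG' : ∀ n m, Integrable (fun ω => f (Xs n ω) * f (Xs' m ω)) P :=
    fun n m => aux_integrable_mul_s11 (hG2 n) (hG2' m)
  have intG'G' : ∀ n m, Integrable (fun ω => f (Xs' n ω) * f (Xs' m ω)) P :=
    fun n m => aux_integrable_mul_s11 (hG2' n) (hG2' m)
  -- sums of products over pairs
  have pairSum : ∀ (u v : Fin N → Ω → ℝ) (d e : ℝ),
      (∀ n m, Integrable (fun ω => u n ω * v m ω) P) →
      (∀ n, ∫ ω, u n ω * v n ω ∂P = d) →
      (∀ n m, n ≠ m → ∫ ω, u n ω * v m ω ∂P = e) →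
      ∫ ω, (∑ n, u n ω) * (∑ m, v m ω) ∂P = N * d + (N * ((N:ℝ) - 1)) * e := by
    intro u v d e hint hd he
    have h1 : (fun ω => (∑ n, u n ω) * (∑ m, v m ω))
        = fun ω => ∑ n, ∑ m, u n ω * v m ω := by
      funext ω
      rw [Finset.sum_mul_sum]
    rw [h1, integral_finset_sum _ (fun n _ => integrable_finset_sum _ (fun m _ => hint n m))]
    have h2 : ∀ n : Fin N, ∫ ω, ∑ m, u n ω * v m ω ∂P = d + ((N:ℝ) - 1) * e := by
      intro n
      rw [integral_finset_sum _ (fun m _ => hint n m)]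
      rw [← Finset.add_sum_erase _ _ (Finset.mem_univ n), hd n]
      have h3 : ∑ m ∈ Finset.univ.erase n, ∫ ω, u n ω * v m ω ∂P = ((N:ℝ) - 1) * e := by
        rw [Finset.sum_congr rfl (fun m hm => he n m (Ne.symm (Finset.ne_of_mem_erase hm)))]
        rw [Finset.sum_const, Finset.card_erase_of_mem (Finset.mem_univ n),
          Finset.card_univ, Fintype.card_fin, nsmul_eq_mul]
        rw [Nat.cast_sub (by omega : 1 ≤ N)]
        norm_num
      rw [h3]
    rw [Finset.sum_congr rfl (fun n _ => h2 n), Finset.sum_const,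
      Finset.card_univ, Fintype.card_fin, nsmul_eq_mul]
    ring
  have hSS : ∫ ω, (∑ n, f (Xs n ω)) * (∑ m, f (Xs m ω)) ∂P
      = N * (σ2 + μ * μ) + (N * ((N:ℝ) - 1)) * (μ * μ) :=
    pairSum (fun n ω => f (Xs n ω)) (fun m ω => f (Xs m ω)) _ _ intGG hint2 hcrossGG
  have hSS' : ∫ ω, (∑ n, f (Xs n ω)) * (∑ m, f (Xs' m ω)) ∂P
      = N * (σY2 + μ * μ) + (N * ((N:ℝ) - 1)) * (μ * μ) :=
    pairSum (fun n ω => f (Xs n ω)) (fun m ω => f (Xs' m ω)) _ _ intGG' hint11 hcrossGG'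
  have hS'S' : ∫ ω, (∑ n, f (Xs' n ω)) * (∑ m, f (Xs' m ω)) ∂P
      = N * (σ2 + μ * μ) + (N * ((N:ℝ) - 1)) * (μ * μ) :=
    pairSum (fun n ω => f (Xs' n ω)) (fun m ω => f (Xs' m ω)) _ _ intG'G' hint2' hcrossG'G'
  have hS1 : ∫ ω, ∑ n, f (Xs n ω) * f (Xs' n ω) ∂P = N * (σY2 + μ * μ) := by
    rw [integral_finset_sum _ (fun n _ => intGG' n n)]
    rw [Finset.sum_congr rfl (fun n _ => hint11 n), Finset.sum_const,
      Finset.card_univ, Fintype.card_fin, nsmul_eq_mul]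
  have hSq : ∫ ω, ∑ n, f (Xs n ω) * f (Xs n ω) ∂P = N * (σ2 + μ * μ) := by
    rw [integral_finset_sum _ (fun n _ => intGG n n)]
    rw [Finset.sum_congr rfl (fun n _ => hint2 n), Finset.sum_const,
      Finset.card_univ, Fintype.card_fin, nsmul_eq_mul]
  have hSq' : ∫ ω, ∑ n, f (Xs' n ω) * f (Xs' n ω) ∂P = N * (σ2 + μ * μ) := by
    rw [integral_finset_sum _ (fun n _ => intG'G' n n)]
    rw [Finset.sum_congr rfl (fun n _ => hint2' n), Finset.sum_const,
      Finset.card_univ, Fintype.card_fin, nsmul_eq_mul]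
  -- pointwise rewriting of the estimator
  set K : ℝ := 2 * (N : ℝ) / (2 * (N : ℝ) - 1) with hK_def
  have hpt : ∀ ω, (2 * (N : ℝ) / (2 * (N : ℝ) - 1))
        * (((N : ℝ)⁻¹ * ∑ n, f (Xs n ω) * f (Xs' n ω) - ((muHat ω + muHat' ω) / 2) ^ 2)
          + (s2 ω + s2' ω) / (4 * (N : ℝ)))
      = (K / N) * (∑ n, f (Xs n ω) * f (Xs' n ω))
        + (-K / (4 * N * ((N:ℝ) - 1))) * ((∑ n, f (Xs n ω)) * (∑ m, f (Xs m ω)))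
        + (-K / (2 * N * N)) * ((∑ n, f (Xs n ω)) * (∑ m, f (Xs' m ω)))
        + (-K / (4 * N * ((N:ℝ) - 1))) * ((∑ n, f (Xs' n ω)) * (∑ m, f (Xs' m ω)))
        + (K / (4 * N * ((N:ℝ) - 1))) * (∑ n, f (Xs n ω) * f (Xs n ω))
        + (K / (4 * N * ((N:ℝ) - 1))) * (∑ n, f (Xs' n ω) * f (Xs' n ω)) := by
    intro ω
    have hexp : ∀ (u : Fin N → ℝ) (c : ℝ),
        ∑ n, (u n - c)^2 = (∑ n, u n * u n) - 2 * c * (∑ n, u n) + N * (c * c) := by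
      intro u c
      calc ∑ n, (u n - c)^2 = ∑ n, (u n * u n - 2 * c * u n + c * c) :=
            Finset.sum_congr rfl (fun n _ => by ring)
        _ = (∑ n, u n * u n) - 2 * c * (∑ n, u n) + N * (c * c) := by
            rw [Finset.sum_add_distrib, Finset.sum_sub_distrib, ← Finset.mul_sum,
              Finset.sum_const, Finset.card_univ, Fintype.card_fin, nsmul_eq_mul]
    rw [hs2 ω, hs2' ω, hmuHat ω, hmuHat' ω]
    rw [hexp (fun n => f (Xs n ω)) ((N : ℝ)⁻¹ * ∑ n, f (Xs n ω)),
      hexp (fun n => f (Xs' n ω)) ((N : ℝ)⁻¹ * ∑ n, f (Xs' n ω))]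
    rw [hK_def]
    field_simp
    ring
  rw [integral_congr_ae (Filter.Eventually.of_forall hpt)]
  -- integrate the linear combination
  have iF1 : Integrable (fun ω => ∑ n, f (Xs n ω) * f (Xs' n ω)) P :=
    integrable_finset_sum _ (fun n _ => intGG' n n)
  have hSumL2 : MemLp (fun ω => ∑ n, f (Xs n ω)) 2 P :=
    memLp_finset_sum _ (fun n _ => hG2 n)
  have hSumL2' : MemLp (fun ω => ∑ n, f (Xs' n ω)) 2 P :=
    memLp_finset_sum _ (fun n _ => hG2' n)
  have iF2 : Integrable (fun ω => (∑ n, f (Xs n ω)) * (∑ m, f (Xs m ω))) P :=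
    aux_integrable_mul_s11 hSumL2 hSumL2
  have iF3 : Integrable (fun ω => (∑ n, f (Xs n ω)) * (∑ m, f (Xs' m ω))) P :=
    aux_integrable_mul_s11 hSumL2 hSumL2'
  have iF4 : Integrable (fun ω => (∑ n, f (Xs' n ω)) * (∑ m, f (Xs' m ω))) P :=
    aux_integrable_mul_s11 hSumL2' hSumL2'
  have iF5 : Integrable (fun ω => ∑ n, f (Xs n ω) * f (Xs n ω)) P :=
    integrable_finset_sum _ (fun n _ => intGG n n)
  have iF6 : Integrable (fun ω => ∑ n, f (Xs' n ω) * f (Xs' n ω)) P :=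
    integrable_finset_sum _ (fun n _ => intG'G' n n)
  have smul6 : ∀ (c1 c2 c3 c4 c5 c6 : ℝ) (F1 F2 F3 F4 F5 F6 : Ω → ℝ),
      Integrable F1 P → Integrable F2 P → Integrable F3 P → Integrable F4 P →
      Integrable F5 P → Integrable F6 P →
      ∫ ω, (c1 * F1 ω + c2 * F2 ω + c3 * F3 ω + c4 * F4 ω + c5 * F5 ω + c6 * F6 ω) ∂P
        = c1 * ∫ ω, F1 ω ∂P + c2 * ∫ ω, F2 ω ∂P + c3 * ∫ ω, F3 ω ∂P
          + c4 * ∫ ω, F4 ω ∂P + c5 * ∫ ω, F5 ω ∂P + c6 * ∫ ω, F6 ω ∂P := by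
    intro c1 c2 c3 c4 c5 c6 F1 F2 F3 F4 F5 F6 h1 h2 h3 h4 h5 h6
    have j1 : Integrable (fun ω => c1 * F1 ω) P := h1.const_mul c1
    have j2 : Integrable (fun ω => c2 * F2 ω) P := h2.const_mul c2
    have j3 : Integrable (fun ω => c3 * F3 ω) P := h3.const_mul c3
    have j4 : Integrable (fun ω => c4 * F4 ω) P := h4.const_mul c4
    have j5 : Integrable (fun ω => c5 * F5 ω) P := h5.const_mul c5
    have j6 : Integrable (fun ω => c6 * F6 ω) P := h6.const_mul c6
    have j12 : Integrable (fun ω => c1 * F1 ω + c2 * F2 ω) P := j1.add j2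
    have j123 : Integrable (fun ω => c1 * F1 ω + c2 * F2 ω + c3 * F3 ω) P := j12.add j3
    have j1234 : Integrable (fun ω => c1 * F1 ω + c2 * F2 ω + c3 * F3 ω + c4 * F4 ω) P :=
      j123.add j4
    have j12345 : Integrable
        (fun ω => c1 * F1 ω + c2 * F2 ω + c3 * F3 ω + c4 * F4 ω + c5 * F5 ω) P := j1234.add j5
    rw [integral_add j12345 j6, integral_add j1234 j5, integral_add j123 j4,
      integral_add j12 j3, integral_add j1 j2,
      integral_const_mul, integral_const_mul, integral_const_mul,
      integral_const_mul, integral_const_mul, integral_const_mul]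
  rw [smul6 _ _ _ _ _ _ _ _ _ _ _ _ iF1 iF2 iF3 iF4 iF5 iF6]
  rw [hS1, hSS, hSS', hS'S', hSq, hSq', hK_def]
  field_simp
  ring
end
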